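/- arXiv:2506.14011 — 5 statements merged into one kernel-verified Lean document; each statement's English description precedes it below -/
import Mathlib

section
/- There exists a constant C > 0 such that for every n ≥ 2 the complete balanced bipartite graph K_{n,n} admits a family F of subgraphs, each isomorphic to a balanced complete bipartite graph K_{m,m} for some m ≥ 1, such that F strongly separates the edges of K_{n,n} and |F| ≤ C·log n. -/
open SimpleGraph

/-- The family `F` of subgraphs of `G` strongly separates the edges of `G`. -/
def StronglySeparatesEdges {V : Type*} (G : SimpleGraph V) (F : Set G.Subgraph) : Prop :=
  ∀ e ∈ G.edgeSet, ∀ e' ∈ G.edgeSet, e ≠ e' → ∃ A ∈ F, e ∈ A.edgeSet ∧ e' ∉ A.edgeSet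

namespace SepAux

open Finset

/-! ### Rectangle subgraphs -/

def rect {n : ℕ} (S T : Finset (Fin n)) : (completeBipartiteGraph (Fin n) (Fin n)).Subgraph where
  verts := (Sum.inl '' (S : Set (Fin n))) ∪ (Sum.inr '' (T : Set (Fin n)))
  Adj x y := (∃ u ∈ S, ∃ v ∈ T, x = Sum.inl u ∧ y = Sum.inr v) ∨
    (∃ u ∈ S, ∃ v ∈ T, x = Sum.inr v ∧ y = Sum.inl u)
  adj_sub := by
    rintro x y (⟨u, hu, v, hv, rfl, rfl⟩ | ⟨u, hu, v, hv, rfl, rfl⟩) <;>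
      simp [completeBipartiteGraph]
  edge_vert := by
    rintro x y (⟨u, hu, v, hv, rfl, rfl⟩ | ⟨u, hu, v, hv, rfl, rfl⟩)
    · exact Or.inl ⟨u, by simpa using hu, rfl⟩
    · exact Or.inr ⟨v, by simpa using hv, rfl⟩
  symm := by
    constructor
    rintro x y (⟨u, hu, v, hv, rfl, rfl⟩ | ⟨u, hu, v, hv, rfl, rfl⟩)
    · exact Or.inr ⟨u, hu, v, hv, rfl, rfl⟩
    · exact Or.inl ⟨u, hu, v, hv, rfl, rfl⟩

lemma rect_edge_iff {n : ℕ} {S T : Finset (Fin n)} {u v : Fin n} :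
    s(Sum.inl u, Sum.inr v) ∈ (rect S T).edgeSet ↔ u ∈ S ∧ v ∈ T := by
  rw [Subgraph.mem_edgeSet]
  constructor
  · rintro (⟨a, ha, b, hb, h1, h2⟩ | ⟨a, ha, b, hb, h1, h2⟩)
    · obtain rfl : u = a := by injection h1
      obtain rfl : v = b := by injection h2
      exact ⟨ha, hb⟩
    · exact absurd h1 (by simp)
  · rintro ⟨hu, hv⟩
    exact Or.inl ⟨u, hu, v, hv, rfl, rfl⟩

lemma edge_repr {n : ℕ} {e : Sym2 (Fin n ⊕ Fin n)}
    (he : e ∈ (completeBipartiteGraph (Fin n) (Fin n)).edgeSet) :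
    ∃ u v, e = s(Sum.inl u, Sum.inr v) := by
  induction e using Sym2.ind with
  | _ x y =>
    rw [mem_edgeSet] at he
    rcases x with u | u <;> rcases y with v | v
    · simp [completeBipartiteGraph] at he
    · exact ⟨u, v, rfl⟩
    · exact ⟨v, u, Sym2.eq_swap⟩
    · simp [completeBipartiteGraph] at he

lemma rect_iso {n m : ℕ} (S T : Finset (Fin n)) (hS : S.card = m) (hT : T.card = m) :
    Nonempty ((rect S T).coe ≃g completeBipartiteGraph (Fin m) (Fin m)) := by
  have eS : (↥S) ≃ Fin m := Fintype.equivFinOfCardEq (by simpa using hS)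
  have eT : (↥T) ≃ Fin m := Fintype.equivFinOfCardEq (by simpa using hT)
  let g : (↥S) ⊕ (↥T) → ↥(rect S T).verts :=
    Sum.elim (fun u => ⟨Sum.inl u.1, Or.inl ⟨u.1, by simpa using u.2, rfl⟩⟩)
      (fun v => ⟨Sum.inr v.1, Or.inr ⟨v.1, by simpa using v.2, rfl⟩⟩)
  have hbij : Function.Bijective g := by
    constructor
    · rintro (u | u) (v | v) h <;> have h' := congrArg Subtype.val h <;> simp [g] at h' <;>
        simp [Subtype.ext_iff, h']
    · rintro ⟨x, hx | hx⟩
      · obtain ⟨u, hu, rfl⟩ := hx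
        exact ⟨Sum.inl ⟨u, by simpa using hu⟩, rfl⟩
      · obtain ⟨v, hv, rfl⟩ := hx
        exact ⟨Sum.inr ⟨v, by simpa using hv⟩, rfl⟩
  let E : (Fin m ⊕ Fin m) ≃ ↥(rect S T).verts :=
    (Equiv.sumCongr eS.symm eT.symm).trans (Equiv.ofBijective g hbij)
  refine ⟨(SimpleGraph.Iso.symm ⟨E, ?_⟩ : _)⟩
  have hl : ∀ i, (E (Sum.inl i)).1 = Sum.inl (eS.symm i).1 := fun _ => rfl
  have hr : ∀ i, (E (Sum.inr i)).1 = Sum.inr (eT.symm i).1 := fun _ => rfl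
  rintro (i | i) (j | j)
  · rw [Subgraph.coe_adj, hl, hl]; simp [completeBipartiteGraph, rect]
  · rw [Subgraph.coe_adj, hl, hr]; simp [completeBipartiteGraph, rect]
  · rw [Subgraph.coe_adj, hr, hl]; simp [completeBipartiteGraph, rect]
  · rw [Subgraph.coe_adj, hr, hr]; simp [completeBipartiteGraph, rect]



lemma card_filter_val (n : ℕ) (P : ℕ → Prop) [DecidablePred P] :
    (Finset.univ.filter (fun x : Fin n => P x.val)).card = ((Finset.range n).filter P).card := by
  rw [← Finset.card_image_of_injective _ Fin.val_injective]
  congr 1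
  ext y
  simp only [Finset.mem_image, Finset.mem_filter, Finset.mem_univ, true_and, Finset.mem_range]
  constructor
  · rintro ⟨x, hx, rfl⟩; exact ⟨x.isLt, hx⟩
  · rintro ⟨hy, hP⟩; exact ⟨⟨y, hy⟩, hP, rfl⟩

lemma card_interval (n lo c : ℕ) (h : lo + c ≤ n) :
    (Finset.univ.filter (fun x : Fin n => lo ≤ x.val ∧ x.val < lo + c)).card = c := by
  rw [card_filter_val n fun y => lo ≤ y ∧ y < lo + c]
  have : (Finset.range n).filter (fun x => lo ≤ x ∧ x < lo + c) = Finset.Ico lo (lo + c) := by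
    ext y; simp only [Finset.mem_filter, Finset.mem_range, Finset.mem_Ico]; omega
  rw [this, Nat.card_Ico]; omega

lemma bit_card_lb (n i a : ℕ) (ha : a < 2) (hn : 2 ^ (i + 1) ≤ n) :
    n < 4 * ((Finset.range n).filter (fun x => x / 2 ^ i % 2 = a)).card := by
  set P := 2 ^ i with hP
  have hP0 : 0 < P := Nat.pow_pos (by norm_num)
  have h2P : 2 ^ (i + 1) = 2 * P := by rw [hP, pow_succ]; ring
  set q := n / (2 * P) with hq
  have hq1 : 1 ≤ q := (Nat.one_le_div_iff (by omega)).2 (by omega)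
  set f : ℕ → ℕ := fun y => y / P * (2 * P) + a * P + y % P with hf
  have hfd : ∀ y, f y / P = 2 * (y / P) + a ∧ f y % P = y % P := by
    intro y
    have h1 : f y = y % P + (2 * (y / P) + a) * P := by rw [hf]; ring
    constructor
    · rw [h1, Nat.add_mul_div_right _ _ hP0, Nat.div_eq_of_lt (Nat.mod_lt _ hP0), Nat.zero_add]
    · rw [h1, Nat.add_mul_mod_self_right]
      exact Nat.mod_eq_of_lt (Nat.mod_lt _ hP0)
  have hmaps : ∀ y ∈ Finset.range (P * q), f y ∈ (Finset.range n).filter (fun x => x / P % 2 = a) := by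
    intro y hy
    rw [Finset.mem_range] at hy
    have hd : y / P + 1 ≤ q := (Nat.div_lt_iff_lt_mul hP0).2 (by rw [Nat.mul_comm]; exact hy)
    have hlt : f y < n := by
      have h1 : a * P + y % P < 2 * P := by
        have := Nat.mod_lt y hP0
        nlinarith
      have h2 : (y / P + 1) * (2 * P) ≤ q * (2 * P) := Nat.mul_le_mul_right _ hd
      have h3 : q * (2 * P) ≤ n := by rw [hq]; exact Nat.div_mul_le_self _ _
      calc f y = y / P * (2 * P) + (a * P + y % P) := by rw [hf]; ring
        _ < y / P * (2 * P) + 2 * P := by omega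
        _ = (y / P + 1) * (2 * P) := by ring
        _ ≤ n := le_trans h2 h3
    rw [Finset.mem_filter, Finset.mem_range]
    refine ⟨hlt, ?_⟩
    rw [(hfd y).1, Nat.mul_add_mod, Nat.mod_eq_of_lt ha]
  have hinj : Set.InjOn f (Finset.range (P * q)) := by
    intro y1 _ y2 _ h
    have e1 := (hfd y1).1; have e2 := (hfd y2).1
    have e3 := (hfd y1).2; have e4 := (hfd y2).2
    rw [h] at e1 e3
    have hmm : y1 % P = y2 % P := by omega
    have hdd : y1 / P = y2 / P := by omega
    calc y1 = P * (y1 / P) + y1 % P := (Nat.div_add_mod y1 P).symm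
      _ = P * (y2 / P) + y2 % P := by rw [hdd, hmm]
      _ = y2 := Nat.div_add_mod y2 P
  have hcard : P * q ≤ ((Finset.range n).filter (fun x => x / P % 2 = a)).card := by
    calc P * q = (Finset.range (P * q)).card := (Finset.card_range _).symm
      _ = ((Finset.range (P * q)).image f).card := (Finset.card_image_of_injOn hinj).symm
      _ ≤ _ := Finset.card_le_card (by
          intro z hz
          rw [Finset.mem_image] at hz
          obtain ⟨y, hy, rfl⟩ := hz
          exact hmaps y hy)
  have key : n < 2 * P * q + 2 * P := by
    have h1 := Nat.div_add_mod n (2 * P)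
    have h2 := Nat.mod_lt n (show 0 < 2 * P by omega)
    rw [hq]
    omega
  have key2 : 2 * P ≤ 2 * P * q := by
    calc 2 * P = 2 * P * 1 := by ring
      _ ≤ 2 * P * q := Nat.mul_le_mul_left _ hq1
  have key3 : 2 * P * q = 2 * (P * q) := by ring
  omega

lemma modpow_aux : ∀ m u u' : ℕ, (∀ i < m, u / 2 ^ i % 2 = u' / 2 ^ i % 2) →
    u % 2 ^ m = u' % 2 ^ m := by
  intro m
  induction m with
  | zero => intro u u' _; simp [Nat.mod_one]
  | succ m ih =>
    intro u u' h
    rw [Nat.mod_pow_succ, Nat.mod_pow_succ, ih u u' (fun i hi => h i (by omega)),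
      h m (by omega)]

def kk (n : ℕ) : ℕ := Nat.clog 2 n

def Sset (n : ℕ) (i : ℕ) (a : Bool) : Finset (Fin n) :=
  if i = kk n - 1 then
    (if a then Finset.univ.filter (fun x => n - 2 ^ (kk n - 1) ≤ x.val)
     else Finset.univ.filter (fun x => x.val < 2 ^ (kk n - 1)))
  else Finset.univ.filter (fun x => x.val / 2 ^ i % 2 = (if a then 1 else 0))

def Bset (n : ℕ) (i : ℕ) (a : Bool) (j : ℕ) : Finset (Fin n) :=
  Finset.univ.filter (fun x =>
    min (j * (Sset n i a).card) (n - (Sset n i a).card) ≤ x.val ∧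
    x.val < min (j * (Sset n i a).card) (n - (Sset n i a).card) + (Sset n i a).card)

section
variable {n : ℕ}

lemma kk_pos (hn : 2 ≤ n) : 1 ≤ kk n := Nat.clog_pos one_lt_two hn
lemma le_pow_kk (hn : 2 ≤ n) : n ≤ 2 ^ kk n := Nat.le_pow_clog one_lt_two n
lemma pow_pred_kk (hn : 2 ≤ n) : 2 ^ (kk n - 1) < n := Nat.pow_pred_clog_lt_self one_lt_two hn
lemma two_mul_pow_pred (hn : 2 ≤ n) : n ≤ 2 * 2 ^ (kk n - 1) := by
  have h1 := le_pow_kk hn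
  have h2 : 2 ^ (kk n - 1 + 1) = 2 ^ kk n := by rw [Nat.sub_add_cancel (kk_pos hn)]
  rw [pow_succ] at h2
  omega

lemma Sset_card_le (i : ℕ) (a : Bool) : (Sset n i a).card ≤ n := by
  have h : ∀ (p : Fin n → Prop) (_ : DecidablePred p), (Finset.univ.filter p).card ≤ n := by
    intro p hp
    calc (Finset.univ.filter p).card ≤ Finset.univ.card := Finset.card_filter_le _ _
      _ = n := by simp
  unfold Sset
  split_ifs <;> apply h

lemma Sset_card_lb (hn : 2 ≤ n) {i : ℕ} (hi : i < kk n) (a : Bool) :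
    n ≤ 4 * (Sset n i a).card := by
  by_cases hik : i = kk n - 1
  · have hc : (Sset n i a).card = 2 ^ (kk n - 1) := by
      have hple := (pow_pred_kk hn).le
      rcases a with _ | _ <;> simp only [Sset, hik, if_true, if_false, Bool.false_eq_true]
      · rw [card_filter_val n fun y => y < 2 ^ (kk n - 1)]
        have heq : (Finset.range n).filter (fun x => x < 2 ^ (kk n - 1)) =
            Finset.range (2 ^ (kk n - 1)) := by
          ext y; simp only [Finset.mem_filter, Finset.mem_range]; omega
        rw [heq, Finset.card_range]
      · rw [card_filter_val n fun y => n - 2 ^ (kk n - 1) ≤ y]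
        have heq : (Finset.range n).filter (fun x => n - 2 ^ (kk n - 1) ≤ x) =
            Finset.Ico (n - 2 ^ (kk n - 1)) n := by
          ext y; simp only [Finset.mem_filter, Finset.mem_range, Finset.mem_Ico]; omega
        rw [heq, Nat.card_Ico]
        generalize hgen : 2 ^ (kk n - 1) = P at hple ⊢
        omega
    rw [hc]
    have := two_mul_pow_pred hn
    omega
  · have hii : i + 1 ≤ kk n - 1 := by omega
    have hpow : 2 ^ (i + 1) ≤ n := le_trans (Nat.pow_le_pow_right (by norm_num) hii)
      (pow_pred_kk hn).le
    have hval : (if a then 1 else 0) < 2 := by rcases a <;> norm_num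
    have := bit_card_lb n i (if a then 1 else 0) hval hpow
    have hc : (Sset n i a).card
        = ((Finset.range n).filter (fun x => x / 2 ^ i % 2 = (if a then 1 else 0))).card := by
      simp only [Sset, hik, if_false]
      exact card_filter_val n fun y => y / 2 ^ i % 2 = (if a then 1 else 0)
    omega

lemma Sset_card_pos (hn : 2 ≤ n) {i : ℕ} (hi : i < kk n) (a : Bool) :
    1 ≤ (Sset n i a).card := by
  have := Sset_card_lb hn hi a; omega

lemma Bset_card (i : ℕ) (a : Bool) (j : ℕ) :
    (Bset n i a j).card = (Sset n i a).card := by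
  apply card_interval
  have h1 : min (j * (Sset n i a).card) (n - (Sset n i a).card) ≤ n - (Sset n i a).card :=
    min_le_right _ _
  have h2 := Sset_card_le (n := n) i a
  omega

lemma Bset_cover (hn : 2 ≤ n) {i : ℕ} (hi : i < kk n) (a : Bool) (v : Fin n) :
    ∃ j < 4, v ∈ Bset n i a j := by
  set c := (Sset n i a).card with hc
  have hc1 : 1 ≤ c := Sset_card_pos hn hi a
  have hc4 : n ≤ 4 * c := Sset_card_lb hn hi a
  have hcn : c ≤ n := Sset_card_le i a
  refine ⟨v.val / c, ?_, ?_⟩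
  · exact (Nat.div_lt_iff_lt_mul (by omega)).2 (by have := v.isLt; omega)
  · have ht1 : v.val / c * c ≤ v.val := Nat.div_mul_le_self _ _
    have ht2 : v.val < v.val / c * c + c := by
      have h1 := Nat.div_add_mod v.val c
      have h2 := Nat.mod_lt v.val (show 0 < c by omega)
      have h3 : c * (v.val / c) = v.val / c * c := Nat.mul_comm _ _
      omega
    have hv := v.isLt
    simp only [Bset, Finset.mem_filter, Finset.mem_univ, true_and, ← hc]
    omega

lemma mem_Sset_top_false (x : Fin n) :
    x ∈ Sset n (kk n - 1) false ↔ x.val < 2 ^ (kk n - 1) := by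
  unfold Sset
  rw [if_pos rfl, if_neg (by simp)]
  simp

lemma mem_Sset_top_true (x : Fin n) :
    x ∈ Sset n (kk n - 1) true ↔ n - 2 ^ (kk n - 1) ≤ x.val := by
  unfold Sset
  rw [if_pos rfl, if_pos rfl]
  simp

lemma left_sep (hn : 2 ≤ n) (u u' : Fin n) (h : u ≠ u') :
    ∃ i < kk n, ∃ a, u ∈ Sset n i a ∧ u' ∉ Sset n i a := by
  by_cases hex : ∃ i < kk n - 1, u.val / 2 ^ i % 2 ≠ u'.val / 2 ^ i % 2
  · obtain ⟨i, hik, hne⟩ := hex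
    have hine : ¬ (i = kk n - 1) := by omega
    have h2 : u.val / 2 ^ i % 2 < 2 := Nat.mod_lt _ (by norm_num)
    have h2' : u'.val / 2 ^ i % 2 < 2 := Nat.mod_lt _ (by norm_num)
    refine ⟨i, by omega, decide (u.val / 2 ^ i % 2 = 1), ?_, ?_⟩
    · simp only [Sset, hine, if_false, Finset.mem_filter, Finset.mem_univ, true_and]
      rcases (show u.val / 2 ^ i % 2 = 0 ∨ u.val / 2 ^ i % 2 = 1 by omega) with h0 | h0 <;>
        simp [h0]
    · simp only [Sset, hine, if_false, Finset.mem_filter, Finset.mem_univ, true_and]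
      rcases (show u.val / 2 ^ i % 2 = 0 ∨ u.val / 2 ^ i % 2 = 1 by omega) with h0 | h0 <;>
        simp [h0] <;> omega
  · push_neg at hex
    have hmods : u.val % 2 ^ (kk n - 1) = u'.val % 2 ^ (kk n - 1) :=
      modpow_aux _ _ _ (fun i hi => hex i hi)
    have hn2P : n ≤ 2 * 2 ^ (kk n - 1) := two_mul_pow_pred hn
    have hkpos := kk_pos hn
    obtain ⟨P, hP⟩ : ∃ P, 2 ^ (kk n - 1) = P := ⟨_, rfl⟩
    rw [hP] at hmods hn2P
    have hP0 : 0 < P := hP ▸ Nat.pow_pos (by norm_num)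
    have hdu : u.val / P < 2 :=
      (Nat.div_lt_iff_lt_mul hP0).2 (by have := u.isLt; omega)
    have hdu' : u'.val / P < 2 :=
      (Nat.div_lt_iff_lt_mul hP0).2 (by have := u'.isLt; omega)
    have e1 := Nat.div_add_mod u.val P
    have e2 := Nat.div_add_mod u'.val P
    have hm1 := Nat.mod_lt u.val hP0
    have hm2 := Nat.mod_lt u'.val hP0
    have hu := u.isLt
    have hu' := u'.isLt
    obtain ⟨du, hgu⟩ : ∃ t, u.val / P = t := ⟨_, rfl⟩
    obtain ⟨du', hgu'⟩ : ∃ t, u'.val / P = t := ⟨_, rfl⟩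
    obtain ⟨mu, hmu⟩ : ∃ t, u.val % P = t := ⟨_, rfl⟩
    obtain ⟨mu', hmu'⟩ : ∃ t, u'.val % P = t := ⟨_, rfl⟩
    rw [hgu, hmu] at e1
    rw [hgu', hmu'] at e2
    rw [hgu] at hdu
    rw [hgu'] at hdu'
    rw [hmu] at hm1
    rw [hmu'] at hm2
    rw [hmu, hmu'] at hmods
    have hdne : du ≠ du' := by
      intro hcon
      apply h; apply Fin.ext
      rw [hcon, hmods] at e1
      omega
    rcases (show du = 0 ∨ du = 1 by omega) with h0 | h0 <;>
      rcases (show du' = 0 ∨ du' = 1 by omega) with h1 | h1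
    · exact absurd (h0.trans h1.symm) hdne
    · refine ⟨kk n - 1, by omega, false, ?_, ?_⟩
      · rw [mem_Sset_top_false, hP]
        rw [h0] at e1
        omega
      · simp only [mem_Sset_top_false, hP]
        rw [h1] at e2
        omega
    · refine ⟨kk n - 1, by omega, true, ?_, ?_⟩
      · rw [mem_Sset_top_true, hP]
        rw [h0] at e1
        omega
      · simp only [mem_Sset_top_true, hP]
        rw [h1] at e2
        rw [h0] at e1
        omega
    · exact absurd (h0.trans h1.symm) hdne

end

end SepAux

open SepAux

/-- There is a constant `C > 0` such that for every `n ≥ 2`, the complete balanced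
bipartite graph `K_{n,n}` admits a family of at most `C·log n` subgraphs, each isomorphic
to some balanced complete bipartite graph `K_{m,m}` with `m ≥ 1`, that strongly separates
its edges. -/
theorem complete_bipartite_separating_system :
    ∃ C : ℝ, 0 < C ∧
      ∀ n : ℕ, 2 ≤ n →
        ∃ F : Set (completeBipartiteGraph (Fin n) (Fin n)).Subgraph,
          F.Finite ∧
          (∀ A ∈ F, ∃ m : ℕ, 1 ≤ m ∧
            Nonempty (A.coe ≃g completeBipartiteGraph (Fin m) (Fin m))) ∧
          StronglySeparatesEdges (completeBipartiteGraph (Fin n) (Fin n)) F ∧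
          (F.ncard : ℝ) ≤ C * Real.log n := by
  classical
  refine ⟨1000, by norm_num, ?_⟩
  intro n hn
  let f : Bool × Fin (kk n) × Bool × Fin 4 → (completeBipartiteGraph (Fin n) (Fin n)).Subgraph :=
    fun p =>
      if p.1 then rect (Sset n p.2.1.val p.2.2.1) (Bset n p.2.1.val p.2.2.1 p.2.2.2.val)
      else rect (Bset n p.2.1.val p.2.2.1 p.2.2.2.val) (Sset n p.2.1.val p.2.2.1)
  have hft : ∀ (i : Fin (kk n)) (a : Bool) (j : Fin 4),
      f (true, i, a, j) = rect (Sset n i.val a) (Bset n i.val a j.val) := fun _ _ _ => rfl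
  have hff : ∀ (i : Fin (kk n)) (a : Bool) (j : Fin 4),
      f (false, i, a, j) = rect (Bset n i.val a j.val) (Sset n i.val a) := fun _ _ _ => rfl
  refine ⟨↑(Finset.univ.image f), (Finset.univ.image f).finite_toSet, ?_, ?_, ?_⟩
  · intro A hA
    rw [Finset.mem_coe, Finset.mem_image] at hA
    obtain ⟨⟨o, i, a, j⟩, -, rfl⟩ := hA
    refine ⟨(Sset n i.val a).card, Sset_card_pos hn i.isLt a, ?_⟩
    rcases o with _ | _
    · rw [hff]
      exact rect_iso _ _ (Bset_card _ _ _) rfl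
    · rw [hft]
      exact rect_iso _ _ rfl (Bset_card _ _ _)
  · intro e he e' he' hne
    obtain ⟨u, v, rfl⟩ := edge_repr he
    obtain ⟨u', v', rfl⟩ := edge_repr he'
    have huv : u ≠ u' ∨ v ≠ v' := by
      by_contra hcon
      push_neg at hcon
      exact hne (by rw [hcon.1, hcon.2])
    rcases huv with huv | huv
    · obtain ⟨i, hi, a, hu, hu'⟩ := left_sep hn u u' huv
      obtain ⟨j, hj, hv⟩ := Bset_cover hn hi a v
      refine ⟨f (true, ⟨i, hi⟩, a, ⟨j, hj⟩), ?_, ?_, ?_⟩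
      · exact Finset.mem_coe.mpr (Finset.mem_image.mpr ⟨_, Finset.mem_univ _, rfl⟩)
      · rw [hft]
        exact rect_edge_iff.mpr ⟨hu, hv⟩
      · rw [hft]
        intro hcon
        exact hu' (rect_edge_iff.mp hcon).1
    · obtain ⟨i, hi, a, hv, hv'⟩ := left_sep hn v v' huv
      obtain ⟨j, hj, hu⟩ := Bset_cover hn hi a u
      refine ⟨f (false, ⟨i, hi⟩, a, ⟨j, hj⟩), ?_, ?_, ?_⟩
      · exact Finset.mem_coe.mpr (Finset.mem_image.mpr ⟨_, Finset.mem_univ _, rfl⟩)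
      · rw [hff]
        exact rect_edge_iff.mpr ⟨hu, hv⟩
      · rw [hff]
        intro hcon
        exact hv' (rect_edge_iff.mp hcon).2
  · rw [Set.ncard_coe_finset]
    have h2 : (Finset.univ.image f).card ≤ 16 * kk n := by
      calc (Finset.univ.image f).card ≤ Finset.univ.card := Finset.card_image_le
        _ = Fintype.card (Bool × Fin (kk n) × Bool × Fin 4) := Finset.card_univ
        _ = 16 * kk n := by simp [Fintype.card_prod]; ring
    have hk1 : 1 ≤ kk n := kk_pos hn
    have hA : ((kk n : ℝ) - 1) * Real.log 2 ≤ Real.log n := by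
      have hpow : ((2 : ℝ)) ^ (kk n - 1) ≤ (n : ℝ) := by
        exact_mod_cast (pow_pred_kk hn).le
      have hlog : Real.log ((2 : ℝ) ^ (kk n - 1)) ≤ Real.log n :=
        Real.log_le_log (by positivity) hpow
      rw [Real.log_pow] at hlog
      have hcast : ((kk n - 1 : ℕ) : ℝ) = (kk n : ℝ) - 1 := by
        push_cast [Nat.cast_sub hk1]
        ring
      rw [hcast] at hlog
      exact hlog
    have hB : Real.log 2 ≤ Real.log n := by
      apply Real.log_le_log (by norm_num)
      exact_mod_cast hn
    have hl2 : (0.6931471803 : ℝ) < Real.log 2 := Real.log_two_gt_d9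
    have hkcast : (1 : ℝ) ≤ (kk n : ℝ) := by exact_mod_cast hk1
    calc ((Finset.univ.image f).card : ℝ) ≤ ((16 * kk n : ℕ) : ℝ) := by exact_mod_cast h2
      _ = 16 * (kk n : ℝ) := by push_cast; ring
      _ ≤ 1000 * Real.log n := by nlinarith [hA, hB, hl2, hkcast]
end

section
/- For every δ > 0 there exists n₀ such that every graph G on n ≥ n₀ vertices admits a family F of subgraphs of G, each isomorphic to a balanced complete bipartite graph K_{m,m} for some m ≥ 1, such that F strongly separates the edges of G and |F| ≤ δ·n²; in other words, every n-vertex graph has a strongly edge-separating system of balanced complete bipartite subgraphs of size o(n²). -/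
open SimpleGraph

open SimpleGraph Finset

variable {V : Type} [DecidableEq V] {G : SimpleGraph V}

/-- The biclique subgraph of `G` determined by two finsets. -/
def bSub (G : SimpleGraph V) (P Q : Finset V) : G.Subgraph where
  verts := ↑P ∪ ↑Q
  Adj u v := ((u ∈ P ∧ v ∈ Q) ∨ (u ∈ Q ∧ v ∈ P)) ∧ G.Adj u v
  adj_sub h := h.2
  edge_vert := by rintro u v ⟨(⟨h, _⟩ | ⟨h, _⟩), _⟩ <;> simp [h]
  symm := by
    constructor
    rintro u v ⟨h | h, ha⟩
    exacts [⟨Or.inr ⟨h.2, h.1⟩, ha.symm⟩, ⟨Or.inl ⟨h.2, h.1⟩, ha.symm⟩]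

omit [DecidableEq V] in
lemma bSub_adj {P Q : Finset V} {u v : V} :
    (bSub G P Q).Adj u v ↔ ((u ∈ P ∧ v ∈ Q) ∨ (u ∈ Q ∧ v ∈ P)) ∧ G.Adj u v := Iff.rfl

omit [DecidableEq V] in
lemma mem_bSub_edgeSet {P Q : Finset V} {e : Sym2 V} :
    e ∈ (bSub G P Q).edgeSet ↔ ∃ p ∈ P, ∃ q ∈ Q, G.Adj p q ∧ e = s(p, q) := by
  induction e with
  | _ u v =>
    rw [Subgraph.mem_edgeSet, bSub_adj]
    constructor
    · rintro ⟨(⟨hu, hv⟩ | ⟨hu, hv⟩), ha⟩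
      · exact ⟨u, hu, v, hv, ha, rfl⟩
      · exact ⟨v, hv, u, hu, ha.symm, Sym2.eq_swap⟩
    · rintro ⟨p, hp, q, hq, ha, he⟩
      rw [Sym2.eq_iff] at he
      rcases he with ⟨rfl, rfl⟩ | ⟨rfl, rfl⟩
      · exact ⟨Or.inl ⟨hp, hq⟩, ha⟩
      · exact ⟨Or.inr ⟨hq, hp⟩, ha.symm⟩


noncomputable def bIso {P Q : Finset V} {m : ℕ} (hP : P.card = m) (hQ : Q.card = m)
    (hd : Disjoint P Q) (hc : ∀ p ∈ P, ∀ q ∈ Q, G.Adj p q) :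
    (bSub G P Q).coe ≃g completeBipartiteGraph (Fin m) (Fin m) := by
  classical
  have hd' : Disjoint (↑P : Set V) (↑Q : Set V) := by exact_mod_cast Finset.disjoint_coe.2 hd
  let e0 : ((↑P : Set V) ∪ ↑Q : Set V) ≃ (↑P : Set V) ⊕ (↑Q : Set V) := Equiv.Set.union hd'
  let eP : (↑P : Set V) ≃ Fin m := (Finset.equivFinOfCardEq hP)
  let eQ : (↑Q : Set V) ≃ Fin m := (Finset.equivFinOfCardEq hQ)
  let f : ((bSub G P Q).verts : Set V) ≃ Fin m ⊕ Fin m := e0.trans (Equiv.sumCongr eP eQ)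
  have hdj : ∀ y : V, y ∈ P → y ∈ Q → False := fun y h1 h2 =>
    Finset.disjoint_left.1 hd h1 h2
  have keyL : ∀ (x : ((bSub G P Q).verts : Set V)) (hx : ↑x ∈ P),
      f x = Sum.inl (eP ⟨↑x, hx⟩) := by
    intro x hx
    show (Equiv.sumCongr eP eQ) (e0 x) = _
    have h3 : e0 x = Sum.inl ⟨↑x, hx⟩ := Equiv.Set.union_apply_left hd' hx
    rw [h3]; rfl
  have keyR : ∀ (x : ((bSub G P Q).verts : Set V)) (hx : ↑x ∈ Q),
      f x = Sum.inr (eQ ⟨↑x, hx⟩) := by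
    intro x hx
    show (Equiv.sumCongr eP eQ) (e0 x) = _
    have h3 : e0 x = Sum.inr ⟨↑x, hx⟩ := Equiv.Set.union_apply_right hd' hx
    rw [h3]; rfl
  refine ⟨f, ?_⟩
  intro a b
  have hmem : ∀ x : ((bSub G P Q).verts : Set V), ↑x ∈ P ∨ ↑x ∈ Q := fun x => x.2
  rcases hmem a with ha | ha <;> rcases hmem b with hb | hb
  · rw [keyL a ha, keyL b hb]
    refine ⟨fun h => ?_, fun h => ?_⟩
    · simp at h
    · rcases h with ⟨h1 | h1, _⟩
      exacts [(hdj _ hb h1.2).elim, (hdj _ ha h1.1).elim]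
  · rw [keyL a ha, keyR b hb]
    refine ⟨fun h => ?_, fun h => ?_⟩
    · exact ⟨Or.inl ⟨ha, hb⟩, hc _ ha _ hb⟩
    · simp
  · rw [keyR a ha, keyL b hb]
    refine ⟨fun h => ?_, fun h => ?_⟩
    · exact ⟨Or.inr ⟨ha, hb⟩, (hc _ hb _ ha).symm⟩
    · simp
  · rw [keyR a ha, keyR b hb]
    refine ⟨fun h => ?_, fun h => ?_⟩
    · simp at h
    · rcases h with ⟨h1 | h1, _⟩
      exacts [(hdj _ h1.1 ha).elim, (hdj _ h1.2 hb).elim]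

section Ident
variable {V : Type} [DecidableEq V]
set_option linter.unusedSectionVars false

/-- coordinate selector -/
def cd {a : ℕ} (b : Bool) (z : Fin a × Fin a) : Fin a := if b then z.1 else z.2

noncomputable def embP {a : ℕ} (P : Finset V) (h : P.card = a * a) : Fin a × Fin a → V :=
  fun z => ↑((Finset.equivFinOfCardEq h).symm (finProdFinEquiv z))

lemma embP_inj {a : ℕ} (P : Finset V) (h : P.card = a * a) :
    Function.Injective (embP P h) := by
  intro z w hzw
  have := Subtype.ext hzw
  simpa using (finProdFinEquiv.injective ((Finset.equivFinOfCardEq h).symm.injective this))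

lemma embP_mem {a : ℕ} (P : Finset V) (h : P.card = a * a) (z : Fin a × Fin a) :
    embP P h z ∈ P := ((Finset.equivFinOfCardEq h).symm (finProdFinEquiv z)).2

lemma embP_surj {a : ℕ} (P : Finset V) (h : P.card = a * a) {p : V} (hp : p ∈ P) :
    ∃ z, embP P h z = p := by
  refine ⟨finProdFinEquiv.symm ((Finset.equivFinOfCardEq h) ⟨p, hp⟩), ?_⟩
  unfold embP
  rw [Equiv.apply_symm_apply, Equiv.symm_apply_apply]

/-- the identification sets -/
noncomputable def idSet {a : ℕ} (P : Finset V) (h : P.card = a * a) (b : Bool) (i : Fin a) :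
    Finset V :=
  (Finset.univ.filter fun z => cd b z ≠ i).image (embP P h)

lemma idSet_subset {a : ℕ} (P : Finset V) (h : P.card = a * a) (b : Bool) (i : Fin a) :
    idSet P h b i ⊆ P := by
  intro x hx
  rcases Finset.mem_image.1 hx with ⟨z, _, rfl⟩
  exact embP_mem P h z

lemma mem_idSet {a : ℕ} {P : Finset V} {h : P.card = a * a} {b : Bool} {i : Fin a} {x : V} :
    x ∈ idSet P h b i ↔ ∃ z, cd b z ≠ i ∧ embP P h z = x := by
  simp [idSet]

lemma card_filter_cd {a : ℕ} (b : Bool) (i : Fin a) :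
    (Finset.univ.filter fun z : Fin a × Fin a => cd b z ≠ i).card = a * a - a := by
  cases b
  · have : (Finset.univ.filter fun z : Fin a × Fin a => cd false z ≠ i)
        = Finset.univ ×ˢ ({i}ᶜ : Finset (Fin a)) := by
      ext z; simp [cd]
    rw [this, Finset.card_product, Finset.card_compl]
    simp [Nat.mul_sub, Fintype.card_fin]
  · have : (Finset.univ.filter fun z : Fin a × Fin a => cd true z ≠ i)
        = (({i}ᶜ : Finset (Fin a)) ×ˢ Finset.univ) := by
      ext z; simp [cd]
    rw [this, Finset.card_product, Finset.card_compl]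
    simp [Nat.sub_mul, Fintype.card_fin]

lemma card_idSet {a : ℕ} (P : Finset V) (h : P.card = a * a) (b : Bool) (i : Fin a) :
    (idSet P h b i).card = a * a - a := by
  rw [idSet, Finset.card_image_of_injective _ (embP_inj P h), card_filter_cd]

lemma idSet_cover {a : ℕ} (ha : 2 ≤ a) (P : Finset V) (h : P.card = a * a) {p : V}
    (hp : p ∈ P) : ∃ b i, p ∈ idSet P h b i := by
  obtain ⟨z, rfl⟩ := embP_surj P h hp
  obtain ⟨i, hi⟩ := Fintype.exists_ne_of_one_lt_card (by simp; omega) (cd true z)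
  exact ⟨true, i, mem_idSet.2 ⟨z, Ne.symm hi, rfl⟩⟩

lemma idSet_sep {a : ℕ} (P : Finset V) (h : P.card = a * a) {p p' : V}
    (hp : p ∈ P) (hp' : p' ∈ P) (hne : p ≠ p') :
    ∃ b i, p ∈ idSet P h b i ∧ p' ∉ idSet P h b i := by
  obtain ⟨z, rfl⟩ := embP_surj P h hp
  obtain ⟨w, rfl⟩ := embP_surj P h hp'
  have hzw : z ≠ w := fun hz => hne (by rw [hz])
  have : z.1 ≠ w.1 ∨ z.2 ≠ w.2 := by
    by_contra hcon
    push_neg at hcon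
    exact hzw (Prod.ext hcon.1 hcon.2)
  rcases this with h1 | h1
  · refine ⟨true, w.1, mem_idSet.2 ⟨z, by simpa [cd] using h1, rfl⟩, ?_⟩
    intro hmem
    rcases mem_idSet.1 hmem with ⟨u, hu, huw⟩
    exact hu (by rw [embP_inj P h huw] at hu ⊢; simp [cd])
  · refine ⟨false, w.2, mem_idSet.2 ⟨z, by simpa [cd] using h1, rfl⟩, ?_⟩
    intro hmem
    rcases mem_idSet.1 hmem with ⟨u, hu, huw⟩
    exact hu (by rw [embP_inj P h huw] at hu ⊢; simp [cd])

end Ident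

section Resolver
variable {V : Type} [DecidableEq V] {G : SimpleGraph V}

lemma resolver {a : ℕ} (ha : 2 ≤ a) {P Q : Finset V}
    (hP : P.card = a * a) (hQ : Q.card = a * a) (hd : Disjoint P Q)
    (hc : ∀ p ∈ P, ∀ q ∈ Q, G.Adj p q) :
    ∃ S : Finset G.Subgraph,
      S.card ≤ 4 * (a * a) ∧
      (∀ A ∈ S, ∃ m, 1 ≤ m ∧ Nonempty (A.coe ≃g completeBipartiteGraph (Fin m) (Fin m))) ∧
      (∀ p ∈ P, ∀ q ∈ Q, ∀ e' : Sym2 V, e' ≠ s(p, q) →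
        ∃ A ∈ S, s(p, q) ∈ A.edgeSet ∧ e' ∉ A.edgeSet) := by
  classical
  refine ⟨(Finset.univ : Finset ((Bool × Fin a) × (Bool × Fin a))).image
    (fun w => bSub G (idSet P hP w.1.1 w.1.2) (idSet Q hQ w.2.1 w.2.2)), ?_, ?_, ?_⟩
  · calc _ ≤ (Finset.univ : Finset ((Bool × Fin a) × (Bool × Fin a))).card :=
        Finset.card_image_le
      _ = 4 * (a * a) := by simp; ring
  · rintro A hA
    rcases Finset.mem_image.1 hA with ⟨w, _, rfl⟩
    have hm : 1 ≤ a * a - a := by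
      have : a * 2 ≤ a * a := Nat.mul_le_mul_left a ha
      omega
    refine ⟨a * a - a, hm, ⟨bIso (card_idSet P hP _ _) (card_idSet Q hQ _ _) ?_ ?_⟩⟩
    · exact Finset.disjoint_of_subset_left (idSet_subset P hP _ _)
        (Finset.disjoint_of_subset_right (idSet_subset Q hQ _ _) hd)
    · intro p hp q hq
      exact hc p (idSet_subset P hP _ _ hp) q (idSet_subset Q hQ _ _ hq)
  · intro p hp q hq e' hne
    by_cases hcross : ∃ p' ∈ P, ∃ q' ∈ Q, e' = s(p', q')
    · obtain ⟨p', hp', q', hq', rfl⟩ := hcross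
      have hpq : p' ≠ p ∨ q' ≠ q := by
        by_contra hcon
        push_neg at hcon
        exact hne (by rw [hcon.1, hcon.2])
      have hdisj : ∀ y : V, y ∈ P → y ∈ Q → False := fun y h1 h2 =>
        Finset.disjoint_left.1 hd h1 h2
      rcases hpq with hne1 | hne1
      · obtain ⟨b, i, hpin, hpout⟩ := idSet_sep P hP hp hp' (Ne.symm hne1)
        obtain ⟨b', i', hqin⟩ := idSet_cover ha Q hQ hq
        refine ⟨bSub G (idSet P hP b i) (idSet Q hQ b' i'),
          Finset.mem_image.2 ⟨((b, i), (b', i')), Finset.mem_univ _, rfl⟩, ?_, ?_⟩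
        · exact mem_bSub_edgeSet.2 ⟨p, hpin, q, hqin, hc p hp q hq, rfl⟩
        · intro hmem
          rcases mem_bSub_edgeSet.1 hmem with ⟨x, hx, y, hy, _, hxy⟩
          rw [Sym2.eq_iff] at hxy
          rcases hxy with ⟨rfl, rfl⟩ | ⟨rfl, rfl⟩
          · exact hpout hx
          · exact hdisj p' hp' (idSet_subset Q hQ _ _ hy)
      · obtain ⟨b, i, hqin, hqout⟩ := idSet_sep Q hQ hq hq' (Ne.symm hne1)
        obtain ⟨b', i', hpin⟩ := idSet_cover ha P hP hp
        refine ⟨bSub G (idSet P hP b' i') (idSet Q hQ b i),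
          Finset.mem_image.2 ⟨((b', i'), (b, i)), Finset.mem_univ _, rfl⟩, ?_, ?_⟩
        · exact mem_bSub_edgeSet.2 ⟨p, hpin, q, hqin, hc p hp q hq, rfl⟩
        · intro hmem
          rcases mem_bSub_edgeSet.1 hmem with ⟨x, hx, y, hy, _, hxy⟩
          rw [Sym2.eq_iff] at hxy
          rcases hxy with ⟨rfl, rfl⟩ | ⟨rfl, rfl⟩
          · exact hqout hy
          · exact hdisj q' (idSet_subset P hP _ _ hx) hq'
    · obtain ⟨b, i, hpin⟩ := idSet_cover ha P hP hp
      obtain ⟨b', i', hqin⟩ := idSet_cover ha Q hQ hq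
      refine ⟨bSub G (idSet P hP b i) (idSet Q hQ b' i'),
        Finset.mem_image.2 ⟨((b, i), (b', i')), Finset.mem_univ _, rfl⟩,
        mem_bSub_edgeSet.2 ⟨p, hpin, q, hqin, hc p hp q hq, rfl⟩, ?_⟩
      intro hmem
      rcases mem_bSub_edgeSet.1 hmem with ⟨x, hx, y, hy, _, hxy⟩
      exact hcross ⟨x, idSet_subset P hP _ _ hx, y, idSet_subset Q hQ _ _ hy, hxy⟩

end Resolver

section Single
variable {V : Type} [DecidableEq V] {G : SimpleGraph V}

omit [DecidableEq V] in
lemma sym2_out_eq (e : Sym2 V) : s(e.out.1, e.out.2) = e := by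
  exact Quot.out_eq e

/-- single edge subgraph -/
noncomputable def eSub (G : SimpleGraph V) (e : Sym2 V) : G.Subgraph :=
  bSub G {e.out.1} {e.out.2}

lemma eSub_mem_edgeSet {e : Sym2 V} (he : e ∈ G.edgeSet) : e ∈ (eSub G e).edgeSet := by
  have ha : G.Adj e.out.1 e.out.2 := G.mem_edgeSet.1 (by rw [sym2_out_eq]; exact he)
  exact mem_bSub_edgeSet.2 ⟨e.out.1, Finset.mem_singleton_self _, e.out.2,
    Finset.mem_singleton_self _, ha, (sym2_out_eq e).symm⟩

lemma eSub_edgeSet_subset {e e' : Sym2 V} (h : e' ∈ (eSub G e).edgeSet) : e' = e := by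
  rcases mem_bSub_edgeSet.1 h with ⟨x, hx, y, hy, _, rfl⟩
  rw [Finset.mem_singleton] at hx hy
  rw [hx, hy, sym2_out_eq]

lemma eSub_iso {e : Sym2 V} (he : e ∈ G.edgeSet) :
    Nonempty ((eSub G e).coe ≃g completeBipartiteGraph (Fin 1) (Fin 1)) := by
  have ha : G.Adj e.out.1 e.out.2 := G.mem_edgeSet.1 (by rw [sym2_out_eq]; exact he)
  refine ⟨bIso (Finset.card_singleton _) (Finset.card_singleton _) ?_ ?_⟩
  · simpa using ha.ne
  · intro p hp q hq
    rw [Finset.mem_singleton] at hp hq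
    rw [hp, hq]; exact ha

end Single

section Greedy
set_option linter.unusedSectionVars false
variable {V : Type} [DecidableEq V]

def pairsOf (K : Finset V × Finset V) : Finset (Sym2 V) :=
  (K.1 ×ˢ K.2).image fun pq => s(pq.1, pq.2)

lemma mem_pairsOf {K : Finset V × Finset V} {e : Sym2 V} :
    e ∈ pairsOf K ↔ ∃ p ∈ K.1, ∃ q ∈ K.2, e = s(p, q) := by
  simp only [pairsOf, Finset.mem_image, Finset.mem_product, Prod.exists]
  constructor
  · rintro ⟨p, q, ⟨h1, h2⟩, rfl⟩; exact ⟨p, h1, q, h2, rfl⟩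
  · rintro ⟨p, h1, q, h2, rfl⟩; exact ⟨p, q, ⟨h1, h2⟩, rfl⟩

lemma card_pairsOf {K : Finset V × Finset V} (hd : Disjoint K.1 K.2) :
    (pairsOf K).card = K.1.card * K.2.card := by
  rw [pairsOf, Finset.card_image_of_injOn, Finset.card_product]
  rintro ⟨p, q⟩ hpq ⟨p', q'⟩ hpq' he
  rw [Finset.mem_coe, Finset.mem_product] at hpq hpq'
  rw [Sym2.eq_iff] at he
  rcases he with ⟨rfl, rfl⟩ | ⟨rfl, rfl⟩
  · rfl
  · exact absurd hpq.1 (Finset.disjoint_right.1 hd hpq'.2)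

/-- a `t × t` biclique structure inside an edge set -/
def IsBic (t : ℕ) (E : Finset (Sym2 V)) (K : Finset V × Finset V) : Prop :=
  K.1.card = t ∧ K.2.card = t ∧ Disjoint K.1 K.2 ∧ pairsOf K ⊆ E

lemma greedy (t : ℕ) (ht : 1 ≤ t) :
    ∀ (N : ℕ) (E : Finset (Sym2 V)), E.card ≤ N →
    ∃ (L : Finset (Finset V × Finset V)) (R : Finset (Sym2 V)),
      R ⊆ E ∧
      (∀ K ∈ L, IsBic t E K) ∧
      (∀ e ∈ E, e ∈ R ∨ ∃ K ∈ L, e ∈ pairsOf K) ∧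
      L.card * (t * t) ≤ E.card ∧
      ¬∃ K, IsBic t R K := by
  intro N
  induction N with
  | zero =>
    intro E hE
    refine ⟨∅, E, Finset.Subset.refl _, by simp, fun e he => Or.inl he, by simp, ?_⟩
    rintro ⟨K, h1, h2, h3, h4⟩
    have h0 : (pairsOf K).card = 0 := Nat.le_zero.1 (le_trans (Finset.card_le_card h4) hE)
    rw [card_pairsOf h3, h1, h2] at h0
    have hpos : 0 < t * t := Nat.mul_pos ht ht
    omega
  | succ N ih =>
    intro E hE
    by_cases hex : ∃ K, IsBic t E K
    · obtain ⟨K, hK1, hK2, hK3, hK4⟩ := hex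
      have hcard : (pairsOf K).card = t * t := by rw [card_pairsOf hK3, hK1, hK2]
      have hE' : (E \ pairsOf K).card = E.card - t * t := by
        rw [Finset.card_sdiff_of_subset hK4, hcard]
      have htt : t * t ≤ E.card := hcard ▸ Finset.card_le_card hK4
      have hpos : 0 < t * t := Nat.mul_pos ht ht
      have hle : (E \ pairsOf K).card ≤ N := by omega
      obtain ⟨L', R', hR'sub, hL'bic, hcover, hcount, hnob⟩ := ih _ hle
      refine ⟨insert K L', R', le_trans hR'sub (Finset.sdiff_subset), ?_, ?_, ?_, hnob⟩
      · intro K' hK'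
        rcases Finset.mem_insert.1 hK' with rfl | hK'
        · exact ⟨hK1, hK2, hK3, hK4⟩
        · obtain ⟨a1, a2, a3, a4⟩ := hL'bic K' hK'
          exact ⟨a1, a2, a3, le_trans a4 Finset.sdiff_subset⟩
      · intro e he
        by_cases hep : e ∈ pairsOf K
        · exact Or.inr ⟨K, Finset.mem_insert_self _ _, hep⟩
        · rcases hcover e (Finset.mem_sdiff.2 ⟨he, hep⟩) with h | ⟨K', hK', hKe⟩
          · exact Or.inl h
          · exact Or.inr ⟨K', Finset.mem_insert_of_mem hK', hKe⟩
      · calc (insert K L').card * (t * t) ≤ (L'.card + 1) * (t * t) :=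
              Nat.mul_le_mul_right _ (Finset.card_insert_le _ _)
          _ = L'.card * (t * t) + t * t := by ring
          _ ≤ (E.card - t * t) + t * t := by
              rw [← hE']; exact Nat.add_le_add_right hcount _
          _ = E.card := by omega
    · exact ⟨∅, E, Finset.Subset.refl _, by simp, fun e he => Or.inl he, by simp,
        fun ⟨K, hK⟩ => hex ⟨K, hK.1, hK.2.1, hK.2.2.1, hK.2.2.2⟩⟩

end Greedy

section KST
set_option linter.unusedSectionVars false

variable {V : Type} [Fintype V] [DecidableEq V] {G : SimpleGraph V}

/-- no t-by-t biclique in G -/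
def NoBic (G : SimpleGraph V) (t : ℕ) : Prop :=
  ¬∃ K : Finset V × Finset V, K.1.card = t ∧ K.2.card = t ∧ Disjoint K.1 K.2 ∧
    ∀ p ∈ K.1, ∀ q ∈ K.2, G.Adj p q

variable [DecidableRel G.Adj]

lemma common_nbrs_le {t : ℕ} (hno : NoBic G t) {f : Fin t → V} (hf : Function.Injective f) :
    (Finset.univ.filter fun v => ∀ i, G.Adj v (f i)).card ≤ t := by
  by_contra hcon
  push_neg at hcon
  obtain ⟨T, hTsub, hTcard⟩ := Finset.exists_subset_card_eq hcon.le
  refine hno ⟨(Finset.univ.image f, T), ?_, hTcard, ?_, ?_⟩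
  · rw [Finset.card_image_of_injective _ hf, Finset.card_univ, Fintype.card_fin]
  · rw [Finset.disjoint_left]
    rintro x hx hxT
    rcases Finset.mem_image.1 hx with ⟨i, _, rfl⟩
    have := (Finset.mem_filter.1 (hTsub hxT)).2 i
    exact G.irrefl this
  · intro p hp q hq
    rcases Finset.mem_image.1 hp with ⟨i, _, rfl⟩
    exact ((Finset.mem_filter.1 (hTsub hq)).2 i).symm

lemma noninj_card_le (t : ℕ) :
    ((Finset.univ : Finset (Fin t → V)).filter fun f => ¬Function.Injective f).card ≤
      t * t * Fintype.card V ^ (t - 1) := by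
  classical
  set n := Fintype.card V
  have hsub : ((Finset.univ : Finset (Fin t → V)).filter fun f => ¬Function.Injective f) ⊆
      ((Finset.univ : Finset (Fin t × Fin t)).filter fun ij => ij.1 ≠ ij.2).biUnion
        (fun ij => (Finset.univ : Finset (Fin t → V)).filter fun f => f ij.1 = f ij.2) := by
    intro f hf
    rcases Finset.mem_filter.1 hf with ⟨_, hninj⟩
    rw [Function.not_injective_iff] at hninj
    obtain ⟨i, j, hfij, hij⟩ := hninj
    exact Finset.mem_biUnion.2 ⟨(i, j), Finset.mem_filter.2 ⟨Finset.mem_univ _, hij⟩,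
      Finset.mem_filter.2 ⟨Finset.mem_univ _, hfij⟩⟩
  have hone : ∀ ij : Fin t × Fin t, ij.1 ≠ ij.2 →
      ((Finset.univ : Finset (Fin t → V)).filter fun f => f ij.1 = f ij.2).card ≤
        n ^ (t - 1) := by
    rintro ⟨i, j⟩ hij
    have hinj : Set.InjOn (fun (f : Fin t → V) (k : {k : Fin t // k ≠ j}) => f k.val)
        ((Finset.univ : Finset (Fin t → V)).filter fun f => f i = f j) := by
      intro f hf g hg hfg
      rw [Finset.coe_filter] at hf hg
      funext k
      by_cases hk : k = j
      · subst hk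
        have h1 : f i = g i := congrFun hfg ⟨i, hij⟩
        rw [← hf.2, ← hg.2]
        exact h1
      · exact congrFun hfg ⟨k, hk⟩
    calc ((Finset.univ : Finset (Fin t → V)).filter fun f => f i = f j).card
        ≤ (Finset.univ : Finset ({k : Fin t // k ≠ j} → V)).card :=
          Finset.card_le_card_of_injOn _ (fun _ _ => Finset.mem_univ _) hinj
      _ = n ^ (t - 1) := by
          rw [Finset.card_univ, Fintype.card_fun]
          congr 1
          rw [Fintype.card_subtype_compl, Fintype.card_subtype_eq, Fintype.card_fin]
  calc _ ≤ _ := Finset.card_le_card hsub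
    _ ≤ ∑ ij ∈ (Finset.univ : Finset (Fin t × Fin t)).filter fun ij => ij.1 ≠ ij.2,
          ((Finset.univ : Finset (Fin t → V)).filter fun f => f ij.1 = f ij.2).card :=
        Finset.card_biUnion_le
    _ ≤ ∑ ij ∈ (Finset.univ : Finset (Fin t × Fin t)).filter fun ij => ij.1 ≠ ij.2,
          n ^ (t - 1) := by
        apply Finset.sum_le_sum
        intro ij hij
        exact hone ij (Finset.mem_filter.1 hij).2
    _ = ((Finset.univ : Finset (Fin t × Fin t)).filter fun ij => ij.1 ≠ ij.2).card *
          n ^ (t - 1) := by rw [Finset.sum_const, smul_eq_mul]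
    _ ≤ t * t * n ^ (t - 1) := by
        apply Nat.mul_le_mul_right
        calc _ ≤ (Finset.univ : Finset (Fin t × Fin t)).card := Finset.card_filter_le _ _
          _ = t * t := by rw [Finset.card_univ, Fintype.card_prod, Fintype.card_fin]

lemma sum_deg_pow_le {t : ℕ} (ht : 1 ≤ t) (hno : NoBic G t) :
    ∑ v : V, G.degree v ^ t ≤ (t + t * t) * Fintype.card V ^ t := by
  classical
  have ht' : t - 1 + 1 = t := by omega
  have h1 : Fintype.card V ^ (t - 1) * Fintype.card V = Fintype.card V ^ t := by
    conv_rhs => rw [← ht']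
    rw [pow_succ]
  have step1 : ∀ v : V, G.degree v ^ t =
      ((Finset.univ : Finset (Fin t → V)).filter fun f => ∀ i, G.Adj v (f i)).card := by
    intro v
    have h2 : ((Finset.univ : Finset (Fin t → V)).filter fun f => ∀ i, G.Adj v (f i))
        = Fintype.piFinset fun _ : Fin t => G.neighborFinset v := by
      ext f
      rw [Finset.mem_filter, Fintype.mem_piFinset]
      simp only [Finset.mem_univ, true_and, mem_neighborFinset]
    rw [h2, Fintype.card_piFinset, Finset.prod_const, Finset.card_univ, Fintype.card_fin]
    rfl
  have swap : ∑ v : V, G.degree v ^ t =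
      ∑ f : Fin t → V, ((Finset.univ : Finset V).filter fun v => ∀ i, G.Adj v (f i)).card := by
    simp_rw [step1, Finset.card_filter]
    rw [Finset.sum_comm]
  rw [swap]
  rw [← Finset.sum_filter_add_sum_filter_not (Finset.univ : Finset (Fin t → V))
    (fun f => Function.Injective f)]
  have hA : ∑ f ∈ (Finset.univ : Finset (Fin t → V)).filter (fun f => Function.Injective f),
      ((Finset.univ : Finset V).filter fun v => ∀ i, G.Adj v (f i)).card ≤
        Fintype.card V ^ t * t := by
    calc _ ≤ ((Finset.univ : Finset (Fin t → V)).filter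
          (fun f => Function.Injective f)).card * t := by
          apply Finset.sum_le_card_nsmul
          intro f hf
          exact common_nbrs_le hno (Finset.mem_filter.1 hf).2
      _ ≤ Fintype.card V ^ t * t := by
          apply Nat.mul_le_mul_right
          calc _ ≤ (Finset.univ : Finset (Fin t → V)).card := Finset.card_filter_le _ _
            _ = Fintype.card V ^ t := by
                rw [Finset.card_univ, Fintype.card_fun, Fintype.card_fin]
  have hB : ∑ f ∈ (Finset.univ : Finset (Fin t → V)).filter (fun f => ¬Function.Injective f),
      ((Finset.univ : Finset V).filter fun v => ∀ i, G.Adj v (f i)).card ≤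
        t * t * Fintype.card V ^ (t - 1) * Fintype.card V := by
    calc _ ≤ ((Finset.univ : Finset (Fin t → V)).filter
          (fun f => ¬Function.Injective f)).card * Fintype.card V := by
          apply Finset.sum_le_card_nsmul
          intro f _
          calc _ ≤ (Finset.univ : Finset V).card := Finset.card_filter_le _ _
            _ = Fintype.card V := Finset.card_univ
      _ ≤ t * t * Fintype.card V ^ (t - 1) * Fintype.card V :=
          Nat.mul_le_mul_right _ (noninj_card_le t)
  have hpow : t * t * Fintype.card V ^ (t - 1) * Fintype.card V
      ≤ t * t * Fintype.card V ^ t := le_of_eq (by rw [mul_assoc, h1])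
  calc _ ≤ Fintype.card V ^ t * t + t * t * Fintype.card V ^ (t - 1) * Fintype.card V :=
        Nat.add_le_add hA hB
    _ ≤ Fintype.card V ^ t * t + t * t * Fintype.card V ^ t := Nat.add_le_add_left hpow _
    _ = (t + t * t) * Fintype.card V ^ t := by ring


lemma kst {t : ℕ} (ht : 1 ≤ t) {ε : ℝ} (hε : 0 < ε) :
    ∃ n₁ : ℕ, 1 ≤ n₁ ∧ ∀ (W : Type) [Fintype W] [DecidableEq W] (H : SimpleGraph W)
      [DecidableRel H.Adj], n₁ ≤ Fintype.card W → NoBic H t →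
      (H.edgeSet.ncard : ℝ) ≤ ε * (Fintype.card W : ℝ) ^ 2 := by
  refine ⟨⌈(t + t * t : ℝ) / (2 * ε) ^ t⌉₊ + 1, by omega, ?_⟩
  intro W _ _ H _ hn hno
  have hnc : H.edgeSet.ncard = H.edgeFinset.card := by
    rw [← SimpleGraph.coe_edgeFinset, Set.ncard_coe_finset]
  rw [hnc]
  by_contra hcon
  push_neg at hcon
  set n := Fintype.card W with hn_def
  have ht' : t - 1 + 1 = t := by omega
  have hn1 : 1 ≤ n := le_trans (by omega) hn
  have hNpos : (0 : ℝ) < (n : ℝ) := by exact_mod_cast hn1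
  have hsum : (∑ v : W, (H.degree v : ℝ)) = 2 * H.edgeFinset.card := by
    exact_mod_cast congrArg (Nat.cast : ℕ → ℝ) (H.sum_degrees_eq_twice_card_edges)
  have L1 : (∑ v : W, (H.degree v : ℝ)) ^ t / (n : ℝ) ^ (t - 1)
      ≤ ∑ v : W, (H.degree v : ℝ) ^ t := by
    have h := pow_sum_div_card_le_sum_pow (s := (Finset.univ : Finset W))
      (f := fun v => (H.degree v : ℝ)) (fun i _ => by positivity) (t - 1)
    rw [ht'] at h
    simpa [Finset.card_univ] using h
  have L2 : ∑ v : W, (H.degree v : ℝ) ^ t ≤ (t + t * t : ℝ) * (n : ℝ) ^ t := by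
    have h := sum_deg_pow_le ht hno
    have h2 : ((∑ v : W, H.degree v ^ t : ℕ) : ℝ) ≤ (((t + t * t) * n ^ t : ℕ) : ℝ) := by
      exact_mod_cast h
    push_cast at h2
    convert h2 using 2
  have L3 : (2 * (H.edgeFinset.card : ℝ)) ^ t
      ≤ (t + t * t : ℝ) * (n : ℝ) ^ t * (n : ℝ) ^ (t - 1) := by
    rw [← hsum]
    have hp : (0 : ℝ) < (n : ℝ) ^ (t - 1) := by positivity
    rw [div_le_iff₀ hp] at L1
    calc (∑ v : W, (H.degree v : ℝ)) ^ t
        ≤ (∑ v : W, (H.degree v : ℝ) ^ t) * (n : ℝ) ^ (t - 1) := L1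
      _ ≤ (t + t * t : ℝ) * (n : ℝ) ^ t * (n : ℝ) ^ (t - 1) := by
          apply mul_le_mul_of_nonneg_right L2 (le_of_lt hp)
  have L4 : (2 * (ε * (n : ℝ) ^ 2)) ^ t < (2 * (H.edgeFinset.card : ℝ)) ^ t := by
    apply pow_lt_pow_left₀ _ (by positivity) (by omega)
    linarith
  have L5 : (2 * (ε * (n : ℝ) ^ 2)) ^ t
      = (2 * ε) ^ t * ((n : ℝ) ^ t * (n : ℝ) ^ (t - 1) * (n : ℝ)) := by
    rw [← mul_assoc, mul_pow, ← pow_mul]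
    congr 1
    rw [show 2 * t = t + (t - 1) + 1 by omega, pow_add, pow_add, pow_one]
  have key : (2 * ε) ^ t * (n : ℝ) < (t + t * t : ℝ) := by
    have hpos : (0 : ℝ) < (n : ℝ) ^ t * (n : ℝ) ^ (t - 1) := by positivity
    have hL : ((2 * ε) ^ t * (n : ℝ)) * ((n : ℝ) ^ t * (n : ℝ) ^ (t - 1))
        < (t + t * t : ℝ) * ((n : ℝ) ^ t * (n : ℝ) ^ (t - 1)) := by
      calc ((2 * ε) ^ t * (n : ℝ)) * ((n : ℝ) ^ t * (n : ℝ) ^ (t - 1))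
          = (2 * ε) ^ t * ((n : ℝ) ^ t * (n : ℝ) ^ (t - 1) * (n : ℝ)) := by ring
        _ = (2 * (ε * (n : ℝ) ^ 2)) ^ t := L5.symm
        _ < (2 * (H.edgeFinset.card : ℝ)) ^ t := L4
        _ ≤ (t + t * t : ℝ) * (n : ℝ) ^ t * (n : ℝ) ^ (t - 1) := L3
        _ = (t + t * t : ℝ) * ((n : ℝ) ^ t * (n : ℝ) ^ (t - 1)) := by ring
    exact lt_of_mul_lt_mul_right hL hpos.le
  have hx : (n : ℝ) < (t + t * t : ℝ) / (2 * ε) ^ t := by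
    have hp2 : (0 : ℝ) < (2 * ε) ^ t := by positivity
    rw [lt_div_iff₀ hp2]
    calc (n : ℝ) * (2 * ε) ^ t = (2 * ε) ^ t * (n : ℝ) := by ring
      _ < _ := key
  have hceil : (n : ℝ) < (⌈(t + t * t : ℝ) / (2 * ε) ^ t⌉₊ : ℝ) :=
    lt_of_lt_of_le hx (Nat.le_ceil _)
  have : n < ⌈(t + t * t : ℝ) / (2 * ε) ^ t⌉₊ := by exact_mod_cast hceil
  omega

end KST


/-- For every `δ > 0` there is `n₀` such that every graph `G` on `n ≥ n₀` vertices admits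
a family of at most `δ·n²` subgraphs, each isomorphic to a balanced complete bipartite
graph `K_{m,m}` with `m ≥ 1`, that strongly separates the edges of `G`. -/
theorem balanced_bipartite_separating_system_subquadratic :
    ∀ δ : ℝ, 0 < δ →
      ∃ n₀ : ℕ, ∀ n : ℕ, n₀ ≤ n →
        ∀ (V : Type) [Fintype V], Fintype.card V = n →
          ∀ G : SimpleGraph V,
            ∃ F : Set G.Subgraph,
              F.Finite ∧
              (∀ A ∈ F, ∃ m : ℕ, 1 ≤ m ∧
                Nonempty (A.coe ≃g completeBipartiteGraph (Fin m) (Fin m))) ∧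
              StronglySeparatesEdges G F ∧
              (F.ncard : ℝ) ≤ δ * (n : ℝ) ^ 2 := by
  intro δ hδ
  -- choose parameters
  set a : ℕ := 2 + ⌈(8 : ℝ) / δ⌉₊ with ha_def
  have ha : 2 ≤ a := by omega
  set t : ℕ := a * a with ht_def
  have ht : 1 ≤ t := by
    have h4 : 2 * 2 ≤ a * a := Nat.mul_le_mul ha ha
    omega
  have hta : (8 : ℝ) / δ ≤ (t : ℝ) := by
    have h1 : ((8 : ℝ) / δ) ≤ (⌈(8 : ℝ) / δ⌉₊ : ℕ) := Nat.le_ceil _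
    have h2 : (⌈(8 : ℝ) / δ⌉₊ : ℕ) ≤ a := by omega
    have h3 : a ≤ t := by
      have := Nat.le_mul_of_pos_right a (show 0 < a by omega)
      omega
    calc ((8 : ℝ) / δ) ≤ ((⌈(8 : ℝ) / δ⌉₊ : ℕ) : ℝ) := h1
      _ ≤ (a : ℝ) := by exact_mod_cast h2
      _ ≤ (t : ℝ) := by exact_mod_cast h3
  have hδ2 : 0 < δ / 2 := by linarith
  obtain ⟨n₁, hn₁pos, hkst⟩ := kst ht hδ2
  refine ⟨n₁, ?_⟩
  intro n hn V _ hcard G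
  classical
  -- greedy decomposition
  obtain ⟨L, R, hRsub, hLbic, hcover, hcount, hnob⟩ :=
    greedy (V := V) t ht G.edgeFinset.card G.edgeFinset le_rfl
  -- resolvers for each biclique in L
  have hres : ∀ K : {K : Finset V × Finset V // K ∈ L}, ∃ S : Finset G.Subgraph,
      S.card ≤ 4 * (a * a) ∧
      (∀ A ∈ S, ∃ m, 1 ≤ m ∧ Nonempty (A.coe ≃g completeBipartiteGraph (Fin m) (Fin m))) ∧
      (∀ p ∈ (K : Finset V × Finset V).1, ∀ q ∈ (K : Finset V × Finset V).2,
        ∀ e' : Sym2 V, e' ≠ s(p, q) →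
          ∃ A ∈ S, s(p, q) ∈ A.edgeSet ∧ e' ∉ A.edgeSet) := by
    rintro ⟨K, hK⟩
    obtain ⟨h1, h2, h3, h4⟩ := hLbic K hK
    refine resolver ha h1 h2 h3 ?_
    intro p hp q hq
    have : s(p, q) ∈ G.edgeFinset := h4 (mem_pairsOf.2 ⟨p, hp, q, hq, rfl⟩)
    exact G.mem_edgeSet.1 (SimpleGraph.mem_edgeFinset.1 this)
  choose S hS1 hS2 hS3 using hres
  set F1 : Finset G.Subgraph := R.image (eSub G) with hF1_def
  set F2 : Finset G.Subgraph := L.attach.biUnion S with hF2_def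
  refine ⟨↑(F1 ∪ F2), Finset.finite_toSet _, ?_, ?_, ?_⟩
  · -- every member is a balanced complete bipartite graph
    intro A hA
    rw [Finset.coe_union, Set.mem_union] at hA
    rcases hA with hA | hA
    · rw [Finset.mem_coe, Finset.mem_image] at hA
      obtain ⟨e, heR, rfl⟩ := hA
      exact ⟨1, le_refl 1, eSub_iso (SimpleGraph.mem_edgeFinset.1 (hRsub heR))⟩
    · rw [Finset.mem_coe, Finset.mem_biUnion] at hA
      obtain ⟨K, _, hAK⟩ := hA
      exact hS2 K A hAK
  · -- strong separation
    intro e he e' he' hne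
    have heE : e ∈ G.edgeFinset := SimpleGraph.mem_edgeFinset.2 he
    rcases hcover e heE with heR | ⟨K, hKL, heK⟩
    · refine ⟨eSub G e, ?_, eSub_mem_edgeSet he, ?_⟩
      · rw [Finset.coe_union, Set.mem_union]
        exact Or.inl (Finset.mem_coe.2 (Finset.mem_image.2 ⟨e, heR, rfl⟩))
      · intro hmem
        exact hne.symm (eSub_edgeSet_subset hmem)
    · obtain ⟨p, hp, q, hq, rfl⟩ := mem_pairsOf.1 heK
      obtain ⟨A, hAS, hin, hout⟩ := hS3 ⟨K, hKL⟩ p hp q hq e' (Ne.symm hne)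
      refine ⟨A, ?_, hin, hout⟩
      rw [Finset.coe_union, Set.mem_union]
      exact Or.inr (Finset.mem_coe.2 (Finset.mem_biUnion.2 ⟨⟨K, hKL⟩, Finset.mem_attach _ _, hAS⟩))
  · -- cardinality bound
    rw [Set.ncard_coe_finset]
    -- R is biclique-free, apply KST to the graph it spans
    have hRcard : (R.card : ℝ) ≤ δ / 2 * (n : ℝ) ^ 2 := by
      set H : SimpleGraph V := SimpleGraph.fromEdgeSet ↑R with hH_def
      letI : DecidableRel H.Adj := Classical.decRel _
      have hHedge : H.edgeSet = ↑R := by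
        rw [hH_def, SimpleGraph.edgeSet_fromEdgeSet]
        ext e
        rw [Set.mem_diff]
        constructor
        · rintro ⟨h1, _⟩; exact h1
        · intro hR
          refine ⟨hR, ?_⟩
          have heG : e ∈ G.edgeSet := SimpleGraph.mem_edgeFinset.1 (hRsub hR)
          exact G.not_isDiag_of_mem_edgeSet heG
      have hnoH : NoBic H t := by
        rintro ⟨K, h1, h2, h3, h4⟩
        refine hnob ⟨K, h1, h2, h3, ?_⟩
        intro e heK
        obtain ⟨p, hp, q, hq, rfl⟩ := mem_pairsOf.1 heK
        have := h4 p hp q hq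
        rw [SimpleGraph.fromEdgeSet_adj] at this
        exact Finset.mem_coe.1 this.1
      have h := hkst V H (hcard ▸ hn) hnoH
      rw [hHedge, Set.ncard_coe_finset, hcard] at h
      exact h
    have hF2card : (F2.card : ℝ) ≤ (L.card : ℝ) * (4 * (a * a)) := by
      have h1 : F2.card ≤ L.attach.card * (4 * (a * a)) := by
        calc F2.card ≤ ∑ K ∈ L.attach, (S K).card := Finset.card_biUnion_le
          _ ≤ L.attach.card * (4 * (a * a)) := Finset.sum_le_card_nsmul _ _ _
              (fun K _ => hS1 K)
      rw [Finset.card_attach] at h1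
      exact_mod_cast h1
    -- edge count bound : 2 * |E| ≤ n * n
    have hEn : G.edgeFinset.card * 2 ≤ n * n := by
      have h1 : ∑ v : V, G.degree v = 2 * G.edgeFinset.card :=
        G.sum_degrees_eq_twice_card_edges
      have h2 : ∑ v : V, G.degree v ≤ n * n := by
        calc ∑ v : V, G.degree v ≤ ∑ _v : V, n := by
              apply Finset.sum_le_sum
              intro v _
              calc G.degree v ≤ Fintype.card V := by
                    rw [← SimpleGraph.card_neighborFinset_eq_degree]
                    exact le_trans (Finset.card_le_univ _) (le_of_eq Finset.card_univ)
                _ = n := hcard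
          _ = n * n := by
              rw [Finset.sum_const, smul_eq_mul, Finset.card_univ, hcard]
      omega
    have hLbound : (L.card : ℝ) * (4 * ((a : ℝ) * a)) ≤ δ / 2 * (n : ℝ) ^ 2 := by
      have h2 : L.card * (t * t) ≤ n * n := le_trans hcount (by omega)
      have h1 : (L.card : ℝ) * ((t : ℝ) * t) ≤ (n : ℝ) * n := by exact_mod_cast h2
      have htpos : (0 : ℝ) < (t : ℝ) := by
        have h3 : (1 : ℕ) ≤ t := ht
        exact_mod_cast lt_of_lt_of_le zero_lt_one h3
      have h4t : (4 : ℝ) / (t : ℝ) ≤ δ / 2 := by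
        rw [div_le_div_iff₀ htpos (by norm_num : (0:ℝ) < 2)]
        have h8 : (8 : ℝ) ≤ (t : ℝ) * δ := (div_le_iff₀ hδ).1 hta
        calc (4 : ℝ) * 2 = 8 := by norm_num
          _ ≤ (t : ℝ) * δ := h8
          _ = δ * (t : ℝ) := mul_comm _ _
      have haa : ((a : ℝ) * a) = (t : ℝ) := by
        rw [ht_def]; push_cast; ring
      rw [haa]
      have h5 : (L.card : ℝ) * (4 * (t : ℝ)) = ((L.card : ℝ) * ((t : ℝ) * t)) * (4 / t) := by
        field_simp
      calc (L.card : ℝ) * (4 * (t : ℝ)) = ((L.card : ℝ) * ((t : ℝ) * t)) * (4 / t) := h5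
        _ ≤ ((n : ℝ) * n) * (4 / (t : ℝ)) := by
            apply mul_le_mul_of_nonneg_right h1
            positivity
        _ ≤ ((n : ℝ) * n) * (δ / 2) := by
            apply mul_le_mul_of_nonneg_left h4t
            positivity
        _ = δ / 2 * (n : ℝ) ^ 2 := by ring
    have hcardle : (F1 ∪ F2).card ≤ R.card + F2.card := by
      calc (F1 ∪ F2).card ≤ F1.card + F2.card := Finset.card_union_le _ _
        _ ≤ R.card + F2.card := Nat.add_le_add_right Finset.card_image_le _
    calc ((F1 ∪ F2).card : ℝ) ≤ (R.card : ℝ) + (F2.card : ℝ) := by exact_mod_cast hcardle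
      _ ≤ δ / 2 * (n : ℝ) ^ 2 + (L.card : ℝ) * (4 * ((a : ℝ) * a)) := by
          apply add_le_add hRcard
          calc (F2.card : ℝ) ≤ (L.card : ℝ) * (4 * ((a * a : ℕ) : ℝ)) := by
                exact_mod_cast hF2card
            _ = (L.card : ℝ) * (4 * ((a : ℝ) * a)) := by push_cast; ring
      _ ≤ δ / 2 * (n : ℝ) ^ 2 + δ / 2 * (n : ℝ) ^ 2 := add_le_add_right hLbound _
      _ = δ * (n : ℝ) ^ 2 := by ring
end

section
/- Let H be a graph with at least one edge. There exists a constant C > 0 (depending only on H) such that for every n ≥ 2 the n-balanced blowup H(n) of H admits a family F of subgraphs, each isomorphic to a balanced blowup of H, such that |F| ≤ C·log n and F strongly separates the copies of H in H(n): for every two distinct subgraphs H₁, H₂ of H(n) isomorphic to H there exist F₁, F₂ ∈ F with H₁ ⊆ F₁, H₂ ⊄ F₁, H₂ ⊆ F₂ and H₁ ⊄ F₂. -/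
open SimpleGraph

/-- The `k`-balanced blowup `H(k)` of `H`: each vertex `x` is replaced by `k` copies, and
each edge by a complete bipartite graph between the corresponding copies. -/
def balancedBlowup {α : Type*} (H : SimpleGraph α) (k : ℕ) : SimpleGraph (α × Fin k) :=
  SimpleGraph.comap Prod.fst H

/-- The family `F` of subgraphs of `G` strongly separates the copies of `H` in `G`. -/
def StronglySeparatesCopies {α V : Type*} (H : SimpleGraph α) (G : SimpleGraph V)
    (F : Set G.Subgraph) : Prop :=
  ∀ H₁ H₂ : G.Subgraph, Nonempty (H₁.coe ≃g H) → Nonempty (H₂.coe ≃g H) → H₁ ≠ H₂ →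
    ∃ F₁ ∈ F, ∃ F₂ ∈ F, H₁ ≤ F₁ ∧ ¬ H₂ ≤ F₁ ∧ H₂ ≤ F₂ ∧ ¬ H₁ ≤ F₂

set_option linter.unusedSectionVars false
set_option maxHeartbeats 1000000

open Finset

lemma card_perm_fixed {n : ℕ} {X : Type*} [Fintype X] [DecidableEq X]
    (q : X ↪ Fin n) (f : X → Fin n) (hf : Function.Injective f) :
    (Finset.univ.filter (fun σ : Equiv.Perm (Fin n) => ∀ x, σ (q x) = f x)).card
      = (n - Fintype.card X).factorial := by
  classical
  rw [← Fintype.card_subtype]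
  have key : ∀ (σ : Equiv.Perm (Fin n)),
      (∀ x, σ (q x) = f x) ↔ (∀ y : (Set.range ⇑q),
        σ y = (((Equiv.ofInjective ⇑q q.injective).symm.trans (Equiv.ofInjective f hf)) y : Fin n)) := by
    intro σ
    constructor
    · rintro h ⟨-, x, rfl⟩
      have : (⟨q x, ⟨x, rfl⟩⟩ : Set.range ⇑q) = Equiv.ofInjective ⇑q q.injective x := by
        ext; rfl
      rw [this]
      simp [h x]
    · intro h x
      have := h ⟨q x, ⟨x, rfl⟩⟩
      have h2 : (⟨q x, ⟨x, rfl⟩⟩ : Set.range ⇑q) = Equiv.ofInjective ⇑q q.injective x := by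
        ext; rfl
      rw [h2] at this
      simpa using this
  rw [Fintype.card_congr (Equiv.subtypeEquivRight key)]
  rw [Fintype.card_congr (Equiv.Set.compl _)]
  have h1 : Fintype.card ↥(Set.range ⇑q)ᶜ = n - Fintype.card X := by
    rw [Fintype.card_compl_set]
    congr 1
    · simp
    · rw [Set.card_range_of_injective q.injective]
  have h2 : Fintype.card ↥(Set.range f)ᶜ = n - Fintype.card X := by
    rw [Fintype.card_compl_set]
    congr 1
    · simp
    · rw [Set.card_range_of_injective hf]
  rw [Fintype.card_equiv (Fintype.equivOfCardEq (h1.trans h2.symm)), h1]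

lemma card_perm_mem {n : ℕ} {X : Type*} [Fintype X] [DecidableEq X]
    (q : X ↪ Fin n) (T : X → Finset (Fin n))
    (hd : ∀ x y, x ≠ y → Disjoint (T x) (T y)) :
    (Finset.univ.filter (fun σ : Equiv.Perm (Fin n) => ∀ x, σ (q x) ∈ T x)).card
      = (∏ x, (T x).card) * (n - Fintype.card X).factorial := by
  classical
  rw [Finset.card_eq_sum_card_fiberwise
    (f := fun (σ : Equiv.Perm (Fin n)) (x : X) => σ (q x)) (t := Fintype.piFinset T)
    (fun σ hσ => by
      rw [Finset.mem_coe, Fintype.mem_piFinset]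
      exact (Finset.mem_filter.mp (Finset.mem_coe.mp hσ)).2)]
  have hfib : ∀ f ∈ Fintype.piFinset T,
      ((Finset.univ.filter (fun σ : Equiv.Perm (Fin n) => ∀ x, σ (q x) ∈ T x)).filter
        (fun σ => (fun x => σ (q x)) = f)).card = (n - Fintype.card X).factorial := by
    intro f hf
    rw [Fintype.mem_piFinset] at hf
    have hinj : Function.Injective f := by
      intro x y hxy
      by_contra hne
      exact Finset.disjoint_left.mp (hd x y hne) (hf x) (hxy ▸ hf y)
    rw [← card_perm_fixed q f hinj]
    congr 1
    ext σ
    simp only [Finset.mem_filter, Finset.mem_univ, true_and]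
    constructor
    · rintro ⟨-, h⟩ x
      exact congrFun h x
    · intro h
      exact ⟨fun x => (h x) ▸ hf x, funext h⟩
  rw [Finset.sum_congr rfl hfib, Finset.sum_const, Fintype.card_piFinset, smul_eq_mul]

lemma card_perm_mem_nat {n : ℕ} {X : Type*} [Fintype X] [DecidableEq X]
    (q : X ↪ Fin n) (T : X → Finset (Fin n))
    (hd : ∀ x y, x ≠ y → Disjoint (T x) (T y)) :
    Nat.card {σ : Equiv.Perm (Fin n) // ∀ x, σ (q x) ∈ T x}
      = (∏ x, (T x).card) * (n - Fintype.card X).factorial := by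
  classical
  rw [Nat.card_eq_fintype_card, Fintype.card_subtype]
  exact card_perm_mem q T hd

lemma greedy_cover {Ω R : Type*} [Fintype Ω] [Nonempty Ω] [DecidableEq Ω] [DecidableEq R]
    (Good : Ω → R → Prop) [∀ ω r, Decidable (Good ω r)] (S : Finset R) (D : ℕ) (hD : 0 < D)
    (hdens : ∀ r ∈ S, Fintype.card Ω ≤ (Finset.univ.filter (fun ω => Good ω r)).card * D) :
    ∀ L : ℕ, ∃ T : Finset Ω, T.card ≤ L ∧
      ((S.filter (fun r => ∀ ω ∈ T, ¬ Good ω r)).card : ℝ)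
        ≤ S.card * ((D - 1 : ℝ)/D)^L := by
  classical
  have hD' : (0:ℝ) < D := by exact_mod_cast hD
  have hfrac0 : (0:ℝ) ≤ (D - 1 : ℝ)/D := by
    apply div_nonneg _ hD'.le
    have : (1:ℝ) ≤ D := by exact_mod_cast hD
    linarith
  intro L
  induction L with
  | zero =>
    refine ⟨∅, le_refl _, ?_⟩
    simp only [Finset.notMem_empty, false_implies, implies_true, Finset.filter_true_of_mem,
      pow_zero, mul_one]
    norm_num
  | succ L ih =>
    obtain ⟨T, hTcard, hTbound⟩ := ih
    set U := S.filter (fun r => ∀ ω ∈ T, ¬ Good ω r) with hU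
    by_cases hUe : U = ∅
    · refine ⟨T, hTcard.trans (Nat.le_succ _), ?_⟩
      rw [← hU, hUe]
      simp only [Finset.card_empty, Nat.cast_zero]
      positivity
    · -- averaging: find a good ω
      have hdouble : (U.card) * Fintype.card Ω ≤
          ∑ ω : Ω, (U.filter (fun r => Good ω r)).card * D := by
        have swap : ∑ ω : Ω, (U.filter (fun r => Good ω r)).card
            = ∑ r ∈ U, (Finset.univ.filter (fun ω => Good ω r)).card := by
          simp only [Finset.card_filter]
          rw [Finset.sum_comm]
        calc U.card * Fintype.card Ω = ∑ r ∈ U, Fintype.card Ω := by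
              rw [Finset.sum_const, smul_eq_mul]
          _ ≤ ∑ r ∈ U, (Finset.univ.filter (fun ω => Good ω r)).card * D := by
              apply Finset.sum_le_sum
              intro r hr
              exact hdens r (Finset.mem_filter.mp hr).1
          _ = (∑ r ∈ U, (Finset.univ.filter (fun ω => Good ω r)).card) * D := by
              rw [Finset.sum_mul]
          _ = (∑ ω : Ω, (U.filter (fun r => Good ω r)).card) * D := by rw [swap]
          _ = ∑ ω : Ω, (U.filter (fun r => Good ω r)).card * D := by rw [Finset.sum_mul]
      have hex : ∃ ω : Ω, U.card ≤ (U.filter (fun r => Good ω r)).card * D := by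
        by_contra hc
        push_neg at hc
        have : ∑ ω : Ω, (U.filter (fun r => Good ω r)).card * D
            ≤ ∑ _ω : Ω, (U.card - 1) := by
          apply Finset.sum_le_sum
          intro ω _
          exact Nat.le_sub_one_of_lt (hc ω)
        rw [Finset.sum_const, smul_eq_mul, Finset.card_univ] at this
        have hcard : Fintype.card Ω * (U.card - 1) < Fintype.card Ω * U.card :=
          Nat.mul_lt_mul_of_le_of_lt (le_refl _)
            (Nat.sub_lt (Nat.pos_of_ne_zero (fun h => hUe (Finset.card_eq_zero.mp h))) one_pos)
            Fintype.card_pos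
        have hcomm : U.card * Fintype.card Ω = Fintype.card Ω * U.card := Nat.mul_comm _ _
        omega
      obtain ⟨ω, hω⟩ := hex
      refine ⟨insert ω T, (Finset.card_insert_le _ _).trans (Nat.succ_le_succ hTcard), ?_⟩
      have hU' : S.filter (fun r => ∀ ω' ∈ insert ω T, ¬ Good ω' r)
          = U.filter (fun r => ¬ Good ω r) := by
        ext r
        simp only [hU, Finset.mem_filter, Finset.mem_insert]
        constructor
        · rintro ⟨hrS, h⟩
          exact ⟨⟨hrS, fun ω' hω' => h ω' (Or.inr hω')⟩, h ω (Or.inl rfl)⟩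
        · rintro ⟨⟨hrS, h⟩, hne⟩
          refine ⟨hrS, fun ω' hω' => ?_⟩
          rcases hω' with rfl | hω' 
          · exact hne
          · exact h ω' hω'
      rw [hU']
      have hsplit : (U.filter (fun r => ¬ Good ω r)).card
          = U.card - (U.filter (fun r => Good ω r)).card := by
        have := Finset.card_filter_add_card_filter_not (s := U) (p := fun r => Good ω r)
        omega
      have hcov : ((U.card : ℝ))/D ≤ (U.filter (fun r => Good ω r)).card := by
        rw [div_le_iff₀ hD']
        exact_mod_cast hω
      have : ((U.filter (fun r => ¬ Good ω r)).card : ℝ) ≤ (U.card : ℝ) * ((D-1:ℝ)/D) := by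
        rw [hsplit]
        have hle : (U.filter (fun r => Good ω r)).card ≤ U.card :=
          Finset.card_le_card (Finset.filter_subset _ _)
        rw [Nat.cast_sub hle]
        have : (U.card : ℝ) * ((D-1:ℝ)/D) = U.card - U.card/D := by
          field_simp
        rw [this]
        linarith
      calc ((U.filter (fun r => ¬ Good ω r)).card : ℝ) ≤ (U.card : ℝ) * ((D-1:ℝ)/D) := this
        _ ≤ (S.card * ((D - 1 : ℝ)/D)^L) * ((D-1:ℝ)/D) := by
            apply mul_le_mul_of_nonneg_right hTbound hfrac0
        _ = S.card * ((D - 1 : ℝ)/D)^(L+1) := by ring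

noncomputable def isoMapTop {V W : Type*} {G : SimpleGraph V} {G' : SimpleGraph W}
    (f : G →g G') (hf : Function.Injective f) : ((⊤ : G.Subgraph).map f).coe ≃g G := by
  refine ⟨((Equiv.setCongr ?_).trans (Equiv.ofInjective f hf).symm), ?_⟩
  · show ((⊤ : G.Subgraph).map f).verts = Set.range f
    rw [Subgraph.map_verts]
    simp [Set.image_univ]
  · intro u v
    have key : ∀ w : ((⊤ : G.Subgraph).map f).verts,
        f (((Equiv.setCongr (by rw [Subgraph.map_verts]; simp [Set.image_univ] :
          ((⊤ : G.Subgraph).map f).verts = Set.range f)).trans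
            (Equiv.ofInjective f hf).symm) w) = (w : W) := by
      rintro ⟨w, hw⟩
      simp [Equiv.apply_ofInjective_symm]
    constructor
    · intro h
      show ((⊤ : G.Subgraph).map f).Adj u v
      rw [Subgraph.map_adj]
      exact ⟨_, _, h, key u, key v⟩
    · intro h
      have h' : ((⊤ : G.Subgraph).map f).Adj u v := h
      rw [Subgraph.map_adj] at h'
      obtain ⟨a, b, hab, ha, hb⟩ := h'
      have ha' : a = _ := hf (ha.trans (key u).symm)
      have hb' : b = _ := hf (hb.trans (key v).symm)
      rw [← ha', ← hb']
      exact hab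

def isoBlowupOne {α : Type*} (H : SimpleGraph α) : H ≃g balancedBlowup H 1 :=
  ⟨(Equiv.prodUnique α (Fin 1)).symm, by intro a b; rfl⟩

lemma ncard_verts_of_copy {V : Type*} {G : SimpleGraph V} {α : Type*} [Fintype α]
    {H : SimpleGraph α} {A : G.Subgraph} (φ : A.coe ≃g H) :
    A.verts.ncard = Fintype.card α := by
  rw [← Nat.card_coe_set_eq]
  rw [Nat.card_congr φ.toEquiv]
  simp [Nat.card_eq_fintype_card]

lemma ncard_edgeSet_of_copy {V : Type*} {G : SimpleGraph V} {α : Type*}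
    {H : SimpleGraph α} {A : G.Subgraph} (φ : A.coe ≃g H) :
    A.edgeSet.ncard = H.edgeSet.ncard := by
  rw [← Subgraph.image_coe_edgeSet_coe,
    Set.ncard_image_of_injective _ (Sym2.map.injective Subtype.val_injective)]
  rw [← Nat.card_coe_set_eq, ← Nat.card_coe_set_eq]
  exact Nat.card_congr φ.mapEdgeSet

lemma copy_eq_of_le {V : Type*} [Finite V] {G : SimpleGraph V} {α : Type*} [Fintype α]
    {H : SimpleGraph α} {A B : G.Subgraph} (φA : A.coe ≃g H) (φB : B.coe ≃g H)
    (hle : B ≤ A) : B = A := by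
  have hverts : B.verts = A.verts := by
    apply Set.eq_of_subset_of_ncard_le hle.1
    rw [ncard_verts_of_copy φA, ncard_verts_of_copy φB]
  have hedges : B.edgeSet = A.edgeSet := by
    apply Set.eq_of_subset_of_ncard_le (Subgraph.edgeSet_mono hle)
    rw [ncard_edgeSet_of_copy φA, ncard_edgeSet_of_copy φB]
  ext u v
  · rw [hverts]
  · constructor
    · intro h; exact Subgraph.mem_edgeSet.mp (hedges ▸ Subgraph.mem_edgeSet.mpr h)
    · intro h; exact Subgraph.mem_edgeSet.mp (hedges ▸ Subgraph.mem_edgeSet.mpr h)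

open Finset

lemma fact_le_pow_mul : ∀ {n r : ℕ}, r ≤ n → n.factorial ≤ n ^ r * (n - r).factorial := by
  intro n r
  induction r with
  | zero => simp
  | succ r ih =>
    intro h
    have h' : r ≤ n := Nat.le_of_succ_le h
    have e : n - r = (n - (r + 1)) + 1 := by omega
    calc n.factorial ≤ n ^ r * (n - r).factorial := ih h'
      _ = n ^ r * ((n - r) * (n - (r+1)).factorial) := by rw [e, Nat.factorial_succ, ← e]
      _ ≤ n ^ r * (n * (n - (r+1)).factorial) := by
          apply Nat.mul_le_mul_left
          exact Nat.mul_le_mul_right _ (Nat.sub_le _ _)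
      _ = n ^ (r+1) * (n - (r+1)).factorial := by ring

section OptEquiv

variable {α : Type*} {β : Type*}

def optFiberEquivNe (p0 : β) (a : α → β) (b : β) (hb : ¬ p0 = b) :
    {y : Option α // y.elim p0 a = b} ≃ {x : α // a x = b} where
  toFun := fun y => match y with
    | ⟨some x, h⟩ => ⟨x, h⟩
    | ⟨none, h⟩ => (hb h).elim
  invFun := fun x => ⟨some x.1, x.2⟩
  left_inv := by
    rintro ⟨(_ | x), h⟩
    · exact (hb h).elim
    · rfl
  right_inv := by rintro ⟨x, h⟩; rfl

def optFiberEquivEq (p0 : β) (a : α → β) (b : β) (hb : p0 = b) :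
    {y : Option α // y.elim p0 a = b} ≃ Option {x : α // a x = b} where
  toFun := fun y => match y with
    | ⟨some x, h⟩ => some ⟨x, h⟩
    | ⟨none, _⟩ => none
  invFun := fun x => match x with
    | some x => ⟨some x.1, x.2⟩
    | none => ⟨none, hb⟩
  left_inv := by
    rintro ⟨(_ | x), h⟩
    · rfl
    · rfl
  right_inv := by
    rintro (_ | ⟨x, h⟩)
    · rfl
    · rfl

end OptEquiv
open SimpleGraph
lemma finite_subgraph {V : Type*} [Finite V] (G : SimpleGraph V) : Finite G.Subgraph := by
  have : Finite (Set V × (V → V → Prop)) := by infer_instance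
  apply Finite.of_injective (fun A : G.Subgraph => ((A.verts, A.Adj) : Set V × (V → V → Prop)))
  intro A B h
  simp only [Prod.mk.injEq] at h
  exact SimpleGraph.Subgraph.ext h.1 h.2

namespace BlowupSep

variable {α : Type} [Fintype α]

noncomputable def slot {n k : ℕ} (h : Fintype.card α * k ≤ n) : α × Fin k ↪ Fin n :=
  ((Equiv.prodCongr (Fintype.equivFin α) (Equiv.refl (Fin k))).toEmbedding.trans
    (finProdFinEquiv.toEmbedding.trans (Fin.castLEEmb h)))

noncomputable def phi {n k : ℕ} (h : Fintype.card α * k ≤ n) (a : α → α)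
    (σ : α → Equiv.Perm (Fin n)) (p : α × Fin k) : α × Fin n :=
  (a p.1, (σ (a p.1)).symm (slot h (p.1, p.2)))

lemma phi_inj {n k : ℕ} (h : Fintype.card α * k ≤ n) (a : α → α)
    (σ : α → Equiv.Perm (Fin n)) : Function.Injective (phi h a σ) := by
  rintro ⟨x, t⟩ ⟨y, u⟩ hpq
  simp only [phi, Prod.mk.injEq] at hpq
  obtain ⟨h1, h2⟩ := hpq
  rw [h1] at h2
  have := (σ (a y)).symm.injective h2
  exact (slot h).injective this

variable [DecidableEq α]

/-- the first "good event": every `g x` is in the class of `x`. -/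
def GoodA {n k : ℕ} (h : Fintype.card α * k ≤ n) (a : α → α)
    (σ : α → Equiv.Perm (Fin n)) (g : α → α × Fin n) : Prop :=
  ∀ x : α, σ (a x) ((g x).2) ∈ Finset.univ.image (fun t : Fin k => slot h (x, t))

/-- the second "good event": the point `pt` is avoided in its fiber. -/
def GoodB {n k : ℕ} (h : Fintype.card α * k ≤ n) (a : α → α)
    (σ : α → Equiv.Perm (Fin n)) (pt : α × Fin n) : Prop :=
  σ pt.1 pt.2 ∈ Finset.univ \
    Finset.univ.image (fun q : {x : α // a x = pt.1} × Fin k => slot h (q.1.1, q.2))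

lemma goodA_mem {n k : ℕ} {h : Fintype.card α * k ≤ n} {a : α → α}
    {σ : α → Equiv.Perm (Fin n)} {g : α → α × Fin n}
    (hg : ∀ x, (g x).1 = a x) (hA : GoodA h a σ g) :
    ∀ x : α, ∃ t : Fin k, phi h a σ (x, t) = g x := by
  intro x
  obtain ⟨t, -, ht⟩ := Finset.mem_image.mp (hA x)
  refine ⟨t, ?_⟩
  have : (σ (a x)).symm (slot h (x, t)) = (g x).2 := by
    rw [ht]; exact (σ (a x)).symm_apply_apply _
  simp only [phi, this]
  exact Prod.ext_iff.mpr ⟨(hg x).symm, rfl⟩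

lemma goodB_not_mem {n k : ℕ} {h : Fintype.card α * k ≤ n} {a : α → α}
    {σ : α → Equiv.Perm (Fin n)} {pt : α × Fin n} (hB : GoodB h a σ pt) :
    pt ∉ Set.range (phi h a σ) := by
  rintro ⟨⟨x, t⟩, hxt⟩
  simp only [phi, Prod.ext_iff] at hxt
  obtain ⟨h1, h2⟩ := hxt
  have : σ pt.1 pt.2 = slot h (x, t) := by
    rw [← h1, ← h2, Equiv.apply_symm_apply]
  rw [GoodB, Finset.mem_sdiff] at hB
  exact hB.2 (Finset.mem_image.mpr ⟨(⟨x, h1⟩, t), Finset.mem_univ _, this.symm⟩)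


lemma good_density {n k : ℕ} [Nonempty α] (hmk : Fintype.card α * k ≤ n)
    (h2 : 2 * Fintype.card α ≤ n) (hk : k = n / (2 * Fintype.card α))
    (a : α → α) (g : α → α × Fin n) (pt : α × Fin n)
    (hg : Function.Injective g) (hga : ∀ x, (g x).1 = a x) (hpt : pt ∉ Set.range g) :
    Fintype.card (α → Equiv.Perm (Fin n)) ≤
      Nat.card {σ : α → Equiv.Perm (Fin n) // GoodA hmk a σ g ∧ GoodB hmk a σ pt}
        * (2 * (4 * Fintype.card α) ^ Fintype.card α) := by
  classical
  set m := Fintype.card α with hm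
  have hm1 : 1 ≤ m := Fintype.card_pos
  have hk1 : 1 ≤ k := by
    rw [hk]
    exact Nat.one_le_div_iff (by omega) |>.mpr h2
  have hA : 2*m*k + n % (2*m) = n := by rw [hk]; exact Nat.div_add_mod n (2*m)
  have h2mk : 2 * m * k ≤ n := by omega
  have h4mk : n ≤ 4 * m * k := by
    have hB : n % (2*m) < 2*m := Nat.mod_lt _ (by omega)
    have hC : 2*m ≤ 2*m*k := Nat.le_mul_of_pos_right _ hk1
    have h4 : 4*m*k = 2*(2*m*k) := by ring
    omega
  -- fiber data
  set fib : Option α → α := fun y => y.elim pt.1 a with hfibdef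
  set point : Option α → Fin n := fun y => y.elim pt.2 (fun x => (g x).2) with hpointdef
  set Tgt : Option α → Finset (Fin n) := fun y =>
    y.elim (Finset.univ \ Finset.univ.image
        (fun q : {x : α // a x = pt.1} × Fin k => slot hmk (q.1.1, q.2)))
      (fun x => Finset.univ.image (fun t : Fin k => slot hmk (x, t))) with hTgtdef
  have hiff : ∀ σ : α → Equiv.Perm (Fin n),
      (GoodA hmk a σ g ∧ GoodB hmk a σ pt) ↔
        ∀ b : α, ∀ y : {y : Option α // fib y = b}, (σ b) (point y.1) ∈ Tgt y.1 := by
    intro σ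
    constructor
    · rintro ⟨hA, hB⟩ b ⟨(_ | x), hy⟩
      · simp only [hfibdef, Option.elim] at hy
        subst hy
        exact hB
      · simp only [hfibdef, Option.elim] at hy
        subst hy
        exact hA x
    · intro h
      exact ⟨fun x => h (a x) ⟨some x, rfl⟩, h pt.1 ⟨none, rfl⟩⟩
  have e1 : {σ : α → Equiv.Perm (Fin n) // GoodA hmk a σ g ∧ GoodB hmk a σ pt} ≃
      ∀ b : α, {π : Equiv.Perm (Fin n) //
        ∀ y : {y : Option α // fib y = b}, π (point y.1) ∈ Tgt y.1} :=
    (Equiv.subtypeEquivRight hiff).trans (Equiv.subtypePiEquivPi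
      (p := fun b (π : Equiv.Perm (Fin n)) =>
        ∀ y : {y : Option α // fib y = b}, π (point y.1) ∈ Tgt y.1))

  -- injectivity of the points within a fiber
  have hqinj : ∀ b : α, Function.Injective
      (fun y : {y : Option α // fib y = b} => point y.1) := by
    intro b
    rintro ⟨(_ | x), hy⟩ ⟨(_ | x'), hy'⟩ hpq
    · rfl
    · exfalso
      simp only [hpointdef, Option.elim] at hpq
      simp only [hfibdef, Option.elim] at hy hy'
      apply hpt
      refine ⟨x', ?_⟩
      have : (g x').1 = pt.1 := by rw [hga x', hy', ← hy]
      exact Prod.ext_iff.mpr ⟨this, hpq.symm⟩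
    · exfalso
      simp only [hpointdef, Option.elim] at hpq
      simp only [hfibdef, Option.elim] at hy hy'
      apply hpt
      refine ⟨x, ?_⟩
      have : (g x).1 = pt.1 := by rw [hga x, hy, ← hy']
      exact Prod.ext_iff.mpr ⟨this, hpq⟩
    · simp only [hpointdef, Option.elim] at hpq
      simp only [hfibdef, Option.elim] at hy hy'
      have hfst : (g x).1 = (g x').1 := by rw [hga x, hga x', hy, hy']
      have : g x = g x' := Prod.ext_iff.mpr ⟨hfst, hpq⟩
      have := hg this
      subst this
      rfl
  -- disjointness of targets within a fiber
  have hdisj : ∀ b : α, ∀ y y' : {y : Option α // fib y = b}, y ≠ y' →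
      Disjoint (Tgt y.1) (Tgt y'.1) := by
    intro b y y' hne
    have key : ∀ (x x' : α), x ≠ x' → Disjoint (Tgt (some x)) (Tgt (some x')) := by
      intro x x' hxx
      rw [Finset.disjoint_left]
      intro s hs hs'
      simp only [hTgtdef, Option.elim, Finset.mem_image] at hs hs'
      obtain ⟨t, -, ht⟩ := hs
      obtain ⟨t', -, ht'⟩ := hs'
      rw [← ht'] at ht
      have := (slot hmk).injective ht
      simp only [Prod.mk.injEq] at this
      exact hxx (this.1.symm ▸ rfl)
    have keyB : ∀ (x : α), a x = pt.1 → Disjoint (Tgt (some x)) (Tgt none) := by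
      intro x hx
      rw [Finset.disjoint_left]
      intro s hs hs'
      simp only [hTgtdef, Option.elim, Finset.mem_image, Finset.mem_sdiff] at hs hs'
      obtain ⟨t, -, ht⟩ := hs
      exact hs'.2 ⟨(⟨x, hx⟩, t), Finset.mem_univ _, ht⟩
    obtain ⟨(_ | x), hy⟩ := y <;> obtain ⟨(_ | x'), hy'⟩ := y'
    · exact absurd (Subtype.ext rfl) hne
    · simp only [hfibdef, Option.elim] at hy hy'
      exact (keyB x' (hy'.trans hy.symm)).symm
    · simp only [hfibdef, Option.elim] at hy hy'
      exact keyB x (hy.trans hy'.symm)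
    · refine key x x' ?_
      rintro rfl
      exact hne (by rfl)
  have hcard : Nat.card {σ : α → Equiv.Perm (Fin n) // GoodA hmk a σ g ∧ GoodB hmk a σ pt}
      = ∏ b : α, ((∏ y : {y : Option α // fib y = b}, (Tgt y.1).card)
          * (n - Fintype.card {y : Option α // fib y = b}).factorial) := by
    rw [Nat.card_congr e1, Nat.card_pi]
    refine Finset.prod_congr rfl (fun b _ => ?_)
    exact card_perm_mem_nat ⟨fun y => point y.1, hqinj b⟩ (fun y => Tgt y.1)
      (fun y y' h => hdisj b y y' h)
  rw [hcard]
  set rc : α → ℕ := fun b => Fintype.card {x : α // a x = b} with hrcdef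
  have hrcle : ∀ b, rc b ≤ m := fun b => Fintype.card_subtype_le _
  have hTk : ∀ x : α, (Tgt (some x)).card = k := by
    intro x
    have hinj : Function.Injective (fun t : Fin k => slot hmk (x, t)) := by
      intro t t' ht
      have := (slot hmk).injective ht
      simpa using this
    simp only [hTgtdef, Option.elim]
    rw [Finset.card_image_of_injective _ hinj, Finset.card_univ, Fintype.card_fin]
  have hT0 : (Tgt none).card = n - rc pt.1 * k := by
    have hinj : Function.Injective
        (fun q : {x : α // a x = pt.1} × Fin k => slot hmk (q.1.1, q.2)) := by
      rintro ⟨⟨x, hx⟩, t⟩ ⟨⟨x', hx'⟩, t'⟩ hq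
      have := (slot hmk).injective hq
      simp only [Prod.mk.injEq] at this
      simp only [Prod.mk.injEq, Subtype.mk.injEq]
      exact ⟨this.1, this.2⟩
    simp only [hTgtdef, Option.elim]
    rw [Finset.card_sdiff_of_subset (Finset.subset_univ _), Finset.card_univ, Fintype.card_fin,
      Finset.card_image_of_injective _ hinj, Finset.card_univ, Fintype.card_prod,
      Fintype.card_fin]
  have key : ∀ b : α, n.factorial ≤
      ((∏ y : {y : Option α // fib y = b}, (Tgt y.1).card)
          * (n - Fintype.card {y : Option α // fib y = b}).factorial)
        * ((4*m)^(rc b) * (if pt.1 = b then 2 else 1)) := by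
    intro b
    by_cases hb : pt.1 = b
    · -- the fiber containing the excluded point
      have cardX : Fintype.card {y : Option α // fib y = b} = rc b + 1 := by
        rw [Fintype.card_congr (optFiberEquivEq pt.1 a b hb), Fintype.card_option]
      have prodX : (∏ y : {y : Option α // fib y = b}, (Tgt y.1).card)
          = (n - rc b * k) * k ^ (rc b) := by
        rw [Fintype.prod_equiv (optFiberEquivEq pt.1 a b hb)
          (fun y => (Tgt y.1).card)
          (fun z => Option.elim z (Tgt none).card (fun x => (Tgt (some x.1)).card))
          (by rintro ⟨(_ | x), hy⟩ <;> rfl)]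
        rw [Fintype.prod_option]
        simp only [Option.elim]
        rw [hT0, hb]
        congr 1
        rw [Finset.prod_congr rfl (fun x _ => hTk x.1), Finset.prod_const, Finset.card_univ]
      rw [cardX, prodX, if_pos hb]
      have hrb1 : rc b + 1 ≤ n := by
        have := hrcle b
        omega
      have hle1 : n ≤ 2 * (n - rc b * k) := by
        have h1 : rc b * k ≤ m * k := Nat.mul_le_mul_right k (hrcle b)
        have h2' : 2 * (m * k) ≤ n := by
          have : 2 * (m*k) = 2*m*k := by ring
          omega
        omega
      calc n.factorial ≤ n ^ (rc b + 1) * (n - (rc b + 1)).factorial :=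
            fact_le_pow_mul hrb1
        _ = (n ^ (rc b) * n) * (n - (rc b + 1)).factorial := by ring
        _ ≤ ((4*m*k) ^ (rc b) * (2 * (n - rc b * k))) * (n - (rc b + 1)).factorial := by
            apply Nat.mul_le_mul_right
            exact Nat.mul_le_mul (Nat.pow_le_pow_left h4mk _) hle1
        _ = ((n - rc b * k) * k ^ (rc b) * (n - (rc b + 1)).factorial)
              * ((4*m)^(rc b) * 2) := by
            rw [Nat.mul_pow]
            ring
    · -- a fiber not containing the excluded point
      have cardX : Fintype.card {y : Option α // fib y = b} = rc b := by
        rw [Fintype.card_congr (optFiberEquivNe pt.1 a b hb)]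
      have prodX : (∏ y : {y : Option α // fib y = b}, (Tgt y.1).card) = k ^ (rc b) := by
        rw [Fintype.prod_equiv (optFiberEquivNe pt.1 a b hb)
          (fun y => (Tgt y.1).card)
          (fun x => (Tgt (some x.1)).card)
          (by rintro ⟨(_ | x), hy⟩
              · exact absurd hy hb
              · rfl)]
        rw [Finset.prod_congr rfl (fun x _ => hTk x.1), Finset.prod_const, Finset.card_univ]
      rw [cardX, prodX, if_neg hb]
      have hrb1 : rc b ≤ n := (hrcle b).trans (by omega)
      calc n.factorial ≤ n ^ (rc b) * (n - rc b).factorial := fact_le_pow_mul hrb1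
        _ ≤ (4*m*k) ^ (rc b) * (n - rc b).factorial := by
            apply Nat.mul_le_mul_right
            exact Nat.pow_le_pow_left h4mk _
        _ = (k ^ (rc b) * (n - rc b).factorial) * ((4*m)^(rc b) * 1) := by
            rw [Nat.mul_pow]
            ring
  have hsum : ∑ b : α, rc b = m := by
    have h1 : Fintype.card (Σ b : α, {x : α // a x = b}) = ∑ b : α, rc b :=
      Fintype.card_sigma
    have h2' : Fintype.card (Σ b : α, {x : α // a x = b}) = m :=
      Fintype.card_congr (Equiv.sigmaFiberEquiv a)
    omega
  have hΩ : Fintype.card (α → Equiv.Perm (Fin n)) = (n.factorial) ^ m := by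
    rw [Fintype.card_fun, Fintype.card_perm, Fintype.card_fin]
  calc Fintype.card (α → Equiv.Perm (Fin n)) = (n.factorial) ^ m := hΩ
    _ = ∏ _b : α, n.factorial := by rw [Finset.prod_const, Finset.card_univ]
    _ ≤ ∏ b : α, (((∏ y : {y : Option α // fib y = b}, (Tgt y.1).card)
          * (n - Fintype.card {y : Option α // fib y = b}).factorial)
        * ((4*m)^(rc b) * (if pt.1 = b then 2 else 1))) :=
        Finset.prod_le_prod' (fun b _ => key b)
    _ = (∏ b : α, ((∏ y : {y : Option α // fib y = b}, (Tgt y.1).card)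
          * (n - Fintype.card {y : Option α // fib y = b}).factorial))
        * ((∏ b : α, (4*m)^(rc b)) * (∏ b : α, (if pt.1 = b then 2 else 1))) := by
        rw [Finset.prod_mul_distrib, Finset.prod_mul_distrib, Finset.prod_mul_distrib]
    _ = (∏ b : α, ((∏ y : {y : Option α // fib y = b}, (Tgt y.1).card)
          * (n - Fintype.card {y : Option α // fib y = b}).factorial))
        * (2 * (4 * Fintype.card α) ^ Fintype.card α) := by
        congr 1
        rw [Finset.prod_pow_eq_pow_sum, hsum, Finset.prod_ite_eq]
        simp only [Finset.mem_univ, if_true]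
        rw [← hm]
        ring

noncomputable def phiHom {n k : ℕ} (h : Fintype.card α * k ≤ n) (H : SimpleGraph α) (a : α → α)
    (ha : ∀ ⦃x y⦄, H.Adj x y → H.Adj (a x) (a y)) (σ : α → Equiv.Perm (Fin n)) :
    balancedBlowup H k →g balancedBlowup H n where
  toFun := phi h a σ
  map_rel' := by
    intro p q hpq
    exact ha hpq

lemma Fsub_iso {n k : ℕ} (h : Fintype.card α * k ≤ n) (H : SimpleGraph α) (a : α → α)
    (ha : ∀ ⦃x y⦄, H.Adj x y → H.Adj (a x) (a y)) (σ : α → Equiv.Perm (Fin n)) :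
    Nonempty (((⊤ : (balancedBlowup H k).Subgraph).map (phiHom h H a ha σ)).coe
      ≃g balancedBlowup H k) :=
  ⟨isoMapTop (phiHom h H a ha σ) (phi_inj h a σ)⟩

lemma verts_Fsub {n k : ℕ} (h : Fintype.card α * k ≤ n) (H : SimpleGraph α) (a : α → α)
    (ha : ∀ ⦃x y⦄, H.Adj x y → H.Adj (a x) (a y)) (σ : α → Equiv.Perm (Fin n)) :
    ((⊤ : (balancedBlowup H k).Subgraph).map (phiHom h H a ha σ)).verts
      = Set.range (phi h a σ) := by
  rw [Subgraph.map_verts]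
  simp only [Subgraph.verts_top, Set.image_univ]
  rfl

lemma adj_Fsub {n k : ℕ} (h : Fintype.card α * k ≤ n) (H : SimpleGraph α) (a : α → α)
    (ha : ∀ ⦃x y⦄, H.Adj x y → H.Adj (a x) (a y)) (σ : α → Equiv.Perm (Fin n))
    {u v : α × Fin n}
    (huv : ((⊤ : (balancedBlowup H k).Subgraph).map (phiHom h H a ha σ)).Adj u v) :
    ∃ p q : α × Fin k, H.Adj p.1 q.1 ∧ phi h a σ p = u ∧ phi h a σ q = v := by
  rw [Subgraph.map_adj] at huv
  obtain ⟨p, q, hpq, hp, hq⟩ := huv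
  exact ⟨p, q, hpq, hp, hq⟩

lemma le_Fsub {n k : ℕ} (h : Fintype.card α * k ≤ n) {H : SimpleGraph α} {a : α → α}
    (ha : ∀ ⦃x y⦄, H.Adj x y → H.Adj (a x) (a y)) {σ : α → Equiv.Perm (Fin n)}
    {B : (balancedBlowup H n).Subgraph} (g : α → α × Fin n)
    (hverts : B.verts = Set.range g)
    (hadj : ∀ u v, B.Adj u v → ∃ x y, H.Adj x y ∧ g x = u ∧ g y = v)
    (hgood : ∀ x, ∃ t, phi h a σ (x, t) = g x) :
    B ≤ (⊤ : (balancedBlowup H k).Subgraph).map (phiHom h H a ha σ) := by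
  constructor
  · intro v hv
    rw [hverts] at hv
    obtain ⟨x, rfl⟩ := hv
    obtain ⟨t, ht⟩ := hgood x
    rw [verts_Fsub]
    exact ⟨(x, t), ht⟩
  · intro u v huv
    obtain ⟨x, y, hxy, hu, hv⟩ := hadj u v huv
    obtain ⟨tx, htx⟩ := hgood x
    obtain ⟨ty, hty⟩ := hgood y
    rw [Subgraph.map_adj]
    exact ⟨(x, tx), (y, ty), hxy, htx.trans hu, hty.trans hv⟩

lemma copy_data {n : ℕ} {H : SimpleGraph α} {B : (balancedBlowup H n).Subgraph}
    (φ : B.coe ≃g H) :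
    ∃ g : α → α × Fin n, Function.Injective g ∧ B.verts = Set.range g ∧
      (∀ x y, B.Adj (g x) (g y) ↔ H.Adj x y) ∧
      (∀ u v, B.Adj u v → ∃ x y, u = g x ∧ v = g y) ∧
      (∀ ⦃x y⦄, H.Adj x y → H.Adj (g x).1 (g y).1) := by
  refine ⟨fun x => ↑(φ.symm x), ?_, ?_, ?_, ?_, ?_⟩
  · exact Subtype.val_injective.comp (φ.symm.injective)
  · apply Set.eq_of_subset_of_subset
    · intro v hv
      exact ⟨φ ⟨v, hv⟩, by simp⟩
    · intro v hv
      obtain ⟨x, hx⟩ := hv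
      rw [← hx]
      exact (φ.symm x).2
  · intro x y
    rw [← Subgraph.coe_adj]
    exact φ.symm.map_adj_iff
  · intro u v huv
    have hu : u ∈ B.verts := B.edge_vert huv
    have hv : v ∈ B.verts := B.edge_vert huv.symm
    exact ⟨φ ⟨u, hu⟩, φ ⟨v, hv⟩, by simp, by simp⟩
  · intro x y hxy
    have hB : B.Adj ↑(φ.symm x) ↑(φ.symm y) := by
      rw [← Subgraph.coe_adj]
      exact φ.symm.map_adj_iff.mpr hxy
    exact Subgraph.adj_sub B hB

lemma exists_not_mem_range {n : ℕ} [Nonempty α] (hn : 2 ≤ n) (g : α → α × Fin n) :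
    ∃ pt : α × Fin n, pt ∉ Set.range g := by
  by_contra hc
  push_neg at hc
  have hsurj : Function.Surjective g := fun pt => hc pt
  have := Fintype.card_le_of_surjective g hsurj
  rw [Fintype.card_prod, Fintype.card_fin] at this
  have hm1 : 1 ≤ Fintype.card α := Fintype.card_pos
  nlinarith

end BlowupSep

namespace BlowupSep

lemma main_family {α : Type} [Fintype α] [Nonempty α] (H : SimpleGraph α) (n L : ℕ)
    (h2 : 2 * Fintype.card α ≤ n)
    (hL : ((Fintype.card α * n : ℕ) ^ (Fintype.card α + 1) : ℝ) *
      (((2 * (4 * Fintype.card α) ^ Fintype.card α : ℕ) - 1 : ℝ)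
        / (2 * (4 * Fintype.card α) ^ Fintype.card α : ℕ)) ^ L < 1) :
    ∃ F : Set (balancedBlowup H n).Subgraph,
      F.Finite ∧
      (∀ A ∈ F, ∃ k : ℕ, 1 ≤ k ∧ Nonempty (A.coe ≃g balancedBlowup H k)) ∧
      StronglySeparatesCopies H (balancedBlowup H n) F ∧
      F.ncard ≤ (Fintype.card α ^ Fintype.card α) * L := by
  classical
  set m := Fintype.card α with hm
  have hm1 : 1 ≤ m := Fintype.card_pos
  have hn2 : 2 ≤ n := le_trans (by omega) h2
  set k : ℕ := n / (2 * m) with hk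
  have hAiv : 2*m*k + n % (2 * m) = n := by rw [hk]; exact Nat.div_add_mod n (2*m)
  have hmk : m * k ≤ n := by
    have h' : 2*m*k = 2*(m*k) := by ring
    omega
  have hk1 : 1 ≤ k := by
    rw [hk]
    exact Nat.one_le_div_iff (by omega) |>.mpr h2
  set D : ℕ := 2 * (4 * m) ^ m with hD
  have hDpos : 0 < D := by positivity
  -- edge homomorphisms
  set EH := {a : α → α // ∀ ⦃x y⦄, H.Adj x y → H.Adj (a x) (a y)} with hEH
  -- requirements
  set S : EH → Finset ((α → α × Fin n) × (α × Fin n)) := fun a =>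
    Finset.univ.filter (fun r => Function.Injective r.1 ∧ (∀ x, (r.1 x).1 = a.1 x)
      ∧ r.2 ∉ Set.range r.1) with hS
  set Good : EH → (α → Equiv.Perm (Fin n)) → ((α → α × Fin n) × (α × Fin n)) → Prop :=
    fun a σ r => GoodA hmk a.1 σ r.1 ∧ GoodB hmk a.1 σ r.2 with hGood
  -- density
  have hdens : ∀ a : EH, ∀ r ∈ S a,
      Fintype.card (α → Equiv.Perm (Fin n)) ≤
        (Finset.univ.filter (fun ω => Good a ω r)).card * D := by
    intro a r hr
    rw [hS, Finset.mem_filter] at hr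
    obtain ⟨-, hinj, hfst, hout⟩ := hr
    have := good_density hmk h2 hk a.1 r.1 r.2 hinj hfst hout
    have hcardeq : Nat.card {σ : α → Equiv.Perm (Fin n) //
        GoodA hmk a.1 σ r.1 ∧ GoodB hmk a.1 σ r.2}
          = (Finset.univ.filter (fun ω => Good a ω r)).card := by
      rw [Nat.card_eq_fintype_card]
      have hiff2 : ∀ σ, (GoodA hmk a.1 σ r.1 ∧ GoodB hmk a.1 σ r.2) ↔ Good a σ r :=
        fun σ => by rw [hGood]
      rw [Fintype.card_congr (Equiv.subtypeEquivRight hiff2), Fintype.card_subtype]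
    rw [hcardeq] at this
    exact this
  -- greedy covers
  have hcover : ∀ a : EH, ∃ T : Finset (α → Equiv.Perm (Fin n)), T.card ≤ L ∧
      ∀ r ∈ S a, ∃ σ ∈ T, Good a σ r := by
    intro a
    obtain ⟨T, hTcard, hTbound⟩ := greedy_cover (Good a) (S a) D hDpos (hdens a) L
    refine ⟨T, hTcard, ?_⟩
    have hScard : (S a).card ≤ (m * n) ^ (m + 1) := by
      calc (S a).card ≤ Fintype.card ((α → α × Fin n) × (α × Fin n)) := by
            rw [← Finset.card_univ]
            exact Finset.card_le_card (Finset.filter_subset _ _)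
        _ = (m * n) ^ (m+1) := by
            rw [Fintype.card_prod, Fintype.card_fun, Fintype.card_prod, Fintype.card_fin,
              pow_succ]
    have hzero : ((S a).filter (fun r => ∀ σ ∈ T, ¬ Good a σ r)).card = 0 := by
      by_contra hcon
      have hge : (1:ℝ) ≤ ((S a).filter (fun r => ∀ σ ∈ T, ¬ Good a σ r)).card := by
        have : 1 ≤ ((S a).filter (fun r => ∀ σ ∈ T, ¬ Good a σ r)).card := by omega
        exact_mod_cast this
      have hchain : (1:ℝ) ≤ ((m*n)^(m+1) : ℕ) * (((D:ℝ) - 1)/D) ^ L := by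
        calc (1:ℝ) ≤ ((S a).filter (fun r => ∀ σ ∈ T, ¬ Good a σ r)).card := hge
          _ ≤ (S a).card * (((D:ℝ) - 1)/D) ^ L := hTbound
          _ ≤ ((m*n)^(m+1) : ℕ) * (((D:ℝ) - 1)/D) ^ L := by
              apply mul_le_mul_of_nonneg_right
              · exact_mod_cast hScard
              · apply pow_nonneg
                apply div_nonneg _ (by positivity)
                have : (1:ℝ) ≤ D := by exact_mod_cast hDpos
                linarith
      have : ((m*n)^(m+1) : ℝ) * (((D:ℝ) - 1)/D) ^ L < 1 := by
        have := hL
        push_cast at this ⊢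
        convert this using 3
      push_cast at hchain
      linarith
    intro r hr
    rw [Finset.card_eq_zero] at hzero
    by_contra hcon
    push_neg at hcon
    have : r ∈ (S a).filter (fun r => ∀ σ ∈ T, ¬ Good a σ r) :=
      Finset.mem_filter.mpr ⟨hr, hcon⟩
    rw [hzero] at this
    exact absurd this (Finset.notMem_empty r)
  choose T hTcard hTcov using hcover
  -- the family
  set Ffin : Finset ((balancedBlowup H n).Subgraph) :=
    Finset.univ.biUnion (fun a : EH => (T a).image
      (fun σ => (⊤ : (balancedBlowup H k).Subgraph).map (phiHom hmk H a.1 a.2 σ)))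
    with hFfin
  refine ⟨↑Ffin, Ffin.finite_toSet, ?_, ?_, ?_⟩
  · -- every member is a balanced blowup
    intro A hA
    rw [Finset.mem_coe, hFfin, Finset.mem_biUnion] at hA
    obtain ⟨a, -, hA⟩ := hA
    rw [Finset.mem_image] at hA
    obtain ⟨σ, -, rfl⟩ := hA
    exact ⟨k, hk1, Fsub_iso hmk H a.1 a.2 σ⟩
  · -- separation
    intro H₁ H₂ hφ₁ hφ₂ hne
    have key : ∀ B₁ B₂ : (balancedBlowup H n).Subgraph,
        (B₁.coe ≃g H) → (B₂.coe ≃g H) → B₁ ≠ B₂ →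
        ∃ F₁ ∈ Ffin, B₁ ≤ F₁ ∧ ¬ B₂ ≤ F₁ := by
      intro B₁ B₂ φ₁ φ₂ hBne
      obtain ⟨g, hginj, hgverts, hgiff, hgmem, hghom⟩ := copy_data φ₁
      set a : EH := ⟨fun x => (g x).1, fun x y hxy => hghom hxy⟩ with ha
      obtain ⟨pt, hptr, hptv⟩ : ∃ pt, pt ∉ Set.range g ∧
          (¬ B₂.verts ⊆ Set.range g → pt ∈ B₂.verts) := by
        by_cases hsub : B₂.verts ⊆ Set.range g
        · obtain ⟨pt, hpt⟩ := exists_not_mem_range hn2 g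
          exact ⟨pt, hpt, fun hcon => absurd hsub hcon⟩
        · obtain ⟨pt, hptv, hptr⟩ := Set.not_subset.mp hsub
          exact ⟨pt, hptr, fun _ => hptv⟩
      have hrS : (g, pt) ∈ S a := by
        rw [hS, Finset.mem_filter]
        exact ⟨Finset.mem_univ _, hginj, fun x => rfl, hptr⟩
      obtain ⟨σ, hσT, hGoodσ⟩ := hTcov a (g, pt) hrS
      set F₁ := (⊤ : (balancedBlowup H k).Subgraph).map (phiHom hmk H a.1 a.2 σ) with hF₁
      have hF₁mem : F₁ ∈ Ffin := by
        rw [hFfin, Finset.mem_biUnion]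
        exact ⟨a, Finset.mem_univ _, Finset.mem_image.mpr ⟨σ, hσT, rfl⟩⟩
      have hgood : ∀ x, ∃ t, phi hmk a.1 σ (x, t) = g x :=
        goodA_mem (fun x => rfl) hGoodσ.1
      have hB₁le : B₁ ≤ F₁ := by
        apply le_Fsub hmk a.2 g hgverts _ hgood
        intro u v huv
        obtain ⟨x, y, hu, hv⟩ := hgmem u v huv
        rw [hu, hv] at huv
        exact ⟨x, y, (hgiff x y).mp huv, hu.symm, hv.symm⟩
      refine ⟨F₁, hF₁mem, hB₁le, ?_⟩
      intro hB₂le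
      by_cases hsub : B₂.verts ⊆ Set.range g
      · -- same vertex set: show B₂ = B₁
        apply hBne
        symm
        apply copy_eq_of_le φ₁ φ₂
        constructor
        · rw [hgverts]; exact hsub
        · intro u v huv
          obtain ⟨x, hx⟩ := hsub (B₂.edge_vert huv)
          obtain ⟨y, hy⟩ := hsub (B₂.edge_vert huv.symm)
          have hF₁adj : F₁.Adj u v := hB₂le.2 huv
          obtain ⟨p, q, hpq, hpu, hqv⟩ := adj_Fsub hmk H a.1 a.2 σ hF₁adj
          obtain ⟨tx, htx⟩ := hgood x
          obtain ⟨ty, hty⟩ := hgood y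
          have hpx : p = (x, tx) := phi_inj hmk a.1 σ (by rw [hpu, htx, hx])
          have hqy : q = (y, ty) := phi_inj hmk a.1 σ (by rw [hqv, hty, hy])
          rw [← hx, ← hy]
          apply (hgiff x y).mpr
          rw [hpx, hqy] at hpq
          exact hpq
      · -- pt is a vertex of B₂ outside F₁
        have hptB₂ : pt ∈ B₂.verts := hptv hsub
        have : pt ∈ F₁.verts := hB₂le.1 hptB₂
        rw [hF₁, verts_Fsub] at this
        exact goodB_not_mem hGoodσ.2 this
    obtain ⟨F₁, hF₁mem, h1, h2'⟩ := key H₁ H₂ hφ₁.some hφ₂.some hne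
    obtain ⟨F₂, hF₂mem, h3, h4⟩ := key H₂ H₁ hφ₂.some hφ₁.some hne.symm
    exact ⟨F₁, hF₁mem, F₂, hF₂mem, h1, h2', h3, h4⟩
  · -- cardinality
    rw [Set.ncard_coe_finset]
    calc Ffin.card ≤ ∑ a : EH, ((T a).image
          (fun σ => (⊤ : (balancedBlowup H k).Subgraph).map (phiHom hmk H a.1 a.2 σ))).card :=
          Finset.card_biUnion_le
      _ ≤ ∑ a : EH, L := by
          apply Finset.sum_le_sum
          intro a _
          exact (Finset.card_image_le).trans (hTcard a)
      _ = Fintype.card EH * L := by rw [Finset.sum_const, smul_eq_mul, Finset.card_univ]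
      _ ≤ m ^ m * L := by
          apply Nat.mul_le_mul_right
          calc Fintype.card EH ≤ Fintype.card (α → α) := Fintype.card_subtype_le _
            _ = m ^ m := by rw [Fintype.card_fun]

end BlowupSep

namespace BlowupSep

lemma small_family {α : Type} [Fintype α] (H : SimpleGraph α) (n : ℕ) :
    ∃ F : Set (balancedBlowup H n).Subgraph,
      F.Finite ∧
      (∀ A ∈ F, ∃ k : ℕ, 1 ≤ k ∧ Nonempty (A.coe ≃g balancedBlowup H k)) ∧
      StronglySeparatesCopies H (balancedBlowup H n) F ∧
      F.ncard ≤ Nat.card ((balancedBlowup H n).Subgraph) := by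
  classical
  haveI : Finite ((balancedBlowup H n).Subgraph) := finite_subgraph _
  refine ⟨{A | Nonempty (A.coe ≃g H)}, Set.toFinite _, ?_, ?_, ?_⟩
  · rintro A ⟨φ⟩
    exact ⟨1, le_refl 1, ⟨φ.trans (isoBlowupOne H)⟩⟩
  · intro H₁ H₂ h1 h2 hne
    refine ⟨H₁, h1, H₂, h2, le_refl _, ?_, le_refl _, ?_⟩
    · intro hle
      exact hne (copy_eq_of_le h1.some h2.some hle).symm
    · intro hle
      exact hne (copy_eq_of_le h2.some h1.some hle)
  · calc ({A : (balancedBlowup H n).Subgraph | Nonempty (A.coe ≃g H)}).ncard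
        ≤ (Set.univ : Set ((balancedBlowup H n).Subgraph)).ncard :=
          Set.ncard_le_ncard (Set.subset_univ _) Set.finite_univ
      _ = Nat.card ((balancedBlowup H n).Subgraph) := Set.ncard_univ _

end BlowupSep

/-- For every graph `H` with at least one edge there is a constant `C > 0` such that for
every `n ≥ 2`, the `n`-balanced blowup of `H` admits a family of at most `C·log n`
subgraphs, each isomorphic to a balanced blowup of `H`, that strongly separates the
copies of `H` in it. -/
theorem blowup_copy_separating_system
    (α : Type) [Fintype α] (H : SimpleGraph α) (hH : H.edgeSet.Nonempty) :
    ∃ C : ℝ, 0 < C ∧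
      ∀ n : ℕ, 2 ≤ n →
        ∃ F : Set (balancedBlowup H n).Subgraph,
          F.Finite ∧
          (∀ A ∈ F, ∃ k : ℕ, 1 ≤ k ∧ Nonempty (A.coe ≃g balancedBlowup H k)) ∧
          StronglySeparatesCopies H (balancedBlowup H n) F ∧
          (F.ncard : ℝ) ≤ C * Real.log n := by
  classical
  obtain ⟨e, he⟩ := hH
  obtain ⟨u, v, huv⟩ : ∃ u v, H.Adj u v := by
    induction e with
    | h u v => exact ⟨u, v, he⟩
  haveI : Nonempty α := ⟨u⟩
  have hm2 : 2 ≤ Fintype.card α := by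
    rw [Nat.succ_le_iff]
    exact Fintype.one_lt_card_iff_nontrivial.mpr ⟨⟨u, v, H.ne_of_adj huv⟩⟩
  set m := Fintype.card α with hm
  have hm1 : 1 ≤ m := by omega
  set D : ℕ := 2 * (4 * m) ^ m with hD
  have hDpos : 0 < D := by positivity
  have hD1 : (1:ℝ) ≤ (D:ℝ) := by exact_mod_cast hDpos
  have hDR : (0:ℝ) < (D:ℝ) := by exact_mod_cast hDpos
  set C0 : ℕ := (Finset.range (2*m)).sup
    (fun n' => Nat.card ((balancedBlowup H n').Subgraph)) with hC0
  have hlog2 : 0 < Real.log 2 := Real.log_pos (by norm_num)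
  set C : ℝ := (m:ℝ)^m * ((D:ℝ) * ((m:ℝ)+1)^2 + 2/Real.log 2)
    + (C0:ℝ)/Real.log 2 + 1 with hC
  have hCpos : 0 < C := by
    rw [hC]
    have h1 : (0:ℝ) ≤ (m:ℝ)^m * ((D:ℝ) * ((m:ℝ)+1)^2 + 2/Real.log 2) := by
      apply mul_nonneg (by positivity)
      have : (0:ℝ) ≤ 2/Real.log 2 := by positivity
      positivity
    have h2 : (0:ℝ) ≤ (C0:ℝ)/Real.log 2 := by positivity
    linarith
  refine ⟨C, hCpos, ?_⟩
  intro n hn2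
  have hn0 : (0:ℝ) < (n:ℝ) := by exact_mod_cast Nat.lt_of_lt_of_le (by norm_num) hn2
  have hlogn : Real.log 2 ≤ Real.log n := by
    apply Real.log_le_log (by norm_num)
    exact_mod_cast hn2
  have hlognpos : 0 < Real.log n := lt_of_lt_of_le hlog2 hlogn
  by_cases hcase : n < 2*m
  · -- small n regime
    obtain ⟨F, h1, h2, h3, h4⟩ := BlowupSep.small_family H n
    refine ⟨F, h1, h2, h3, ?_⟩
    have hC0le : Nat.card ((balancedBlowup H n).Subgraph) ≤ C0 :=
      Finset.le_sup (f := fun n' => Nat.card ((balancedBlowup H n').Subgraph))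
        (Finset.mem_range.mpr hcase)
    have hF : (F.ncard : ℝ) ≤ (C0 : ℝ) := by exact_mod_cast h4.trans hC0le
    calc (F.ncard : ℝ) ≤ (C0 : ℝ) := hF
      _ = ((C0:ℝ)/Real.log 2) * Real.log 2 := by field_simp
      _ ≤ ((C0:ℝ)/Real.log 2) * Real.log n := by
          apply mul_le_mul_of_nonneg_left hlogn (by positivity)
      _ ≤ C * Real.log n := by
          apply mul_le_mul_of_nonneg_right _ hlognpos.le
          rw [hC]
          have h1' : (0:ℝ) ≤ (m:ℝ)^m * ((D:ℝ) * ((m:ℝ)+1)^2 + 2/Real.log 2) := by positivity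
          linarith
  · -- main regime
    push_neg at hcase
    set y : ℝ := (D:ℝ) * (((m:ℝ)+1)^2 * Real.log n) with hy
    have hy0 : 0 ≤ y := by positivity
    set L : ℕ := ⌈y⌉₊ + 1 with hLdef
    have hLge : y + 1 ≤ (L:ℝ) := by
      rw [hLdef]
      push_cast
      have := Nat.le_ceil y
      linarith
    have hLle : (L:ℝ) ≤ y + 2 := by
      rw [hLdef]
      push_cast
      have := Nat.ceil_lt_add_one hy0
      linarith
    -- the smallness hypothesis for the greedy covering
    have hmn0 : (0:ℝ) < ((m * n : ℕ) : ℝ) := by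
      have : 1 ≤ m * n := Nat.one_le_iff_ne_zero.mpr (Nat.mul_ne_zero (by omega) (by omega))
      exact_mod_cast Nat.lt_of_lt_of_le (by norm_num) this
    have hlogmn : Real.log ((m*n : ℕ) : ℝ) ≤ ((m:ℝ)+1) * Real.log n := by
      have hmlen : (m:ℝ) ≤ (n:ℝ)^m := by
        calc (m:ℝ) ≤ 2^m := by exact_mod_cast (Nat.lt_two_pow_self (n := m)).le
          _ ≤ (n:ℝ)^m := by
              apply pow_le_pow_left₀ (by norm_num)
              exact_mod_cast hn2
      have hmn : ((m*n:ℕ):ℝ) ≤ (n:ℝ)^(m+1) := by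
        push_cast
        calc (m:ℝ)*(n:ℝ) ≤ (n:ℝ)^m * n := mul_le_mul_of_nonneg_right hmlen hn0.le
          _ = (n:ℝ)^(m+1) := (pow_succ _ _).symm
      calc Real.log ((m*n:ℕ):ℝ) ≤ Real.log ((n:ℝ)^(m+1)) := Real.log_le_log hmn0 hmn
        _ = ((m:ℝ)+1) * Real.log n := by
            rw [Real.log_pow]
            push_cast
            ring
    have hL : (((m * n : ℕ) ^ (m + 1) : ℕ) : ℝ) *
        (((D:ℕ) - 1 : ℝ) / ((D:ℕ) : ℝ)) ^ L < 1 := by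
      have hbase0 : (0:ℝ) ≤ ((D:ℝ) - 1)/(D:ℝ) := by
        apply div_nonneg _ hDR.le
        linarith
      have hbase : ((D:ℝ) - 1)/(D:ℝ) ≤ Real.exp (-(1/(D:ℝ))) := by
        have h := Real.add_one_le_exp (-(1/(D:ℝ)))
        have hEq : ((D:ℝ)-1)/(D:ℝ) = -(1/(D:ℝ)) + 1 := by field_simp; ring
        rw [hEq]
        exact h
      have hpow : (((D:ℝ) - 1)/(D:ℝ))^L ≤ Real.exp (-((L:ℝ)/(D:ℝ))) := by
        calc (((D:ℝ) - 1)/(D:ℝ))^L ≤ (Real.exp (-(1/(D:ℝ))))^L :=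
              pow_le_pow_left₀ hbase0 hbase L
          _ = Real.exp ((L:ℝ) * (-(1/(D:ℝ)))) := (Real.exp_nat_mul _ L).symm
          _ = Real.exp (-((L:ℝ)/(D:ℝ))) := by ring_nf
      have hmnpow : (0:ℝ) < (((m*n:ℕ)^(m+1) : ℕ) : ℝ) := by
        have : 1 ≤ (m*n)^(m+1) := Nat.one_le_iff_ne_zero.mpr
          (pow_ne_zero _ (Nat.mul_ne_zero (by omega) (by omega)))
        exact_mod_cast Nat.lt_of_lt_of_le (by norm_num) this
      have hkey : (((m*n:ℕ)^(m+1) : ℕ) : ℝ) < Real.exp ((L:ℝ)/(D:ℝ)) := by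
        rw [← Real.exp_log hmnpow]
        apply Real.exp_lt_exp.mpr
        have hlogcast : Real.log ((((m*n:ℕ)^(m+1) : ℕ)) : ℝ)
            = ((m:ℝ)+1) * Real.log ((m*n:ℕ):ℝ) := by
          push_cast
          rw [Real.log_pow]
          push_cast
          ring
        rw [hlogcast]
        have h1 : ((m:ℝ)+1) * Real.log ((m*n:ℕ):ℝ) ≤ ((m:ℝ)+1)^2 * Real.log n := by
          calc ((m:ℝ)+1) * Real.log ((m*n:ℕ):ℝ) ≤ ((m:ℝ)+1) * (((m:ℝ)+1) * Real.log n) := by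
                apply mul_le_mul_of_nonneg_left hlogmn (by positivity)
            _ = ((m:ℝ)+1)^2 * Real.log n := by ring
        have h2 : ((m:ℝ)+1)^2 * Real.log n < (L:ℝ)/(D:ℝ) := by
          rw [lt_div_iff₀ hDR]
          have : ((m:ℝ)+1)^2 * Real.log n * (D:ℝ) = y := by rw [hy]; ring
          rw [this]
          linarith
        linarith
      calc (((m*n:ℕ)^(m+1) : ℕ) : ℝ) * (((D:ℝ) - 1)/(D:ℝ))^L
          ≤ (((m*n:ℕ)^(m+1) : ℕ) : ℝ) * Real.exp (-((L:ℝ)/(D:ℝ))) := by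
            apply mul_le_mul_of_nonneg_left hpow hmnpow.le
        _ < Real.exp ((L:ℝ)/(D:ℝ)) * Real.exp (-((L:ℝ)/(D:ℝ))) := by
            apply mul_lt_mul_of_pos_right hkey (Real.exp_pos _)
        _ = 1 := by rw [← Real.exp_add]; ring_nf; exact Real.exp_zero
    obtain ⟨F, h1, h2, h3, h4⟩ := BlowupSep.main_family H n L hcase (by
      convert hL using 2 <;> push_cast <;> ring)
    refine ⟨F, h1, h2, h3, ?_⟩
    have h2log : (2:ℝ) ≤ (2/Real.log 2) * Real.log n := by
      rw [div_mul_eq_mul_div, le_div_iff₀ hlog2]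
      nlinarith
    calc (F.ncard:ℝ) ≤ ((m^m * L : ℕ) : ℝ) := by exact_mod_cast h4
      _ = (m:ℝ)^m * (L:ℝ) := by push_cast; ring
      _ ≤ (m:ℝ)^m * (y + 2) := by
          apply mul_le_mul_of_nonneg_left hLle (by positivity)
      _ = (m:ℝ)^m * ((D:ℝ)*((m:ℝ)+1)^2 * Real.log n + 2) := by rw [hy]; ring
      _ ≤ (m:ℝ)^m * ((D:ℝ)*((m:ℝ)+1)^2 * Real.log n + (2/Real.log 2) * Real.log n) := by
          apply mul_le_mul_of_nonneg_left _ (by positivity)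
          linarith
      _ = ((m:ℝ)^m * ((D:ℝ)*((m:ℝ)+1)^2 + 2/Real.log 2)) * Real.log n := by ring
      _ ≤ C * Real.log n := by
          apply mul_le_mul_of_nonneg_right _ hlognpos.le
          rw [hC]
          have h2' : (0:ℝ) ≤ (C0:ℝ)/Real.log 2 := by positivity
          linarith
end

section
/- For every ε ∈ (0,1) there exist a constant c > 0 and n₀ such that for every n ≥ n₀, the edge set of every graph G on n vertices can be partitioned into a collection of at most (n/(c·log n))² pairwise edge-disjoint subgraphs of G each isomorphic to the balanced complete bipartite graph K_{m,m} with m = ⌈c·log n⌉, together with a set of at most ε·n² remaining single edges. -/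
open SimpleGraph Finset

section Aux

variable {V : Type} [Fintype V] [DecidableEq V]

/-- The complete bipartite subgraph of `G` spanned by disjoint finsets `S`, `T`
with all cross edges present in `G`. -/
def bipSubgraph (G : SimpleGraph V) (S T : Finset V)
    (hST : ∀ s ∈ S, ∀ t ∈ T, G.Adj s t) : G.Subgraph where
  verts := ↑S ∪ ↑T
  Adj x y := (x ∈ S ∧ y ∈ T) ∨ (x ∈ T ∧ y ∈ S)
  adj_sub := by
    rintro x y (⟨hx, hy⟩ | ⟨hx, hy⟩)
    · exact hST x hx y hy
    · exact (hST y hy x hx).symm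
  edge_vert := by rintro x y (⟨hx, _⟩ | ⟨hx, _⟩) <;> simp [hx]
  symm := ⟨by rintro x y (⟨hx, hy⟩ | ⟨hx, hy⟩) <;> [right; left] <;> exact ⟨hy, hx⟩⟩

theorem bipSubgraph_edgeSet (G : SimpleGraph V) (S T : Finset V)
    (hST : ∀ s ∈ S, ∀ t ∈ T, G.Adj s t) :
    (bipSubgraph G S T hST).edgeSet = (fun p : V × V => s(p.1, p.2)) '' (↑S ×ˢ ↑T) := by
  ext e
  induction e with
  | h x y =>
    simp only [Subgraph.mem_edgeSet, bipSubgraph, Set.mem_image, Set.mem_prod]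
    constructor
    · rintro (⟨hx, hy⟩ | ⟨hx, hy⟩)
      · exact ⟨(x, y), ⟨hx, hy⟩, rfl⟩
      · exact ⟨(y, x), ⟨hy, hx⟩, Sym2.eq_swap⟩
    · rintro ⟨⟨a, b⟩, ⟨ha, hb⟩, he⟩
      rw [Sym2.eq_iff] at he
      rcases he with ⟨rfl, rfl⟩ | ⟨rfl, rfl⟩
      · exact Or.inl ⟨ha, hb⟩
      · exact Or.inr ⟨hb, ha⟩

theorem bipSubgraph_edgeSet_ncard (G : SimpleGraph V) (S T : Finset V) (hd : Disjoint S T)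
    (hST : ∀ s ∈ S, ∀ t ∈ T, G.Adj s t) :
    (bipSubgraph G S T hST).edgeSet.ncard = S.card * T.card := by
  rw [bipSubgraph_edgeSet]
  rw [Set.ncard_image_of_injOn, ← Finset.coe_product, Set.ncard_coe_finset, Finset.card_product]
  rintro ⟨a, b⟩ ⟨ha, hb⟩ ⟨a', b'⟩ ⟨ha', hb'⟩ he
  simp only [Sym2.eq_iff] at he
  rcases he with ⟨rfl, rfl⟩ | ⟨rfl, rfl⟩
  · rfl
  · exact absurd ha (Finset.disjoint_right.mp hd hb')

theorem bipSubgraph_iso (G : SimpleGraph V) (S T : Finset V) (hd : Disjoint S T)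
    (hST : ∀ s ∈ S, ∀ t ∈ T, G.Adj s t) {m : ℕ} (hS : S.card = m) (hT : T.card = m) :
    Nonempty ((bipSubgraph G S T hST).coe ≃g completeBipartiteGraph (Fin m) (Fin m)) := by
  classical
  have eS : (↥S) ≃ Fin m := S.equivFinOfCardEq hS
  have eT : (↥T) ≃ Fin m := T.equivFinOfCardEq hT
  set f : Fin m ⊕ Fin m → ((↑S ∪ ↑T : Set V)) :=
    Sum.elim (fun i => ⟨(eS.symm i : V), Or.inl (eS.symm i).2⟩)
      (fun i => ⟨(eT.symm i : V), Or.inr (eT.symm i).2⟩) with hf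
  have hbij : Function.Bijective f := by
    constructor
    · rintro (i | i) (j | j) h <;> simp only [hf, Sum.elim_inl, Sum.elim_inr, Subtype.mk.injEq] at h <;>
        have h := congrArg Subtype.val h <;> dsimp only at h
      · have : i = j := by simpa using congrArg eS (Subtype.ext h)
        rw [this]
      · have h1 : (eT.symm j : V) ∈ S := h ▸ (eS.symm i).2
        exact absurd h1 (Finset.disjoint_right.mp hd (eT.symm j).2)
      · have h1 : (eS.symm j : V) ∈ T := h ▸ (eT.symm i).2
        exact absurd h1 (Finset.disjoint_left.mp hd (eS.symm j).2)
      · have : i = j := by simpa using congrArg eT (Subtype.ext h)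
        rw [this]
    · rintro ⟨x, hx | hx⟩
      · exact ⟨Sum.inl (eS ⟨x, hx⟩), by simp [hf]⟩
      · exact ⟨Sum.inr (eT ⟨x, hx⟩), by simp [hf]⟩
  set e := Equiv.ofBijective f hbij
  refine ⟨(⟨e, ?_⟩ : completeBipartiteGraph (Fin m) (Fin m) ≃g (bipSubgraph G S T hST).coe).symm⟩
  intro u v
  have hmem : ∀ i : Fin m, ((f (Sum.inl i) : V) ∈ S) ∧ ((f (Sum.inr i) : V) ∈ T) := by
    intro i; exact ⟨(eS.symm i).2, (eT.symm i).2⟩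
  have hnotT : ∀ i : Fin m, ¬ ((f (Sum.inl i) : V) ∈ T) :=
    fun i => Finset.disjoint_left.mp hd (hmem i).1
  have hnotS : ∀ i : Fin m, ¬ ((f (Sum.inr i) : V) ∈ S) :=
    fun i => Finset.disjoint_right.mp hd (hmem i).2
  show (bipSubgraph G S T hST).Adj (f u) (f v) ↔ _
  cases u with
  | inl i => cases v with
    | inl j =>
      simp only [bipSubgraph, completeBipartiteGraph]
      constructor
      · rintro (⟨h1, h2⟩ | ⟨h1, h2⟩)
        · exact absurd h2 (hnotT j)
        · exact absurd h1 (hnotT i)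
      · rintro (⟨h1, h2⟩ | ⟨h1, h2⟩) <;> simp_all
    | inr j =>
      simp only [bipSubgraph, completeBipartiteGraph]
      constructor
      · intro _; left; simp
      · intro _; exact Or.inl ⟨(hmem i).1, (hmem j).2⟩
  | inr i => cases v with
    | inl j =>
      simp only [bipSubgraph, completeBipartiteGraph]
      constructor
      · intro _; right; simp
      · intro _; exact Or.inr ⟨(hmem i).2, (hmem j).1⟩
    | inr j =>
      simp only [bipSubgraph, completeBipartiteGraph]
      constructor
      · rintro (⟨h1, h2⟩ | ⟨h1, h2⟩)
        · exact absurd h1 (hnotS i)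
        · exact absurd h2 (hnotS j)
      · rintro (⟨h1, h2⟩ | ⟨h1, h2⟩) <;> simp_all

end Aux

theorem kst_step (ε : ℝ) (hε : 0 < ε) {V : Type} [Fintype V] [DecidableEq V]
    (H : SimpleGraph V) [DecidableRel H.Adj] (m : ℕ) (hm : 1 ≤ m)
    (hmε : (m : ℝ) ≤ ε * (Fintype.card V) / 2)
    (hmain : (m : ℝ) * (Fintype.card V : ℝ) ^ m ≤ (ε * (Fintype.card V) / 2) ^ (m + 1))
    (hE : ε * (Fintype.card V : ℝ) ^ 2 ≤ H.edgeFinset.card) :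
    ∃ S T : Finset V, Disjoint S T ∧ S.card = m ∧ T.card = m ∧
      ∀ s ∈ S, ∀ t ∈ T, H.Adj s t := by
  classical
  set n := Fintype.card V with hn
  have hm1R : (1:ℝ) ≤ m := by exact_mod_cast hm
  have hn0R : (0:ℝ) < n := by
    rcases Nat.eq_zero_or_pos n with h | h
    · rw [h] at hmε; push_cast at hmε; nlinarith
    · exact_mod_cast h
  set D := ⌈ε * n⌉₊ with hD
  have hεn : (0:ℝ) < ε * n := by positivity
  have hD1 : 1 ≤ D := Nat.one_le_ceil_iff.mpr hεn
  have hDεn : ε * n ≤ (D:ℝ) := Nat.le_ceil _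
  set W := Finset.univ.filter (fun v => D ≤ H.degree v) with hW
  have hdeg : ∀ v : V, (H.degree v : ℝ) ≤ n := fun v => by
    exact_mod_cast (H.degree_lt_card_verts v).le
  -- sum of degrees over W is at least ε n²
  have hsum : ∑ v, (H.degree v : ℝ) = 2 * H.edgeFinset.card := by
    exact_mod_cast congrArg (Nat.cast : ℕ → ℝ) H.sum_degrees_eq_twice_card_edges
  have hsplit : ∑ v, (H.degree v : ℝ)
      = ∑ v ∈ W, (H.degree v : ℝ) + ∑ v ∈ univ.filter (fun v => ¬ D ≤ H.degree v),
        (H.degree v : ℝ) := (Finset.sum_filter_add_sum_filter_not univ _ _).symm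
  have hWc : ∑ v ∈ univ.filter (fun v => ¬ D ≤ H.degree v), (H.degree v : ℝ) ≤ n * (ε * n) := by
    have hDR : ((D:ℝ) - 1) ≤ ε * n := by
      have := Nat.ceil_lt_add_one hεn.le
      rw [← hD] at this
      linarith
    calc ∑ v ∈ univ.filter (fun v => ¬ D ≤ H.degree v), (H.degree v : ℝ)
        ≤ ∑ v ∈ univ.filter (fun v => ¬ D ≤ H.degree v), ((D:ℝ) - 1) := by
          apply Finset.sum_le_sum
          intro v hv
          simp only [Finset.mem_filter, not_le] at hv
          have : (H.degree v : ℝ) ≤ (D:ℝ) - 1 := by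
            have : H.degree v + 1 ≤ D := hv.2
            have := (Nat.cast_le (α := ℝ)).mpr this
            push_cast at this
            linarith
          exact this
      _ = (univ.filter (fun v => ¬ D ≤ H.degree v)).card * ((D:ℝ) - 1) := by
          rw [Finset.sum_const, nsmul_eq_mul]
      _ ≤ n * (ε * n) := by
          have h1 : ((univ.filter (fun v => ¬ D ≤ H.degree v)).card : ℝ) ≤ n := by
            exact_mod_cast Finset.card_le_univ _
          have h2 : (0:ℝ) ≤ (D:ℝ) - 1 := by
            have : (1:ℝ) ≤ D := by exact_mod_cast hD1
            linarith
          nlinarith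
  have hWsum : ε * (n:ℝ)^2 ≤ ∑ v ∈ W, (H.degree v : ℝ) := by
    have : 2 * (ε * (n:ℝ)^2) ≤ 2 * (H.edgeFinset.card : ℝ) := by linarith
    nlinarith [hsplit, hsum]
  have hWcard : ε * n ≤ (W.card : ℝ) := by
    have h1 : ∑ v ∈ W, (H.degree v : ℝ) ≤ (W.card : ℝ) * n :=
      calc ∑ v ∈ W, (H.degree v : ℝ) ≤ ∑ _v ∈ W, (n:ℝ) := Finset.sum_le_sum fun v _ => hdeg v
        _ = (W.card : ℝ) * n := by rw [Finset.sum_const, nsmul_eq_mul]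
    nlinarith
  -- key claim: some m-set has at least m common neighbours inside W
  have claim : ∃ S : Finset V, S.card = m ∧
      m ≤ (W.filter (fun v => S ⊆ H.neighborFinset v)).card := by
    by_contra hcon
    push_neg at hcon
    set P := Finset.powersetCard m (univ : Finset V) with hP
    have hPcard : P.card = n.choose m := by rw [hP, Finset.card_powersetCard, Finset.card_univ]
    -- the double count
    have hidentity : ∀ v : V, (H.degree v).choose m
        = (P.filter (fun S => S ⊆ H.neighborFinset v)).card := by
      intro v
      have h1 : Finset.powersetCard m (H.neighborFinset v)
          = P.filter (fun S => S ⊆ H.neighborFinset v) := by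
        ext S
        simp only [Finset.mem_powersetCard, Finset.mem_filter, hP]
        constructor
        · rintro ⟨h1, h2⟩; exact ⟨⟨Finset.subset_univ _, h2⟩, h1⟩
        · rintro ⟨⟨_, h2⟩, h1⟩; exact ⟨h1, h2⟩
      rw [← h1, Finset.card_powersetCard, SimpleGraph.card_neighborFinset_eq_degree]
    have hswap : ∑ v ∈ W, (H.degree v).choose m
        = ∑ S ∈ P, (W.filter (fun v => S ⊆ H.neighborFinset v)).card := by
      simp only [hidentity, Finset.card_filter]
      exact Finset.sum_comm
    have hupper : ∑ v ∈ W, (H.degree v).choose m ≤ n.choose m * (m - 1) := by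
      rw [hswap]
      calc ∑ S ∈ P, (W.filter (fun v => S ⊆ H.neighborFinset v)).card
          ≤ ∑ S ∈ P, (m - 1) := by
            apply Finset.sum_le_sum
            intro S hS
            have hSm : S.card = m := (Finset.mem_powersetCard.mp hS).2
            have := hcon S hSm
            omega
        _ = P.card * (m - 1) := by rw [Finset.sum_const, smul_eq_mul]
        _ = n.choose m * (m - 1) := by rw [hPcard]
    have hlower : W.card * D.choose m ≤ ∑ v ∈ W, (H.degree v).choose m := by
      have := Finset.card_nsmul_le_sum W (fun v => (H.degree v).choose m) (D.choose m)
        (fun v hv => Nat.choose_le_choose m (by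
          simp only [hW, Finset.mem_filter] at hv; exact hv.2))
      simpa [smul_eq_mul] using this
    have hchain : W.card * D.choose m ≤ n.choose m * (m - 1) := hlower.trans hupper
    -- multiply by m!
    have hfact : W.card * D.descFactorial m ≤ n.descFactorial m * (m - 1) := by
      rw [Nat.descFactorial_eq_factorial_mul_choose, Nat.descFactorial_eq_factorial_mul_choose]
      calc W.card * (Nat.factorial m * D.choose m)
          = Nat.factorial m * (W.card * D.choose m) := by ring
        _ ≤ Nat.factorial m * (n.choose m * (m-1)) := Nat.mul_le_mul_left _ hchain
        _ = Nat.factorial m * n.choose m * (m-1) := by ring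
    have hmD : m ≤ D := by
      have : (m:ℝ) ≤ (D:ℝ) := le_trans hmε (by linarith)
      exact_mod_cast this
    have hnat : W.card * (D + 1 - m)^m ≤ n^m * (m - 1) := by
      calc W.card * (D + 1 - m)^m ≤ W.card * D.descFactorial m :=
            Nat.mul_le_mul_left _ (Nat.pow_sub_le_descFactorial D m)
        _ ≤ n.descFactorial m * (m - 1) := hfact
        _ ≤ n^m * (m - 1) := Nat.mul_le_mul_right _ (Nat.descFactorial_le_pow n m)
    -- cast and contradict
    have hqR : ε * n / 2 ≤ ((D + 1 - m : ℕ) : ℝ) := by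
      have hcast : ((D + 1 - m : ℕ) : ℝ) = (D:ℝ) + 1 - m := by
        have : m ≤ D + 1 := hmD.trans (Nat.le_succ _)
        push_cast [Nat.cast_sub this]
        ring
      rw [hcast]
      linarith
    have hcastm1 : ((m - 1 : ℕ) : ℝ) = (m:ℝ) - 1 := by
      push_cast [Nat.cast_sub hm]; ring
    have hR : (W.card : ℝ) * ((D + 1 - m : ℕ) : ℝ)^m ≤ (n:ℝ)^m * ((m:ℝ) - 1) := by
      rw [← hcastm1]
      exact_mod_cast hnat
    have hq0 : (0:ℝ) ≤ ε * n / 2 := by positivity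
    have hstep1 : ε * n * (ε * n / 2)^m ≤ (W.card : ℝ) * ((D + 1 - m : ℕ) : ℝ)^m := by
      have hWpos : (0:ℝ) ≤ ε * n := hεn.le
      gcongr
    have hstep2 : (n:ℝ)^m * ((m:ℝ) - 1) < (n:ℝ)^m * m := by
      have h0 : (0:ℝ) < (n:ℝ)^m := by positivity
      exact mul_lt_mul_of_pos_left (by linarith) h0
    have hstep3 : (n:ℝ)^m * m ≤ (ε * n / 2)^m * (ε * n) := by
      calc (n:ℝ)^m * m = (m:ℝ) * (n:ℝ)^m := by ring
        _ ≤ (ε * (n:ℝ) / 2) ^ (m+1) := hmain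
        _ = (ε * n / 2)^m * (ε * n / 2) := by rw [pow_succ]
        _ ≤ (ε * n / 2)^m * (ε * n) := by
            exact mul_le_mul_of_nonneg_left (by linarith) (pow_nonneg hq0 m)
    linarith
  obtain ⟨S, hScard, hScount⟩ := claim
  obtain ⟨T, hTsub, hTcard⟩ := Finset.exists_subset_card_eq hScount
  refine ⟨S, T, ?_, hScard, hTcard, ?_⟩
  · rw [Finset.disjoint_left]
    intro a haS haT
    have := (Finset.mem_filter.mp (hTsub haT)).2
    have : a ∈ H.neighborFinset a := this haS
    rw [SimpleGraph.mem_neighborFinset] at this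
    exact H.irrefl this
  · intro s hs t ht
    have := (Finset.mem_filter.mp (hTsub ht)).2
    have : s ∈ H.neighborFinset t := this hs
    rw [SimpleGraph.mem_neighborFinset] at this
    exact this.symm

set_option maxHeartbeats 1000000 in
theorem kst_params (ε : ℝ) (hε : 0 < ε) (hε1 : ε < 1) :
    ∃ c : ℝ, 0 < c ∧ ∃ n₀ : ℕ, ∀ n : ℕ, n₀ ≤ n →
      3 ≤ n ∧
      0 < c * Real.log n ∧
      1 ≤ ⌈c * Real.log n⌉₊ ∧
      ((⌈c * Real.log n⌉₊ : ℝ) ≤ ε * n / 2) ∧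
      ((⌈c * Real.log n⌉₊ : ℝ) * (n:ℝ) ^ (⌈c * Real.log n⌉₊ : ℕ)
        ≤ (ε * n / 2) ^ ((⌈c * Real.log n⌉₊ : ℕ) + 1)) := by
  set L := Real.log (2 / ε) with hLdef
  have h2ε : (1:ℝ) < 2 / ε := (one_lt_div hε).mpr (by linarith)
  have hL : 0 < L := Real.log_pos h2ε
  set c := 1 / (2 * L) with hcdef
  have hc : 0 < c := by positivity
  have hcL : c * L = 1 / 2 := by rw [hcdef]; field_simp
  set K := Real.exp (-(2 * L)) with hKdef
  have hK : 0 < K := Real.exp_pos _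
  set x₀ : ℝ := max (max ((8*c/ε)^2) (4/ε)) (max ((8*c/K)^4) ((2/K)^2)) with hx₀
  refine ⟨c, hc, max 3 (⌈x₀⌉₊ + 1), fun n hn => ?_⟩
  have hn3 : 3 ≤ n := le_trans (le_max_left _ _) hn
  have hx : x₀ ≤ (n:ℝ) := by
    have h1 : ⌈x₀⌉₊ + 1 ≤ n := le_trans (le_max_right _ _) hn
    have h2 : x₀ ≤ (⌈x₀⌉₊ : ℝ) := Nat.le_ceil _
    have h3 : ((⌈x₀⌉₊ : ℕ) : ℝ) ≤ n := by exact_mod_cast Nat.le_of_succ_le h1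
    linarith
  set x := (n:ℝ) with hxdef
  have hx3 : (3:ℝ) ≤ x := by rw [hxdef]; exact_mod_cast hn3
  have hx0 : (0:ℝ) < x := by linarith
  have hx1 : (1:ℝ) < x := by linarith
  have hlogpos : 0 < Real.log x := Real.log_pos hx1
  have hclog : 0 < c * Real.log x := by positivity
  set m := ⌈c * Real.log x⌉₊ with hmdef
  have hm1 : 1 ≤ m := Nat.one_le_ceil_iff.mpr hclog
  have hmlt : (m:ℝ) < c * Real.log x + 1 := Nat.ceil_lt_add_one hclog.le
  -- √ facts
  have hsx0 : 0 < Real.sqrt x := Real.sqrt_pos.mpr hx0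
  have hsq : Real.sqrt x * Real.sqrt x = x := Real.mul_self_sqrt hx0.le
  have hlog2 : Real.log x ≤ 2 * Real.sqrt x := by
    have h1 : Real.log (Real.sqrt x) ≤ Real.sqrt x - 1 := Real.log_le_sub_one_of_pos hsx0
    have h2 : Real.log (Real.sqrt x) = Real.log x / 2 := Real.log_sqrt hx0.le
    linarith
  set y := Real.sqrt (Real.sqrt x) with hydef
  have hy0 : 0 < y := Real.sqrt_pos.mpr hsx0
  have hysq : y * y = Real.sqrt x := Real.mul_self_sqrt hsx0.le
  have hlog4 : Real.log x ≤ 4 * y := by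
    have h1 : Real.log y ≤ y - 1 := Real.log_le_sub_one_of_pos hy0
    have h2 : Real.log y = Real.log (Real.sqrt x) / 2 := Real.log_sqrt hsx0.le
    have h3 : Real.log (Real.sqrt x) = Real.log x / 2 := Real.log_sqrt hx0.le
    linarith
  refine ⟨hn3, hclog, hm1, ?_, ?_⟩
  · -- m ≤ ε x / 2
    have hxa : (8*c/ε)^2 ≤ x := le_trans (le_trans (le_max_left _ _) (le_max_left _ _)) hx
    have hxb : 4/ε ≤ x := le_trans (le_trans (le_max_right _ _) (le_max_left _ _)) hx
    have hsa : 8*c/ε ≤ Real.sqrt x := by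
      have := Real.sqrt_le_sqrt hxa
      rwa [Real.sqrt_sq (by positivity)] at this
    have h1 : 2 * c * Real.sqrt x ≤ ε * x / 4 := by
      have h2 : 8 * c ≤ ε * Real.sqrt x := by
        rw [div_le_iff₀ hε] at hsa
        linarith [hsa]
      nlinarith [mul_nonneg (sub_nonneg.mpr h2) hsx0.le, hsq]
    have h2 : (1:ℝ) ≤ ε * x / 4 := by
      rw [div_le_iff₀ hε] at hxb
      linarith
    linarith [hmlt, h1, h2, mul_le_mul_of_nonneg_left hlog2 hc.le]
  · -- main inequality
    have hxc : (8*c/K)^4 ≤ x := le_trans (le_trans (le_max_left _ _) (le_max_right _ _)) hx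
    have hxd : (2/K)^2 ≤ x := le_trans (le_trans (le_max_right _ _) (le_max_right _ _)) hx
    have hsd : 2/K ≤ Real.sqrt x := by
      have := Real.sqrt_le_sqrt hxd
      rwa [Real.sqrt_sq (by positivity)] at this
    have hsc : 8*c/K ≤ y := by
      have h1 : ((8*c/K)^2)^2 ≤ x := by
        calc ((8*c/K)^2)^2 = (8*c/K)^4 := by ring
          _ ≤ x := hxc
      have h2 := Real.sqrt_le_sqrt h1
      rw [Real.sqrt_sq (by positivity)] at h2
      have h3 := Real.sqrt_le_sqrt h2
      rwa [Real.sqrt_sq (by positivity)] at h3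
    -- key : m ≤ K √x
    have hKey : (m:ℝ) ≤ K * Real.sqrt x := by
      have h1 : 4 * c * y ≤ (K/2) * Real.sqrt x := by
        have h2 : 8 * c ≤ K * y := by
          rw [div_le_iff₀ hK] at hsc
          linarith
        nlinarith [mul_nonneg (sub_nonneg.mpr h2) hy0.le, hysq]
      have h2 : (1:ℝ) ≤ (K/2) * Real.sqrt x := by
        rw [div_le_iff₀ hK] at hsd
        linarith
      linarith [hmlt, h1, h2, mul_le_mul_of_nonneg_left hlog4 hc.le]
    -- exponential computation
    have hexpL : Real.exp L = 2 / ε := Real.exp_log (by positivity)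
    have hε2 : ε / 2 = Real.exp (-L) := by
      rw [Real.exp_neg, hexpL]
      field_simp
    have hsqrt_exp : Real.sqrt x = Real.exp (Real.log x / 2) := by
      rw [Real.sqrt_eq_rpow, Real.rpow_def_of_pos hx0]
      ring_nf
    have hfactor : K * Real.sqrt x ≤ Real.exp (-(((m:ℝ)+1)*L)) * x := by
      rw [hKdef, hsqrt_exp, ← Real.exp_add]
      nth_rewrite 2 [← Real.exp_log hx0]
      rw [← Real.exp_add]
      apply Real.exp_le_exp.mpr
      have h1 : ((m:ℝ)+1) * L ≤ (c * Real.log x + 2) * L := by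
        have := hmlt
        nlinarith [hL.le]
      nlinarith [hcL, hL.le]
    have hpow : Real.exp (-(((m:ℝ)+1)*L)) = (ε/2) ^ (m+1) := by
      rw [hε2, ← Real.exp_nat_mul]
      congr 1
      push_cast
      ring
    calc (m:ℝ) * x ^ m ≤ (K * Real.sqrt x) * x ^ m := by
          exact mul_le_mul_of_nonneg_right hKey (by positivity)
      _ ≤ (Real.exp (-(((m:ℝ)+1)*L)) * x) * x ^ m := by
          exact mul_le_mul_of_nonneg_right hfactor (by positivity)
      _ = (ε/2) ^ (m+1) * x ^ (m+1) := by rw [hpow, pow_succ]; ring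
      _ = (ε * x / 2) ^ (m+1) := by rw [← mul_pow]; ring_nf

section Cover

variable {V : Type} [Fintype V] [DecidableEq V]

theorem cover_aux (ε : ℝ) (hε : 0 ≤ ε) (G : SimpleGraph V)
    (m : ℕ) (hm : 1 ≤ m)
    (hfind : ∀ E : Finset (Sym2 V), ↑E ⊆ G.edgeSet →
        (ε * (Fintype.card V : ℝ)^2 < E.card) →
      ∃ S T : Finset V, Disjoint S T ∧ S.card = m ∧ T.card = m ∧
        ∀ s ∈ S, ∀ t ∈ T, s(s, t) ∈ E) :
    ∀ N : ℕ, ∀ E : Finset (Sym2 V), E.card ≤ N → ↑E ⊆ G.edgeSet →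
      ∃ (K : Finset G.Subgraph) (R : Finset (Sym2 V)),
        (∀ A ∈ K, Nonempty (A.coe ≃g completeBipartiteGraph (Fin m) (Fin m))) ∧
        (∀ A ∈ K, A.edgeSet ⊆ ↑E) ∧
        (∀ A ∈ K, ∀ B ∈ K, A ≠ B → A.edgeSet ∩ B.edgeSet = ∅) ∧
        (∀ A ∈ K, A.edgeSet ∩ ↑R = ∅) ∧
        ((⋃ A ∈ K, A.edgeSet) ∪ ↑R = ↑E) ∧
        K.card * (m * m) ≤ E.card ∧
        ((R.card : ℝ) ≤ ε * (Fintype.card V : ℝ)^2) := by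
  classical
  intro N
  induction N with
  | zero =>
    intro E hcard hsub
    refine ⟨∅, E, by simp, by simp, by simp, by simp, by simp, by simp, ?_⟩
    have : E.card = 0 := Nat.le_zero.mp hcard
    rw [this]
    push_cast
    positivity
  | succ N ih =>
    intro E hcard hsub
    by_cases hsmall : (E.card : ℝ) ≤ ε * (Fintype.card V : ℝ)^2
    · exact ⟨∅, E, by simp, by simp, by simp, by simp, by simp, by simp, hsmall⟩
    · push_neg at hsmall
      obtain ⟨S, T, hdisj, hScard, hTcard, hmem⟩ := hfind E hsub hsmall
      have hAdj : ∀ s ∈ S, ∀ t ∈ T, G.Adj s t := fun s hs t ht =>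
        (G.mem_edgeSet).mp (hsub (hmem s hs t ht))
      set A := bipSubgraph G S T hAdj with hA
      set F : Finset (Sym2 V) := (S ×ˢ T).image (fun p => s(p.1, p.2)) with hF
      have hAF : A.edgeSet = ↑F := by
        rw [hA, bipSubgraph_edgeSet, hF, Finset.coe_image, Finset.coe_product]
      have hFE : F ⊆ E := by
        intro e he
        rw [hF, Finset.mem_image] at he
        obtain ⟨⟨a, b⟩, hab, rfl⟩ := he
        rw [Finset.mem_product] at hab
        exact hmem a hab.1 b hab.2
      have hFcard : F.card = m * m := by
        have h1 : (A.edgeSet).ncard = m * m := by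
          rw [bipSubgraph_edgeSet_ncard G S T hdisj hAdj, hScard, hTcard]
        rwa [hAF, Set.ncard_coe_finset] at h1
      have hm2 : 1 ≤ m * m := Nat.one_le_iff_ne_zero.mpr (by positivity)
      have hFne : F.Nonempty := Finset.card_pos.mp (by omega)
      set E' := E \ F with hE'
      have hE'card : E'.card = E.card - m * m := by
        rw [hE', Finset.card_sdiff_of_subset hFE, hFcard]
      have hEcard_pos : 1 ≤ E.card := by
        rcases Nat.eq_zero_or_pos E.card with h | h
        · exfalso
          rw [h] at hsmall
          push_cast at hsmall
          nlinarith [mul_nonneg hε (sq_nonneg ((Fintype.card V : ℝ)))]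
        · exact h
      have hE'le : E'.card ≤ N := by
        have := Finset.card_le_card hFE
        omega
      obtain ⟨K', R', hiso', hsub', hdisj', hR'disj, hunion', hcount', hRcard'⟩ :=
        ih E' hE'le (le_trans (Finset.coe_subset.mpr (Finset.sdiff_subset)) hsub)
      have hR'E' : ↑R' ⊆ (↑E' : Set (Sym2 V)) := by
        rw [← hunion']
        exact Set.subset_union_right
      have hAE' : ∀ x ∈ A.edgeSet, x ∉ (↑E' : Set (Sym2 V)) := by
        intro x hx hx'
        rw [hAF] at hx
        rw [hE', Finset.coe_sdiff, Set.mem_diff] at hx'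
        exact hx'.2 hx
      have hAnotin : A ∉ K' := by
        intro hAmem
        obtain ⟨e, he⟩ := hFne
        have h1 : e ∈ A.edgeSet := by rw [hAF]; exact_mod_cast he
        exact hAE' e h1 (hsub' A hAmem h1)
      refine ⟨insert A K', R', ?_, ?_, ?_, ?_, ?_, ?_, hRcard'⟩
      · intro B hB
        rcases Finset.mem_insert.mp hB with rfl | hB
        · exact bipSubgraph_iso G S T hdisj hAdj hScard hTcard
        · exact hiso' B hB
      · intro B hB
        rcases Finset.mem_insert.mp hB with rfl | hB
        · rw [hAF]; exact_mod_cast hFE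
        · exact (hsub' B hB).trans (by exact_mod_cast Finset.coe_subset.mpr Finset.sdiff_subset)
      · intro B hB C hC hne
        rcases Finset.mem_insert.mp hB with rfl | hB <;>
          rcases Finset.mem_insert.mp hC with rfl | hC
        · exact absurd rfl hne
        · ext x
          simp only [Set.mem_inter_iff, Set.mem_empty_iff_false, iff_false, not_and]
          intro hx hx'
          exact hAE' x hx (hsub' _ hC hx')
        · ext x
          simp only [Set.mem_inter_iff, Set.mem_empty_iff_false, iff_false, not_and]
          intro hx hx'
          exact hAE' x hx' (hsub' _ hB hx)
        · exact hdisj' B hB C hC hne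
      · intro B hB
        rcases Finset.mem_insert.mp hB with rfl | hB
        · ext x
          simp only [Set.mem_inter_iff, Set.mem_empty_iff_false, iff_false, not_and]
          intro hx hx'
          exact hAE' x hx (hR'E' hx')
        · exact hR'disj B hB
      · rw [Finset.set_biUnion_insert, Set.union_assoc, hunion', hAF, hE', Finset.coe_sdiff]
        rw [Set.union_diff_cancel (by exact_mod_cast hFE)]
      · rw [Finset.card_insert_of_notMem hAnotin]
        calc (K'.card + 1) * (m * m) = K'.card * (m * m) + m * m := by ring
          _ ≤ E'.card + m * m := by omega
          _ ≤ E.card := by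
              have := Finset.card_le_card hFE
              omega

end Cover

open SimpleGraph

/-- Kővári–Sós–Turán covering consequence: for every `ε ∈ (0,1)` there are `c > 0` and
`n₀` such that for every `n ≥ n₀`, the edge set of every graph `G` on `n` vertices can be
partitioned into at most `(n/(c·log n))²` pairwise edge-disjoint copies of
`K_{m,m}` with `m = ⌈c·log n⌉`, together with at most `ε·n²` remaining single edges. -/
theorem kst_balanced_bipartite_edge_partition :
    ∀ ε : ℝ, 0 < ε → ε < 1 →
      ∃ (c : ℝ) (n₀ : ℕ), 0 < c ∧
        ∀ n : ℕ, n₀ ≤ n →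
          ∀ (V : Type) [Fintype V], Fintype.card V = n →
            ∀ G : SimpleGraph V,
              ∃ (K : Set G.Subgraph) (R : Set (Sym2 V)),
                K.Finite ∧ R ⊆ G.edgeSet ∧
                (∀ A ∈ K, Nonempty (A.coe ≃g
                  completeBipartiteGraph (Fin ⌈c * Real.log n⌉₊) (Fin ⌈c * Real.log n⌉₊))) ∧
                (∀ A ∈ K, ∀ B ∈ K, A ≠ B → A.edgeSet ∩ B.edgeSet = ∅) ∧
                (∀ A ∈ K, A.edgeSet ∩ R = ∅) ∧
                ((⋃ A ∈ K, A.edgeSet) ∪ R = G.edgeSet) ∧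
                (K.ncard : ℝ) ≤ ((n : ℝ) / (c * Real.log n)) ^ 2 ∧
                (R.ncard : ℝ) ≤ ε * (n : ℝ) ^ 2 := by
  intro ε hε hε1
  obtain ⟨c, hc, n₀, hparams⟩ := kst_params ε hε hε1
  refine ⟨c, n₀, hc, ?_⟩
  intro n hn V _ hcardV G
  classical
  obtain ⟨hn3, hclog, hm1, hmε, hmain⟩ := hparams n hn
  set m := ⌈c * Real.log (n:ℝ)⌉₊ with hmdef
  letI : DecidableRel G.Adj := Classical.decRel _
  have hfind : ∀ E : Finset (Sym2 V), ↑E ⊆ G.edgeSet →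
      (ε * (Fintype.card V : ℝ)^2 < E.card) →
      ∃ S T : Finset V, Disjoint S T ∧ S.card = m ∧ T.card = m ∧
        ∀ s ∈ S, ∀ t ∈ T, s(s, t) ∈ E := by
    intro E hEsub hElarge
    set H := SimpleGraph.fromEdgeSet (↑E : Set (Sym2 V)) with hH
    letI : DecidableRel H.Adj := Classical.decRel _
    have hHedge : H.edgeSet = ↑E := by
      rw [hH, edgeSet_fromEdgeSet]
      ext e
      simp only [Set.mem_diff, Set.mem_setOf_eq, Finset.mem_coe, and_iff_left_iff_imp]
      intro he
      exact G.not_isDiag_of_mem_edgeSet (hEsub he)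
    obtain ⟨S, T, hd, hS, hT, hadj⟩ := kst_step ε hε H m hm1
      (by rw [hcardV]; exact hmε) (by rw [hcardV]; exact hmain)
      (by
        have key : ∀ (inst : Fintype ↥H.edgeSet), (@SimpleGraph.edgeFinset V H inst).card = E.card := by
          intro inst
          rw [show @SimpleGraph.edgeFinset V H inst = @Set.toFinset _ H.edgeSet inst from rfl,
            ← Set.ncard_eq_toFinset_card', hHedge, Set.ncard_coe_finset]
        rw [key _]
        exact hElarge.le)
    refine ⟨S, T, hd, hS, hT, fun s hs t ht => ?_⟩
    have h2 : s(s, t) ∈ H.edgeSet := (hadj s hs t ht)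
    rw [hHedge] at h2
    exact_mod_cast h2
  obtain ⟨K, R, hiso, hKsub, hKdisj, hKR, hunion, hcount, hRcard⟩ :=
    cover_aux ε hε.le G m hm1 hfind G.edgeFinset.card G.edgeFinset le_rfl
      (by rw [coe_edgeFinset])
  refine ⟨↑K, ↑R, K.finite_toSet, ?_, ?_, ?_, ?_, ?_, ?_, ?_⟩
  · have h1 : (↑R : Set (Sym2 V)) ⊆ ↑G.edgeFinset := by
      rw [← hunion]; exact Set.subset_union_right
    rwa [coe_edgeFinset] at h1
  · intro A hA; exact hiso A hA
  · intro A hA B hB hne; exact hKdisj A hA B hB hne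
  · intro A hA; exact hKR A hA
  · rw [Finset.set_biUnion_coe, hunion, coe_edgeFinset]
  · rw [Set.ncard_coe_finset]
    have hE2 : 2 * G.edgeFinset.card ≤ n * n := by
      rw [← G.sum_degrees_eq_twice_card_edges]
      calc ∑ v, G.degree v ≤ ∑ _v : V, n := Finset.sum_le_sum (fun v _ => by
            rw [← hcardV]; exact (G.degree_lt_card_verts v).le)
        _ = n * n := by rw [Finset.sum_const, smul_eq_mul, Finset.card_univ, hcardV]
    have hE3 : G.edgeFinset.card ≤ n * n := le_trans (Nat.le_mul_of_pos_left _ (by norm_num)) hE2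
    have hcount2 : (K.card : ℝ) * ((m:ℝ) * m) ≤ (n:ℝ) * n := by
      have h1 : (K.card * (m * m) : ℕ) ≤ n * n := le_trans hcount hE3
      exact_mod_cast h1
    have hmge : c * Real.log n ≤ (m:ℝ) := Nat.le_ceil _
    rw [div_pow, le_div_iff₀ (by positivity)]
    calc (K.card : ℝ) * (c * Real.log n)^2
        ≤ (K.card : ℝ) * (m:ℝ)^2 := by
          exact mul_le_mul_of_nonneg_left (pow_le_pow_left₀ hclog.le hmge 2) (Nat.cast_nonneg _)
      _ = (K.card : ℝ) * ((m:ℝ) * m) := by ring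
      _ ≤ (n:ℝ) * n := hcount2
      _ = (n:ℝ)^2 := by ring
  · rw [Set.ncard_coe_finset]
    rw [hcardV] at hRcard
    exact hRcard
end

section
/- Let H be a 2-connected graph. There exists a constant C_H > 0 such that every connected graph G on n ≥ 2 vertices admits a family F of connected subgraphs of G with |F| ≤ C_H·log n that strongly separates the copies of H in G: for any two distinct subgraphs H₁, H₂ of G isomorphic to H there exist F₁, F₂ ∈ F with H₁ ⊆ F₁, H₂ ⊄ F₁, H₂ ⊆ F₂ and H₁ ⊄ F₂. -/
open SimpleGraph

/-- `G` is 2-connected: it has more than 2 vertices and stays connected after deleting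
any single vertex. -/
def TwoConnected {V : Type*} [Fintype V] (G : SimpleGraph V) : Prop :=
  2 < Fintype.card V ∧ ∀ v : V, (G.induce {v}ᶜ).Connected

open scoped Classical
set_option linter.unusedSectionVars false
set_option linter.unusedVariables false
set_option maxHeartbeats 1000000

section Helpers

lemma exists_adj_of_reachable_ne {W : Type*} {G : SimpleGraph W} {u v : W}
    (h : G.Reachable u v) (hne : u ≠ v) : ∃ z, G.Adj u z := by
  obtain ⟨w⟩ := h
  cases w with
  | nil => exact absurd rfl hne
  | cons h' p => exact ⟨_, h'⟩

lemma reachable_of_adj_impl {W : Type*} {G R : SimpleGraph W}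
    (hGR : ∀ x y, G.Adj x y → R.Reachable x y) {u v : W} (h : G.Reachable u v) :
    R.Reachable u v := by
  obtain ⟨w⟩ := h
  induction w with
  | nil => exact Reachable.refl _
  | cons h' p ih => exact (hGR _ _ h').trans ih

lemma exists_third {α : Type*} [Fintype α] (hcard : 2 < Fintype.card α) (x y : α) :
    ∃ z, z ≠ x ∧ z ≠ y := by
  classical
  by_contra hc
  push_neg at hc
  have hsub : (Finset.univ : Finset α) ⊆ {x, y} := by
    intro z _
    rcases Classical.em (z = x) with h | h
    · simp [h]
    · simp [hc z h]
  have := Finset.card_le_card hsub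
  rw [Finset.card_univ] at this
  have h2 : ({x, y} : Finset α).card ≤ 2 := Finset.card_insert_le _ _ |>.trans (by simp)
  omega

variable {α : Type*} [Fintype α] {H : SimpleGraph α}

lemma reach_induce_to_deleteEdges {v x y : α} (hv : v ∈ s(x, y)) {a b : ↥({v}ᶜ : Set α)}
    (h : (H.induce ({v}ᶜ : Set α)).Reachable a b) :
    (H.deleteEdges {s(x, y)}).Reachable a.val b.val := by
  let φ : H.induce ({v}ᶜ : Set α) →g H.deleteEdges {s(x, y)} :=
    { toFun := Subtype.val
      map_rel' := by
        intro p q hpq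
        rw [comap_adj] at hpq
        rw [deleteEdges_adj]
        refine ⟨hpq, ?_⟩
        intro hmem
        have : s(p.val, q.val) = s(x, y) := Set.mem_singleton_iff.mp hmem
        have hv' : v ∈ s(p.val, q.val) := this ▸ hv
        rcases Sym2.mem_iff.mp hv' with h1 | h1
        · exact p.prop (by simp [h1.symm])
        · exact q.prop (by simp [h1.symm]) }
  exact h.map φ

lemma neighbor_avoid (hH : TwoConnected H) (a v : α) (hav : v ≠ a) :
    ∃ b, b ≠ v ∧ H.Adj a b := by
  obtain ⟨w, hwa, hwv⟩ := exists_third hH.1 a v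
  have ha : a ∈ ({v}ᶜ : Set α) := by simp [hav.symm]
  have hw : w ∈ ({v}ᶜ : Set α) := by simp [hwv]
  have hr : (H.induce ({v}ᶜ : Set α)).Reachable ⟨a, ha⟩ ⟨w, hw⟩ :=
    (hH.2 v).preconnected _ _
  have hne : (⟨a, ha⟩ : ↥({v}ᶜ : Set α)) ≠ ⟨w, hw⟩ := by
    simp only [ne_eq, Subtype.mk.injEq]
    exact fun h => hwa h.symm
  obtain ⟨z, hz⟩ := exists_adj_of_reachable_ne hr hne
  rw [comap_adj] at hz
  have hz' : z.val ∈ ({v}ᶜ : Set α) := z.prop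
  refine ⟨z.val, ?_, hz⟩
  intro h
  exact hz' (by simp [h])

lemma H_mindeg2 (hH : TwoConnected H) (a : α) :
    ∃ b c, b ≠ c ∧ H.Adj a b ∧ H.Adj a c := by
  obtain ⟨v, hva, _⟩ := exists_third hH.1 a a
  obtain ⟨b, _, hab⟩ := neighbor_avoid hH a v hva
  obtain ⟨c, hcb, hac⟩ := neighbor_avoid hH a b hab.ne'
  exact ⟨c, b, hcb, hac, hab⟩

lemma H_bridgeless (hH : TwoConnected H) {x y : α} (hxy : H.Adj x y) :
    (H.deleteEdges {s(x, y)}).Reachable x y := by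
  obtain ⟨z, hzx, hzy⟩ := exists_third hH.1 x y
  have hyx : y ≠ x := hxy.ne'
  have hy : y ∈ ({x}ᶜ : Set α) := by simp [hyx]
  have hz1 : z ∈ ({x}ᶜ : Set α) := by simp [hzx]
  have hx : x ∈ ({y}ᶜ : Set α) := by simp [hxy.ne]
  have hz2 : z ∈ ({y}ᶜ : Set α) := by simp [hzy]
  have R1 : (H.deleteEdges {s(x, y)}).Reachable z y :=
    reach_induce_to_deleteEdges (by simp) ((hH.2 x).preconnected ⟨z, hz1⟩ ⟨y, hy⟩)
  have R2 : (H.deleteEdges {s(x, y)}).Reachable z x :=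
    reach_induce_to_deleteEdges (by simp) ((hH.2 y).preconnected ⟨z, hz2⟩ ⟨x, hx⟩)
  exact R2.symm.trans R1

instance subgraphFinite {V : Type*} [Finite V] {G : SimpleGraph V} : Finite G.Subgraph := by
  have hinj : Function.Injective (fun S : G.Subgraph => (S.verts, S.Adj)) := by
    intro a b h
    exact SimpleGraph.Subgraph.ext (congrArg Prod.fst h) (congrArg Prod.snd h)
  exact Finite.of_injective _ hinj

end Helpers

section Copies

variable {α : Type*} [Fintype α] {H : SimpleGraph α}
variable {V : Type*} [Fintype V] {G : SimpleGraph V}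

lemma copy_verts_eq {A : G.Subgraph} (ψ : A.coe ≃g H) :
    A.verts = Set.range (fun u => (ψ.symm u).val) := by
  ext w
  constructor
  · intro hw
    exact ⟨ψ ⟨w, hw⟩, by simp⟩
  · rintro ⟨u, rfl⟩
    exact (ψ.symm u).prop

lemma copy_adj_iff {A : G.Subgraph} (ψ : A.coe ≃g H) (x y : V) :
    A.Adj x y ↔ ∃ a b, H.Adj a b ∧ (ψ.symm a).val = x ∧ (ψ.symm b).val = y := by
  constructor
  · intro h
    refine ⟨ψ ⟨x, A.edge_vert h⟩, ψ ⟨y, A.edge_vert h.symm⟩, ?_, by simp, by simp⟩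
    rw [ψ.map_adj_iff, Subgraph.coe_adj]
    exact h
  · rintro ⟨a, b, hab, rfl, rfl⟩
    have : A.coe.Adj (ψ.symm a) (ψ.symm b) := ψ.symm.map_adj_iff.mpr hab
    rwa [Subgraph.coe_adj] at this

lemma copy_eq_of_map_eq {A B : G.Subgraph} (ψA : A.coe ≃g H) (ψB : B.coe ≃g H)
    (hg : (fun u => (ψA.symm u).val) = (fun u => (ψB.symm u).val)) : A = B := by
  refine SimpleGraph.Subgraph.ext ?_ ?_
  · rw [copy_verts_eq ψA, copy_verts_eq ψB, hg]
  · funext x y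
    refine propext ?_
    rw [copy_adj_iff ψA, copy_adj_iff ψB]
    simp only [funext_iff] at hg
    simp_rw [hg]

/-- The pairs-of-adjacent-vertices equivalence induced by a copy isomorphism. -/
noncomputable def adjPairEquiv {A : G.Subgraph} (ψ : A.coe ≃g H) :
    {p : V × V // A.Adj p.1 p.2} ≃ {q : α × α // H.Adj q.1 q.2} where
  toFun p := ⟨(ψ ⟨p.1.1, A.edge_vert p.2⟩, ψ ⟨p.1.2, A.edge_vert p.2.symm⟩), by
    rw [ψ.map_adj_iff, Subgraph.coe_adj]; exact p.2⟩
  invFun q := ⟨((ψ.symm q.1.1).val, (ψ.symm q.1.2).val), by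
    have : A.coe.Adj (ψ.symm q.1.1) (ψ.symm q.1.2) := ψ.symm.map_adj_iff.mpr q.2
    rwa [Subgraph.coe_adj] at this⟩
  left_inv p := by
    ext <;> simp
  right_inv q := by
    ext <;> simp

lemma copy_le_antisymm {A B : G.Subgraph} (hA : Nonempty (A.coe ≃g H))
    (hB : Nonempty (B.coe ≃g H)) (h : A ≤ B) : A = B := by
  obtain ⟨ψA⟩ := hA
  obtain ⟨ψB⟩ := hB
  have hvA : Nat.card ↥A.verts = Nat.card α := Nat.card_congr ψA.toEquiv
  have hvB : Nat.card ↥B.verts = Nat.card α := Nat.card_congr ψB.toEquiv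
  have hverts : A.verts = B.verts := by
    refine Set.eq_of_subset_of_ncard_le h.1 ?_ (Set.toFinite _)
    rw [← Nat.card_coe_set_eq, ← Nat.card_coe_set_eq, hvA, hvB]
  have hpA : Nat.card {p : V × V // A.Adj p.1 p.2} = Nat.card {q : α × α // H.Adj q.1 q.2} :=
    Nat.card_congr (adjPairEquiv ψA)
  have hpB : Nat.card {p : V × V // B.Adj p.1 p.2} = Nat.card {q : α × α // H.Adj q.1 q.2} :=
    Nat.card_congr (adjPairEquiv ψB)
  have hsub : {p : V × V | A.Adj p.1 p.2} ⊆ {p : V × V | B.Adj p.1 p.2} := by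
    intro p hp
    exact h.2 hp
  have hseq : {p : V × V | A.Adj p.1 p.2} = {p : V × V | B.Adj p.1 p.2} := by
    refine Set.eq_of_subset_of_ncard_le hsub ?_ (Set.toFinite _)
    rw [← Nat.card_coe_set_eq, ← Nat.card_coe_set_eq]
    exact le_of_eq (hpB.trans hpA.symm)
  refine SimpleGraph.Subgraph.ext hverts ?_
  funext x y
  refine propext ⟨fun hxy => ?_, fun hxy => ?_⟩
  · have : (x, y) ∈ {p : V × V | A.Adj p.1 p.2} := hxy
    rw [hseq] at this
    exact this
  · have : (x, y) ∈ {p : V × V | B.Adj p.1 p.2} := hxy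
    rw [← hseq] at this
    exact this

end Copies

section Nice

variable {α : Type*} [Fintype α] {H : SimpleGraph α}
variable {V : Type*} [Fintype V] {G : SimpleGraph V}

/-- The local structural properties a copy of a 2-connected graph has. -/
def Nice {V : Type*} {G : SimpleGraph V} (A : G.Subgraph) : Prop :=
  (∀ w ∈ A.verts, ∃ a b, a ≠ b ∧ A.Adj w a ∧ A.Adj w b) ∧
  ∀ x y, A.Adj x y → ((A.deleteEdges {s(x, y)}).spanningCoe).Reachable x y

lemma nice_of_copy (hH : TwoConnected H) {A : G.Subgraph} (h : Nonempty (A.coe ≃g H)) :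
    Nice A := by
  obtain ⟨ψ⟩ := h
  constructor
  · intro w hw
    obtain ⟨b, c, hbc, hab, hac⟩ := H_mindeg2 hH (ψ ⟨w, hw⟩)
    refine ⟨(ψ.symm b).val, (ψ.symm c).val, ?_, ?_, ?_⟩
    · intro hvv
      exact hbc (by simpa using congrArg (fun t => (ψ t : α)) (Subtype.ext hvv))
    · have : A.coe.Adj (ψ.symm (ψ ⟨w, hw⟩)) (ψ.symm b) := ψ.symm.map_adj_iff.mpr hab
      rw [Subgraph.coe_adj] at this
      simpa using this
    · have : A.coe.Adj (ψ.symm (ψ ⟨w, hw⟩)) (ψ.symm c) := ψ.symm.map_adj_iff.mpr hac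
      rw [Subgraph.coe_adj] at this
      simpa using this
  · intro x y hxy
    have hx : x ∈ A.verts := A.edge_vert hxy
    have hy : y ∈ A.verts := A.edge_vert hxy.symm
    set g : α → V := fun u => (ψ.symm u).val with hgdef
    have ginj : Function.Injective g :=
      Subtype.coe_injective.comp ψ.symm.toEquiv.injective
    set a : α := ψ ⟨x, hx⟩ with ha
    set b : α := ψ ⟨y, hy⟩ with hb
    have hga : g a = x := by simp [hgdef, ha]
    have hgb : g b = y := by simp [hgdef, hb]
    have hHab : H.Adj a b := by
      rw [ψ.map_adj_iff, Subgraph.coe_adj]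
      exact hxy
    have R : (H.deleteEdges {s(a, b)}).Reachable a b := H_bridgeless hH hHab
    let Φ : H.deleteEdges {s(a, b)} →g (A.deleteEdges {s(x, y)}).spanningCoe :=
      { toFun := g
        map_rel' := by
          intro u v huv
          rw [deleteEdges_adj] at huv
          show (A.deleteEdges {s(x, y)}).spanningCoe.Adj (g u) (g v)
          rw [Subgraph.spanningCoe_adj, Subgraph.deleteEdges_adj]
          constructor
          · have : A.coe.Adj (ψ.symm u) (ψ.symm v) := ψ.symm.map_adj_iff.mpr huv.1
            rwa [Subgraph.coe_adj] at this
          · intro hmem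
            have he : s(g u, g v) = s(x, y) := Set.mem_singleton_iff.mp hmem
            rw [← hga, ← hgb] at he
            rw [← Sym2.map_pair_eq g, ← Sym2.map_pair_eq g] at he
            have := Sym2.map.injective ginj he
            exact huv.2 (Set.mem_singleton_iff.mpr this) }
    have h2 : (A.deleteEdges {s(x, y)}).spanningCoe.Reachable (g a) (g b) := R.map Φ
    rwa [hga, hgb] at h2

end Nice

section Connectify

variable {V : Type*} [Fintype V] {G : SimpleGraph V}

lemma step_cross {S : G.Subgraph} {x y : V} (hxy : G.Adj x y)
    (hur : ¬ S.spanningCoe.Reachable x y) {A : G.Subgraph} (hnice : Nice A)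
    (hle : A ≤ S ⊔ G.subgraphOfAdj hxy) : A ≤ S := by
  have hSxy : ¬ S.Adj x y := by
    intro h
    exact hur (Adj.reachable (by rw [Subgraph.spanningCoe_adj]; exact h))
  have key : ¬ A.Adj x y := by
    intro h
    have R := hnice.2 x y h
    have hsub : (A.deleteEdges {s(x, y)}).spanningCoe ≤ S.spanningCoe := by
      intro a b hab
      rw [Subgraph.spanningCoe_adj, Subgraph.deleteEdges_adj] at hab
      rw [Subgraph.spanningCoe_adj]
      rcases hle.2 hab.1 with hS | hOther
      · exact hS
      · rw [subgraphOfAdj_adj] at hOther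
        exact absurd (Set.mem_singleton_iff.mpr hOther.symm) hab.2
    exact hur (R.mono hsub)
  have main : ∀ w ∈ A.verts, w ∈ S.verts := by
    intro w hwA
    by_contra hwS
    have hw2 : w = x ∨ w = y := by
      have hv := hle.1 hwA
      rw [Subgraph.verts_sup] at hv
      rcases hv with h | h
      · exact absurd h hwS
      · rw [subgraphOfAdj_verts] at h
        simpa using h
    obtain ⟨a, b, hab, h1, h2⟩ := hnice.1 w hwA
    have ha' : ∀ c, A.Adj w c → (w = x → c = y) ∧ (w = y → c = x) := by
      intro c hc
      rcases hle.2 hc with hS | hOther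
      · exact absurd (S.edge_vert hS) hwS
      · rw [subgraphOfAdj_adj] at hOther
        constructor
        · rintro rfl
          exact Sym2.congr_right.mp hOther.symm
        · rintro rfl
          rw [Sym2.eq_swap (a := x)] at hOther
          exact Sym2.congr_right.mp hOther.symm
    rcases hw2 with rfl | rfl
    · exact hab (((ha' a h1).1 rfl).trans (((ha' b h2).1 rfl).symm))
    · exact hab (((ha' a h1).2 rfl).trans (((ha' b h2).2 rfl).symm))
  refine ⟨main, ?_⟩
  intro a b hab
  rcases hle.2 hab with hS | hOther
  · exact hS
  · rw [subgraphOfAdj_adj] at hOther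
    rcases Sym2.eq_iff.mp hOther with ⟨h1, h2⟩ | ⟨h1, h2⟩
    · exact absurd (h1 ▸ h2 ▸ hab) key
    · exact absurd (h1 ▸ h2 ▸ hab).symm key

lemma connectify (hG : G.Connected) :
    ∀ (n : ℕ) (S : G.Subgraph),
      Set.ncard {p : V × V | ¬ S.spanningCoe.Reachable p.1 p.2} ≤ n →
      ∃ S' : G.Subgraph, S ≤ S' ∧ S'.spanningCoe.Connected ∧
        ∀ A : G.Subgraph, Nice A → A ≤ S' → A ≤ S := by
  have hV : Nonempty V := hG.nonempty
  intro n
  induction n with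
  | zero =>
    intro S hS
    refine ⟨S, le_refl _, ?_, fun A _ h => h⟩
    rw [connected_iff]
    refine ⟨?_, hV⟩
    intro u v
    refine reachable_of_adj_impl ?_ (hG.preconnected u v)
    intro a b hab
    by_contra hr
    have h0 : {p : V × V | ¬ S.spanningCoe.Reachable p.1 p.2} = ∅ :=
      (Set.ncard_eq_zero (Set.toFinite _)).mp (Nat.le_zero.mp hS)
    have : (a, b) ∈ {p : V × V | ¬ S.spanningCoe.Reachable p.1 p.2} := hr
    rw [h0] at this
    exact this
  | succ n ih =>
    intro S hS
    by_cases hcross : ∃ x y, G.Adj x y ∧ ¬ S.spanningCoe.Reachable x y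
    · obtain ⟨x, y, hxy, hur⟩ := hcross
      set S'' := S ⊔ G.subgraphOfAdj hxy with hS''
      have hsub : {p : V × V | ¬ S''.spanningCoe.Reachable p.1 p.2} ⊆
          {p : V × V | ¬ S.spanningCoe.Reachable p.1 p.2} := by
        intro p hp hrp
        exact hp (hrp.mono (Subgraph.spanningCoe_le_of_le le_sup_left))
      have hmem : (x, y) ∈ {p : V × V | ¬ S.spanningCoe.Reachable p.1 p.2} := hur
      have hnotmem : (x, y) ∉ {p : V × V | ¬ S''.spanningCoe.Reachable p.1 p.2} := by
        intro hc
        refine hc (Adj.reachable ?_)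
        rw [Subgraph.spanningCoe_adj]
        exact Or.inr (by rw [subgraphOfAdj_adj])
      have hlt : Set.ncard {p : V × V | ¬ S''.spanningCoe.Reachable p.1 p.2} < 
          Set.ncard {p : V × V | ¬ S.spanningCoe.Reachable p.1 p.2} :=
        Set.ncard_lt_ncard ((Set.ssubset_iff_of_subset hsub).mpr ⟨(x, y), hmem, hnotmem⟩)
          (Set.toFinite _)
      obtain ⟨S', hle', hconn', hpres'⟩ := ih S'' (by omega)
      exact ⟨S', le_trans le_sup_left hle', hconn',
        fun A hn hA => step_cross hxy hur hn (hpres' A hn hA)⟩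
    · push_neg at hcross
      refine ⟨S, le_refl _, ?_, fun A _ h => h⟩
      rw [connected_iff]
      refine ⟨?_, hV⟩
      intro u v
      exact reachable_of_adj_impl hcross (hG.preconnected u v)

end Connectify

lemma count_subsets {β : Type*} [Fintype β] [DecidableEq β] (A C : Finset β)
    (h : Disjoint A C) :
    (Finset.univ.filter fun W : Finset β => A ⊆ W ∧ Disjoint C W).card
      * 2 ^ (A.card + C.card) = 2 ^ Fintype.card β := by
  have hcard : (Finset.univ.filter fun W : Finset β => A ⊆ W ∧ Disjoint C W).card
      = ((Finset.univ \ (A ∪ C)).powerset).card := by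
    refine Finset.card_bij' (fun W _ => W \ A) (fun U _ => U ∪ A) ?_ ?_ ?_ ?_
    · intro W hW
      rw [Finset.mem_filter] at hW
      rw [Finset.mem_powerset]
      intro u hu
      rw [Finset.mem_sdiff] at hu ⊢
      refine ⟨Finset.mem_univ _, ?_⟩
      rw [Finset.mem_union]
      rintro (hA | hC)
      · exact hu.2 hA
      · exact (Finset.disjoint_left.mp hW.2.2) hC hu.1
    · intro U hU
      rw [Finset.mem_powerset] at hU
      rw [Finset.mem_filter]
      refine ⟨Finset.mem_univ _, Finset.subset_union_right, ?_⟩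
      rw [Finset.disjoint_right]
      intro a ha
      rw [Finset.mem_union] at ha
      rcases ha with ha | ha
      · have := hU ha
        rw [Finset.mem_sdiff, Finset.mem_union] at this
        exact fun hc => this.2 (Or.inr hc)
      · exact fun hc => (Finset.disjoint_left.mp h) ha hc
    · intro W hW
      rw [Finset.mem_filter] at hW
      exact Finset.sdiff_union_of_subset hW.2.1
    · intro U hU
      rw [Finset.mem_powerset] at hU
      show (U ∪ A) \ A = U
      rw [Finset.union_sdiff_right, Finset.sdiff_eq_self_iff_disjoint]
      rw [Finset.disjoint_right]
      intro a ha hc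
      have := hU hc
      rw [Finset.mem_sdiff, Finset.mem_union] at this
      exact this.2 (Or.inl ha)
  rw [hcard, Finset.card_powerset, Finset.card_sdiff_of_subset (Finset.subset_univ _),
    Finset.card_univ, Finset.card_union_of_disjoint h, ← pow_add,
    Nat.sub_add_cancel]
  rw [← Finset.card_union_of_disjoint h]
  exact (Finset.card_le_univ _).trans_eq Finset.card_univ

lemma greedy_s9 {Ω P0 : Type*} [Fintype Ω] [Nonempty Ω] [DecidableEq Ω] [DecidableEq P0]
    (good : P0 → Ω → Prop) [∀ p ω, Decidable (good p ω)] (c : ℝ) (hc1 : c ≤ 1) :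
    ∀ (m : ℕ) (P : Finset P0),
      (∀ p ∈ P, c * (Fintype.card Ω : ℝ) ≤ ((Finset.univ.filter (good p)).card : ℝ)) →
      ((1 - c) ^ m * (P.card : ℝ) < 1) →
      ∃ F : Finset Ω, F.card ≤ m ∧ ∀ p ∈ P, ∃ ω ∈ F, good p ω := by
  intro m
  induction m with
  | zero =>
    intro P hP hlt
    rw [pow_zero, one_mul] at hlt
    have hP0 : P.card = 0 := Nat.lt_one_iff.mp (by exact_mod_cast hlt)
    refine ⟨∅, le_refl _, ?_⟩
    intro p hp
    rw [Finset.card_eq_zero.mp hP0] at hp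
    exact absurd hp (Finset.notMem_empty p)
  | succ m ih =>
    intro P hP hlt
    have key : ∃ ω : Ω, c * (P.card : ℝ) ≤ ((P.filter (fun p => good p ω)).card : ℝ) := by
      by_contra hcon
      push_neg at hcon
      rcases Finset.eq_empty_or_nonempty P with rfl | hPne
      · obtain ⟨ω⟩ := ‹Nonempty Ω›
        have := hcon ω
        simp at this
      have hdouble : ∑ ω : Ω, ((P.filter (fun p => good p ω)).card)
          = ∑ p ∈ P, ((Finset.univ.filter (good p)).card) := by
        simp_rw [Finset.card_filter]
        rw [Finset.sum_comm]
      have hub : (∑ ω : Ω, ((P.filter (fun p => good p ω)).card : ℝ))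
          < (Fintype.card Ω : ℝ) * (c * P.card) := by
        have := Finset.sum_lt_sum_of_nonempty (Finset.univ_nonempty (α := Ω))
          (f := fun ω => ((P.filter (fun p => good p ω)).card : ℝ))
          (g := fun _ => c * (P.card : ℝ)) (fun ω _ => hcon ω)
        calc (∑ ω : Ω, ((P.filter (fun p => good p ω)).card : ℝ))
            < ∑ _ω : Ω, c * (P.card : ℝ) := this
          _ = (Fintype.card Ω : ℝ) * (c * P.card) := by
              rw [Finset.sum_const, Finset.card_univ, nsmul_eq_mul]
      have hlb : (P.card : ℝ) * (c * (Fintype.card Ω : ℝ))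
          ≤ ∑ p ∈ P, ((Finset.univ.filter (good p)).card : ℝ) := by
        calc (P.card : ℝ) * (c * (Fintype.card Ω : ℝ))
            = ∑ _p ∈ P, c * (Fintype.card Ω : ℝ) := by
              rw [Finset.sum_const, nsmul_eq_mul]
          _ ≤ ∑ p ∈ P, ((Finset.univ.filter (good p)).card : ℝ) :=
              Finset.sum_le_sum hP
      have hcast : (∑ ω : Ω, ((P.filter (fun p => good p ω)).card : ℝ))
          = ∑ p ∈ P, ((Finset.univ.filter (good p)).card : ℝ) := by
        exact_mod_cast congrArg (Nat.cast : ℕ → ℝ) hdouble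
      rw [hcast] at hub
      have := hlb.trans_lt hub
      nlinarith [this]
    obtain ⟨ω, hω⟩ := key
    set P' := P.filter (fun p => ¬ good p ω) with hP'def
    have hsplit : (P.filter (fun p => good p ω)).card + P'.card = P.card :=
      Finset.card_filter_add_card_filter_not _
    have hcardP' : (P'.card : ℝ) ≤ (1 - c) * P.card := by
      have : (P'.card : ℝ) = (P.card : ℝ) - ((P.filter (fun p => good p ω)).card : ℝ) := by
        have := hsplit
        push_cast [← this]
        ring
      rw [this]
      nlinarith [hω]
    have hP'cond : ∀ p ∈ P', c * (Fintype.card Ω : ℝ)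
        ≤ ((Finset.univ.filter (good p)).card : ℝ) :=
      fun p hp => hP p (Finset.mem_of_mem_filter p hp)
    have h1c : (0:ℝ) ≤ 1 - c := by linarith
    have hlt' : (1 - c) ^ m * (P'.card : ℝ) < 1 := by
      calc (1 - c) ^ m * (P'.card : ℝ)
          ≤ (1 - c) ^ m * ((1 - c) * P.card) :=
            mul_le_mul_of_nonneg_left hcardP' (pow_nonneg h1c m)
        _ = (1 - c) ^ (m + 1) * (P.card : ℝ) := by ring
        _ < 1 := hlt
    obtain ⟨F, hFcard, hFcov⟩ := ih P' hP'cond hlt'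
    refine ⟨insert ω F, ?_, ?_⟩
    · exact (Finset.card_insert_le _ _).trans (Nat.succ_le_succ hFcard)
    · intro p hp
      by_cases hg : good p ω
      · exact ⟨ω, Finset.mem_insert_self _ _, hg⟩
      · obtain ⟨ω', hω', hg'⟩ := hFcov p (Finset.mem_filter.mpr ⟨hp, hg⟩)
        exact ⟨ω', Finset.mem_insert_of_mem hω', hg'⟩

section SubOf
variable {V : Type*} [Fintype V] {G : SimpleGraph V}

/-- The subgraph of `G` determined by a vertex set `W` and an allowed edge set `B`. -/
def SubOf (G : SimpleGraph V) (W : Finset V) (B : Finset (Sym2 V)) : G.Subgraph where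
  verts := ↑W
  Adj x y := G.Adj x y ∧ x ∈ W ∧ y ∈ W ∧ s(x, y) ∈ B
  adj_sub h := h.1
  edge_vert h := h.2.1
  symm := by
    refine ⟨fun x y h => ?_⟩
    exact ⟨h.1.symm, h.2.2.1, h.2.1, by rw [Sym2.eq_swap (a := y)]; exact h.2.2.2⟩

lemma le_SubOf {A : G.Subgraph} {W : Finset V} {B : Finset (Sym2 V)} :
    A ≤ SubOf G W B ↔ (∀ v ∈ A.verts, v ∈ W) ∧ (∀ x y, A.Adj x y → s(x, y) ∈ B) := by
  constructor
  · intro h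
    exact ⟨fun v hv => h.1 hv, fun x y hxy => (h.2 hxy).2.2.2⟩
  · intro h
    refine ⟨fun v hv => h.1 v hv, ?_⟩
    intro x y hxy
    exact ⟨A.adj_sub hxy, h.1 _ (A.edge_vert hxy), h.1 _ (A.edge_vert (A.adj_symm hxy)),
      h.2 x y hxy⟩

end SubOf


section GoodCount
variable {α : Type*} [Fintype α] {H : SimpleGraph α}
variable {V : Type*} [Fintype V] [DecidableEq V] {G : SimpleGraph V}


lemma good_count {A B : G.Subgraph} (ψA : A.coe ≃g H) (hBA : ¬ B ≤ A) :
    ((1/2 : ℝ) ^ (Fintype.card α * Fintype.card α + Fintype.card α + 1))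
        * (Fintype.card (Finset V × Finset (Sym2 V)) : ℝ)
      ≤ ((Finset.univ.filter fun ω : Finset V × Finset (Sym2 V) =>
          A ≤ SubOf G ω.1 ω.2 ∧ ¬ B ≤ SubOf G ω.1 ω.2).card : ℝ) := by
  classical
  set k := Fintype.card α with hkdef
  set K := k * k + k + 1 with hKdef
  set n := Fintype.card V with hndef
  set M := Fintype.card (Sym2 V) with hMdef
  set vertsF : Finset V := (Set.toFinite A.verts).toFinset with hvF
  set edgeF : Finset (Sym2 V) := (Set.toFinite A.edgeSet).toFinset with heF
  have hmemv : ∀ v, v ∈ vertsF ↔ v ∈ A.verts := fun v => Set.Finite.mem_toFinset _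
  have hmeme : ∀ e, e ∈ edgeF ↔ e ∈ A.edgeSet := fun e => Set.Finite.mem_toFinset _
  have hk : vertsF.card = k := by
    rw [hvF, ← Set.ncard_eq_toFinset_card, ← Nat.card_coe_set_eq]
    rw [Nat.card_congr ψA.toEquiv, Nat.card_eq_fintype_card]
  have hq : edgeF.card ≤ k * k := by
    have h1 : edgeF.card = Nat.card ↥A.edgeSet := by
      rw [heF, ← Set.ncard_eq_toFinset_card, Nat.card_coe_set_eq]
    have hsurj : Function.Surjective
        (fun p : {p : V × V // A.Adj p.1 p.2} =>
          (⟨s(p.1.1, p.1.2), Subgraph.mem_edgeSet.mpr p.2⟩ : ↥A.edgeSet)) := by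
      rintro ⟨e, he⟩
      revert he
      refine Sym2.ind (fun u v he => ?_) e
      exact ⟨⟨(u, v), Subgraph.mem_edgeSet.mp he⟩, rfl⟩
    have hinj : Function.Injective
        (fun p : {p : V × V // A.Adj p.1 p.2} =>
          ((⟨p.1.1, A.edge_vert p.2⟩ : ↥A.verts), (⟨p.1.2, A.edge_vert (A.adj_symm p.2)⟩ : ↥A.verts))) := by
      rintro ⟨⟨a, b⟩, hab⟩ ⟨⟨a', b'⟩, hab'⟩ hpq
      simp only [Prod.mk.injEq, Subtype.mk.injEq] at hpq
      exact Subtype.ext (Prod.ext hpq.1 hpq.2)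
    calc edgeF.card = Nat.card ↥A.edgeSet := h1
      _ ≤ Nat.card {p : V × V // A.Adj p.1 p.2} := Nat.card_le_card_of_surjective _ hsurj
      _ ≤ Nat.card (↥A.verts × ↥A.verts) := Nat.card_le_card_of_injective _ hinj
      _ = k * k := by
          rw [Nat.card_prod, Nat.card_coe_set_eq]
          have hv' : A.verts.ncard = k := by
            rw [← hk, hvF]
            exact Set.ncard_eq_toFinset_card _ _
          rw [hv']
  set q := edgeF.card with hqdef
  have hcardΩ : (Fintype.card (Finset V × Finset (Sym2 V)) : ℝ) = 2^n * 2^M := by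
    rw [Fintype.card_prod, Fintype.card_finset, Fintype.card_finset]
    push_cast
    rfl
  have hwit : (∃ x, x ∈ B.verts ∧ x ∉ A.verts) ∨ (∃ x y, B.Adj x y ∧ ¬ A.Adj x y) := by
    by_contra hc
    push_neg at hc
    exact hBA ⟨fun v hv => hc.1 v hv, fun x y hxy => hc.2 x y hxy⟩
  -- the two witness cases give two different product families; handle uniformly
  have main : ∀ (S1 : Finset (Finset V)) (S2 : Finset (Finset (Sym2 V)))
      (e1 e2 : ℕ), ((S1.card : ℝ) * 2^e1 = 2^n) → ((S2.card : ℝ) * 2^e2 = 2^M) →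
      e1 + e2 ≤ K →
      (∀ ω ∈ S1 ×ˢ S2, A ≤ SubOf G ω.1 ω.2 ∧ ¬ B ≤ SubOf G ω.1 ω.2) →
      ((1/2 : ℝ) ^ K) * (Fintype.card (Finset V × Finset (Sym2 V)) : ℝ)
        ≤ ((Finset.univ.filter fun ω : Finset V × Finset (Sym2 V) =>
            A ≤ SubOf G ω.1 ω.2 ∧ ¬ B ≤ SubOf G ω.1 ω.2).card : ℝ) := by
    intro S1 S2 e1 e2 he1 he2 hle hgood
    have hsub : S1 ×ˢ S2 ⊆ (Finset.univ.filter fun ω : Finset V × Finset (Sym2 V) =>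
        A ≤ SubOf G ω.1 ω.2 ∧ ¬ B ≤ SubOf G ω.1 ω.2) := by
      intro ω hω
      rw [Finset.mem_filter]
      exact ⟨Finset.mem_univ _, hgood ω hω⟩
    have hcard : ((S1 ×ˢ S2).card : ℝ) = (S1.card : ℝ) * S2.card := by
      rw [Finset.card_product]; push_cast; ring
    have hpow : ((2:ℝ))^(e1+e2) ≤ 2^K := by
      apply pow_le_pow_right₀ (by norm_num) hle
    have hS1 : (0:ℝ) ≤ (S1.card : ℝ) := by positivity
    have hS2 : (0:ℝ) ≤ (S2.card : ℝ) := by positivity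
    calc ((1/2 : ℝ) ^ K) * (Fintype.card (Finset V × Finset (Sym2 V)) : ℝ)
        = (2^n * 2^M) / 2^K := by
          rw [hcardΩ, div_pow, one_pow, div_mul_eq_mul_div, one_mul]
      _ = ((S1.card : ℝ) * S2.card) * (2^(e1+e2) / 2^K) := by
          rw [← he1, ← he2, pow_add]
          ring
      _ ≤ ((S1.card : ℝ) * S2.card) * 1 := by
          apply mul_le_mul_of_nonneg_left _ (by positivity)
          rw [div_le_one (by positivity)]
          exact hpow
      _ = ((S1 ×ˢ S2).card : ℝ) := by rw [hcard, mul_one]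
      _ ≤ _ := by exact_mod_cast Nat.cast_le.mpr (Finset.card_le_card hsub)
  rcases hwit with ⟨x, hxB, hxA⟩ | ⟨x, y, hxyB, hxyA⟩
  · -- vertex witness
    set S1 := Finset.univ.filter fun W : Finset V => vertsF ⊆ W ∧ Disjoint {x} W with hS1
    set S2 := Finset.univ.filter fun Bs : Finset (Sym2 V) =>
      edgeF ⊆ Bs ∧ Disjoint (∅ : Finset (Sym2 V)) Bs with hS2
    have hd1 : Disjoint vertsF ({x} : Finset V) := by
      rw [Finset.disjoint_singleton_right]
      rw [hmemv]
      exact hxA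
    have he1 : (S1.card : ℝ) * 2^(k+1) = 2^n := by
      have := count_subsets vertsF {x} hd1
      rw [hk, Finset.card_singleton] at this
      exact_mod_cast this
    have he2 : (S2.card : ℝ) * 2^q = 2^M := by
      have := count_subsets edgeF (∅ : Finset (Sym2 V)) (Finset.disjoint_empty_right _)
      rw [Finset.card_empty, Nat.add_zero] at this
      exact_mod_cast this
    refine main S1 S2 (k+1) q he1 he2 (by omega) ?_
    rintro ⟨W, Bs⟩ hω
    rw [Finset.mem_product] at hω
    obtain ⟨hW, hBs⟩ := hω
    rw [hS1, Finset.mem_filter] at hW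
    rw [hS2, Finset.mem_filter] at hBs
    constructor
    · rw [le_SubOf]
      constructor
      · intro v hv
        exact hW.2.1 ((hmemv v).mpr hv)
      · intro a b hab
        exact hBs.2.1 ((hmeme _).mpr (Subgraph.mem_edgeSet.mpr hab))
    · intro hB
      have : x ∈ (W : Set V) := hB.1 hxB
      exact (Finset.disjoint_singleton_left.mp hW.2.2) this
  · -- edge witness
    set S1 := Finset.univ.filter fun W : Finset V => vertsF ⊆ W ∧ Disjoint (∅ : Finset V) W with hS1
    set S2 := Finset.univ.filter fun Bs : Finset (Sym2 V) =>
      edgeF ⊆ Bs ∧ Disjoint {s(x, y)} Bs with hS2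
    have hd2 : Disjoint edgeF ({s(x, y)} : Finset (Sym2 V)) := by
      rw [Finset.disjoint_singleton_right, hmeme]
      intro hc
      exact hxyA (Subgraph.mem_edgeSet.mp hc)
    have he1 : (S1.card : ℝ) * 2^k = 2^n := by
      have := count_subsets vertsF (∅ : Finset V) (Finset.disjoint_empty_right _)
      rw [hk, Finset.card_empty, Nat.add_zero] at this
      exact_mod_cast this
    have he2 : (S2.card : ℝ) * 2^(q+1) = 2^M := by
      have := count_subsets edgeF {s(x, y)} hd2
      rw [Finset.card_singleton] at this
      exact_mod_cast this
    refine main S1 S2 k (q+1) he1 he2 (by omega) ?_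
    rintro ⟨W, Bs⟩ hω
    rw [Finset.mem_product] at hω
    obtain ⟨hW, hBs⟩ := hω
    rw [hS1, Finset.mem_filter] at hW
    rw [hS2, Finset.mem_filter] at hBs
    constructor
    · rw [le_SubOf]
      constructor
      · intro v hv
        exact hW.2.1 ((hmemv v).mpr hv)
      · intro a b hab
        exact hBs.2.1 ((hmeme _).mpr (Subgraph.mem_edgeSet.mpr hab))
    · intro hB
      have : s(x, y) ∈ Bs := (le_SubOf.mp hB).2 x y hxyB
      exact (Finset.disjoint_singleton_left.mp hBs.2.2) this

end GoodCount

section Last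
variable {α : Type*} [Fintype α] {H : SimpleGraph α}
variable {V : Type*} [Fintype V] {G : SimpleGraph V}

lemma coe_connected_of_spanning {S : G.Subgraph} (h : S.spanningCoe.Connected)
    (hcard : 2 ≤ Fintype.card V) : S.coe.Connected := by
  have huniv : ∀ u : V, u ∈ S.verts := by
    intro u
    obtain ⟨w, hw⟩ := Fintype.exists_ne_of_one_lt_card (by omega) u
    obtain ⟨z, hz⟩ := exists_adj_of_reachable_ne (h.preconnected u w) hw.symm
    rw [Subgraph.spanningCoe_adj] at hz
    exact S.edge_vert hz
  let Ψ : S.spanningCoe →g S.coe :=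
    { toFun := fun w => ⟨w, huniv w⟩
      map_rel' := by
        intro a b hab
        rw [Subgraph.spanningCoe_adj] at hab
        rw [Subgraph.coe_adj]
        exact hab }
  rw [connected_iff]
  constructor
  · intro u v
    have h2 := (h.preconnected u.val v.val).map Ψ
    have hu : Ψ u.val = u := Subtype.ext rfl
    have hv : Ψ v.val = v := Subtype.ext rfl
    rwa [hu, hv] at h2
  · exact ⟨⟨_, huniv h.nonempty.some⟩⟩
  
lemma copies_card_le [Fintype G.Subgraph] (hV : Nonempty V) :
    (Finset.univ.filter fun A : G.Subgraph => Nonempty (A.coe ≃g H)).card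
      ≤ Fintype.card (α → V) := by
  have hfun : Nonempty (α → V) := ⟨fun _ => hV.some⟩
  set f : G.Subgraph → (α → V) := fun A =>
    if h : Nonempty (A.coe ≃g H) then (fun a => (h.some.symm a).val)
    else Classical.arbitrary _ with hfdef
  refine Finset.card_le_card_of_injOn f (fun _ _ => Finset.mem_univ _) ?_
  intro A hA B hB hfAB
  rw [Finset.mem_coe, Finset.mem_filter] at hA hB
  have hA' := hA.2
  have hB' := hB.2
  rw [hfdef] at hfAB
  simp only [dif_pos hA', dif_pos hB'] at hfAB
  exact copy_eq_of_map_eq hA'.some hB'.some hfAB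

/-- For every 2-connected graph `H` there is a constant `C_H > 0` such that every
connected graph `G` on `n ≥ 2` vertices admits a family of at most `C_H·log n` connected
subgraphs that strongly separates the copies of `H` in `G`. -/
theorem copy_separation_by_connected_subgraphs_of_twoConnected
    (α : Type) [Fintype α] (H : SimpleGraph α) (hH : TwoConnected H) :
    ∃ C : ℝ, 0 < C ∧
      ∀ (V : Type) [Fintype V] (G : SimpleGraph V), G.Connected → 2 ≤ Fintype.card V →
        ∃ F : Set G.Subgraph,
          F.Finite ∧
          (∀ A ∈ F, A.coe.Connected) ∧
          (F.ncard : ℝ) ≤ C * Real.log (Fintype.card V) ∧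
          StronglySeparatesCopies H G F := by
  classical
  set k := Fintype.card α with hkdef
  set K := k * k + k + 1 with hKdef
  set c : ℝ := (1/2) ^ K with hcdef
  have hc0 : 0 < c := by positivity
  have hchalf : c ≤ 1/2 := by
    rw [hcdef]
    calc ((1:ℝ)/2) ^ K ≤ (1/2) ^ 1 := by
          apply pow_le_pow_of_le_one (by norm_num) (by norm_num) (by omega)
      _ = 1/2 := pow_one _
  have hc1 : c < 1 := lt_of_le_of_lt hchalf (by norm_num)
  set L : ℝ := -Real.log (1 - c) with hLdef
  have hLpos : 0 < L := by
    rw [hLdef, neg_pos]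
    exact Real.log_neg (by linarith) (by linarith)
  set C : ℝ := 2 * k / L + 1 / Real.log 2 with hCdef
  have hlog2 : 0 < Real.log 2 := Real.log_pos (by norm_num)
  refine ⟨C, ?_, ?_⟩
  · rw [hCdef]
    have h1 : (0:ℝ) ≤ 2 * k / L := by positivity
    have h2 : (0:ℝ) < 1 / Real.log 2 := by positivity
    linarith
  intro V _ G hG hn
  classical
  letI : Finite G.Subgraph := subgraphFinite
  letI : Fintype G.Subgraph := Fintype.ofFinite _
  have hV : Nonempty V := Fintype.card_pos_iff.mp (by omega)
  have hn1 : (1:ℝ) ≤ (Fintype.card V : ℝ) := by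
    have : (1:ℕ) ≤ Fintype.card V := by omega
    exact_mod_cast this
  have hn2 : (2:ℝ) ≤ (Fintype.card V : ℝ) := by exact_mod_cast hn
  have hlogn : Real.log 2 ≤ Real.log (Fintype.card V) :=
    Real.log_le_log (by norm_num) hn2
  have hlogn0 : 0 ≤ Real.log (Fintype.card V) := Real.log_nonneg hn1
  -- copies and pairs
  set copiesF := Finset.univ.filter (fun A : G.Subgraph => Nonempty (A.coe ≃g H))
    with hcopies
  set P := (copiesF ×ˢ copiesF).filter (fun pq => pq.1 ≠ pq.2) with hP
  have hPcard : (P.card : ℝ) ≤ (Fintype.card V : ℝ) ^ (2 * k) := by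
    have h1 : P.card ≤ copiesF.card * copiesF.card := by
      calc P.card ≤ (copiesF ×ˢ copiesF).card := Finset.card_filter_le _ _
        _ = copiesF.card * copiesF.card := Finset.card_product _ _
    have h2 : copiesF.card ≤ Fintype.card V ^ k := by
      calc copiesF.card ≤ Fintype.card (α → V) := copies_card_le hV
        _ = Fintype.card V ^ k := Fintype.card_fun
    calc (P.card : ℝ) ≤ ((Fintype.card V ^ k * (Fintype.card V ^ k) : ℕ) : ℝ) := by
          exact_mod_cast h1.trans (Nat.mul_le_mul h2 h2)
      _ = (Fintype.card V : ℝ) ^ (2 * k) := by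
          push_cast
          rw [two_mul, pow_add]
  -- choice of m
  set t := 2 * (k:ℝ) * Real.log (Fintype.card V) / L with htdef
  have ht0 : 0 ≤ t := by positivity
  set m := ⌊t⌋₊ + 1 with hmdef
  have hmt : t < (m : ℝ) := by
    rw [hmdef]
    push_cast
    exact Nat.lt_floor_add_one t
  have hm_le : (m : ℝ) ≤ C * Real.log (Fintype.card V) := by
    have h1 : (m:ℝ) ≤ t + 1 := by
      rw [hmdef]
      push_cast
      have := Nat.floor_le ht0
      linarith
    have h2 : (1:ℝ) ≤ Real.log (Fintype.card V) / Real.log 2 := by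
      rw [le_div_iff₀ hlog2]
      linarith
    rw [hCdef]
    calc (m:ℝ) ≤ t + 1 := h1
      _ ≤ t + Real.log (Fintype.card V) / Real.log 2 := by linarith
      _ = (2 * k / L) * Real.log (Fintype.card V)
          + (1 / Real.log 2) * Real.log (Fintype.card V) := by
          rw [htdef]
          ring
      _ = (2 * k / L + 1 / Real.log 2) * Real.log (Fintype.card V) := by ring
  -- the greedy covering
  set good : (G.Subgraph × G.Subgraph) → (Finset V × Finset (Sym2 V)) → Prop :=
    fun pq ω => pq.1 ≤ SubOf G ω.1 ω.2 ∧ ¬ pq.2 ≤ SubOf G ω.1 ω.2 with hgooddef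
  have hgood : ∀ p ∈ P, c * (Fintype.card (Finset V × Finset (Sym2 V)) : ℝ)
      ≤ ((Finset.univ.filter (good p)).card : ℝ) := by
    rintro ⟨A, B⟩ hp
    rw [hP, Finset.mem_filter, Finset.mem_product] at hp
    obtain ⟨⟨hA, hB⟩, hne⟩ := hp
    rw [hcopies, Finset.mem_filter] at hA hB
    have hAiso := hA.2
    have hBiso := hB.2
    have hBA : ¬ B ≤ A := by
      intro hle
      exact hne ((copy_le_antisymm hBiso hAiso hle).symm)
    exact good_count hAiso.some hBA
  have hgr : (1 - c) ^ m * (P.card : ℝ) < 1 := by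
    have hbase : (0:ℝ) < 1 - c := by linarith
    have hcV : (0:ℝ) < (Fintype.card V : ℝ) := by linarith
    have hx : (0:ℝ) < (1 - c) ^ m * (Fintype.card V : ℝ) ^ (2 * k) := by positivity
    have hlogx : Real.log ((1 - c) ^ m * (Fintype.card V : ℝ) ^ (2 * k)) < 0 := by
      rw [Real.log_mul (by positivity) (by positivity), Real.log_pow, Real.log_pow]
      have hml : 2 * (k:ℝ) * Real.log (Fintype.card V) < (m:ℝ) * L := by
        have h' := mul_lt_mul_of_pos_right hmt hLpos
        rw [htdef, div_mul_cancel₀ _ (ne_of_gt hLpos)] at h'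
        exact h'
      have hLc : Real.log (1 - c) = -L := by rw [hLdef]; ring
      rw [hLc]
      push_cast at hml ⊢
      linarith
    have hlt1 : (1 - c) ^ m * (Fintype.card V : ℝ) ^ (2 * k) < 1 := by
      have := Real.exp_lt_exp.mpr hlogx
      rwa [Real.exp_log hx, Real.exp_zero] at this
    calc (1 - c) ^ m * (P.card : ℝ)
        ≤ (1 - c) ^ m * (Fintype.card V : ℝ) ^ (2 * k) :=
          mul_le_mul_of_nonneg_left hPcard (by positivity)
      _ < 1 := hlt1
  obtain ⟨F0, hF0card, hF0cov⟩ := greedy_s9 good c (le_of_lt hc1) m P hgood hgr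
  -- connectify each element
  set connFun : (Finset V × Finset (Sym2 V)) → G.Subgraph := fun ω =>
    (connectify hG _ (SubOf G ω.1 ω.2) le_rfl).choose with hconnFun
  have hconnSpec : ∀ ω, SubOf G ω.1 ω.2 ≤ connFun ω ∧ (connFun ω).spanningCoe.Connected ∧
      ∀ A : G.Subgraph, Nice A → A ≤ connFun ω → A ≤ SubOf G ω.1 ω.2 := fun ω =>
    (connectify hG _ (SubOf G ω.1 ω.2) le_rfl).choose_spec
  refine ⟨↑(F0.image connFun), (F0.image connFun).finite_toSet, ?_, ?_, ?_⟩
  · intro A hA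
    rw [Finset.mem_coe, Finset.mem_image] at hA
    obtain ⟨ω, _, rfl⟩ := hA
    exact coe_connected_of_spanning (hconnSpec ω).2.1 hn
  · rw [Set.ncard_coe_finset]
    calc ((F0.image connFun).card : ℝ) ≤ (F0.card : ℝ) := by
          exact_mod_cast Finset.card_image_le
      _ ≤ (m : ℝ) := by exact_mod_cast hF0card
      _ ≤ C * Real.log (Fintype.card V) := hm_le
  · intro H₁ H₂ h1 h2 hne
    have hmem : ∀ (X Y : G.Subgraph), Nonempty (X.coe ≃g H) → Nonempty (Y.coe ≃g H) →
        X ≠ Y → (X, Y) ∈ P := by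
      intro X Y hX hY hXY
      rw [hP, Finset.mem_filter, Finset.mem_product, hcopies]
      exact ⟨⟨Finset.mem_filter.mpr ⟨Finset.mem_univ _, hX⟩,
        Finset.mem_filter.mpr ⟨Finset.mem_univ _, hY⟩⟩, hXY⟩
    obtain ⟨ω₁, hω₁, hg₁⟩ := hF0cov (H₁, H₂) (hmem _ _ h1 h2 hne)
    obtain ⟨ω₂, hω₂, hg₂⟩ := hF0cov (H₂, H₁) (hmem _ _ h2 h1 (Ne.symm hne))
    refine ⟨connFun ω₁, ?_, connFun ω₂, ?_, ?_, ?_, ?_, ?_⟩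
    · exact Finset.mem_coe.mpr (Finset.mem_image_of_mem _ hω₁)
    · exact Finset.mem_coe.mpr (Finset.mem_image_of_mem _ hω₂)
    · exact le_trans hg₁.1 (hconnSpec ω₁).1
    · intro hc
      exact hg₁.2 ((hconnSpec ω₁).2.2 H₂ (nice_of_copy hH h2) hc)
    · exact le_trans hg₂.1 (hconnSpec ω₂).1
    · intro hc
      exact hg₂.2 ((hconnSpec ω₂).2.2 H₁ (nice_of_copy hH h1) hc)

end Last
end
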